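/- arXiv:0909.4570 — 11 statements merged into one kernel-verified Lean document; each statement's English description precedes it below -/
import Mathlib

section
/- Let X and Y be continuous random variables supported on (0,∞) with densities f and g, and suppose l(x) = log(f(x)/g(x)) is continuous and concave on (0,∞). Then X ≤_st Y (i.e., 1−F(x) ≤ 1−G(x) for all x) if and only if lim_{x↓0} l(x) ≥ 0. -/
open MeasureTheory Set Filter

lemma chord_aux {l : ℝ → ℝ} (hc : ConcaveOn ℝ (Ioi 0) l) {u v x : ℝ}
    (hu : 0 < u) (hux : u ≤ x) (hxv : x ≤ v) (huv : u < v) :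
    ((v - x) / (v - u)) * l u + ((x - u) / (v - u)) * l v ≤ l x := by
  have hvu : (0:ℝ) < v - u := by linarith
  have ha : (0:ℝ) ≤ (v - x) / (v - u) := div_nonneg (by linarith) hvu.le
  have hb : (0:ℝ) ≤ (x - u) / (v - u) := div_nonneg (by linarith) hvu.le
  have hab : (v - x) / (v - u) + (x - u) / (v - u) = 1 := by
    field_simp
    ring
  have key := hc.2 (mem_Ioi.2 hu) (mem_Ioi.2 (lt_trans hu huv)) ha hb hab
  have hcomb : ((v - x) / (v - u)) • u + ((x - u) / (v - u)) • v = x := by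
    simp only [smul_eq_mul]
    field_simp
    ring
  rw [hcomb] at key
  simpa [smul_eq_mul] using key

/-- Theorem 1(1), "st" part: for continuous random variables supported on `(0, ∞)`
with densities `f` and `g` such that `l(x) = log (f x / g x)` is continuous and concave
on `(0, ∞)`, the stochastic order `X ≤_st Y` holds iff `lim_{x ↓ 0} l(x) ≥ 0`. -/
theorem stmt_0 (f g : ℝ → ℝ)
    (hf_meas : Measurable f) (hg_meas : Measurable g)
    (hf_pos : ∀ x, 0 < x → 0 < f x) (hf_supp : ∀ x, x ≤ 0 → f x = 0)
    (hg_pos : ∀ x, 0 < x → 0 < g x) (hg_supp : ∀ x, x ≤ 0 → g x = 0)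
    (hf_int : ∫ x, f x = 1) (hg_int : ∫ x, g x = 1)
    (hl_cont : ContinuousOn (fun x => Real.log (f x / g x)) (Ioi 0))
    (hl_conc : ConcaveOn ℝ (Ioi 0) (fun x => Real.log (f x / g x))) :
    (∀ x : ℝ, ∫ y in Ioi x, f y ≤ ∫ y in Ioi x, g y) ↔
      0 ≤ liminf (fun x => (Real.log (f x / g x) : EReal)) (nhdsWithin 0 (Ioi 0)) := by
  set l : ℝ → ℝ := fun x => Real.log (f x / g x) with hl_def
  have hf_i : Integrable f := by
    by_contra h; rw [MeasureTheory.integral_undef h] at hf_int; norm_num at hf_int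
  have hg_i : Integrable g := by
    by_contra h; rw [MeasureTheory.integral_undef h] at hg_int; norm_num at hg_int
  have hlt : ∀ y : ℝ, 0 < y → l y < 0 → f y < g y := by
    intro y hy hly
    have hgy := hg_pos y hy
    have h1 : f y / g y < 1 :=
      (Real.log_neg_iff (div_pos (hf_pos y hy) hgy)).1 hly
    calc f y = (f y / g y) * g y := by field_simp
    _ < 1 * g y := by nlinarith
    _ = g y := one_mul _
  have hge : ∀ y : ℝ, 0 < y → 0 ≤ l y → g y ≤ f y := by
    intro y hy hly
    have hgy := hg_pos y hy
    have h1 : 1 ≤ f y / g y :=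
      (Real.log_nonneg_iff (div_pos (hf_pos y hy) hgy)).1 hly
    calc g y = 1 * g y := (one_mul _).symm
    _ ≤ (f y / g y) * g y := by nlinarith
    _ = f y := by field_simp
  have tailf : ∀ x : ℝ, (∫ y in Iic x, f y) + (∫ y in Ioi x, f y) = 1 := by
    intro x
    rw [intervalIntegral.integral_Iic_add_Ioi hf_i.integrableOn hf_i.integrableOn]
    exact hf_int
  have tailg : ∀ x : ℝ, (∫ y in Iic x, g y) + (∫ y in Ioi x, g y) = 1 := by
    intro x
    rw [intervalIntegral.integral_Iic_add_Ioi hg_i.integrableOn hg_i.integrableOn]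
    exact hg_int
  constructor
  · intro hst
    by_contra hneg
    rw [not_le] at hneg
    obtain ⟨z, hz1, hz2⟩ := exists_between hneg
    have hzbot : z ≠ ⊥ := fun h => absurd (h ▸ hz1) (by simp)
    have hztop : z ≠ ⊤ := fun h => absurd (h ▸ hz2) (by simp)
    set c : ℝ := z.toReal with hc_def
    have hzc : z = (c : EReal) := (EReal.coe_toReal hztop hzbot).symm
    have hc0 : c < 0 := by
      rw [hzc] at hz2
      exact_mod_cast hz2
    rw [hzc] at hz1
    have hfreq : ∃ᶠ x in nhdsWithin (0:ℝ) (Ioi 0), l x < c := by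
      have := Filter.frequently_lt_of_liminf_lt (h := hz1)
      exact this.mono fun x hx => by exact_mod_cast hx
    by_cases hev : ∀ᶠ x in nhdsWithin (0:ℝ) (Ioi 0), l x < c
    · obtain ⟨δ, hδ, hsub⟩ := mem_nhdsGT_iff_exists_Ioo_subset.mp hev
      have hδ0 : (0:ℝ) < δ := hδ
      set b : ℝ := δ / 2 with hb_def
      have hb : 0 < b := by positivity
      have hbδ : b < δ := by rw [hb_def]; linarith
      have hnn : 0 ≤ᵐ[volume.restrict (Iic b)] (fun y => g y - f y) := by
        refine (ae_restrict_iff' measurableSet_Iic).2 (Filter.Eventually.of_forall ?_)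
        intro y hy
        rcases le_or_gt y 0 with h0 | h0
        · simp [hf_supp y h0, hg_supp y h0]
        · have hlc : l y < c := hsub ⟨h0, lt_of_le_of_lt hy hbδ⟩
          have := hlt y h0 (lt_trans hlc hc0)
          simp only [Pi.zero_apply]
          linarith
      have hpos : 0 < ∫ y in Iic b, (g y - f y) := by
        rw [setIntegral_pos_iff_support_of_nonneg_ae hnn ((hg_i.sub hf_i).integrableOn)]
        have hsubset : Ioo 0 b ⊆ Function.support (fun y => g y - f y) ∩ Iic b := by
          intro y hy
          refine ⟨?_, hy.2.le⟩
          have hlc : l y < c := hsub ⟨hy.1, lt_trans hy.2 hbδ⟩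
          have := hlt y hy.1 (lt_trans hlc hc0)
          simp only [Function.mem_support]
          intro h
          linarith [sub_eq_zero.mp h]
        calc (0:ENNReal) < volume (Ioo 0 b) := by
              rw [Real.volume_Ioo]
              simp [ENNReal.ofReal_pos, hb]
          _ ≤ _ := measure_mono hsubset
      rw [MeasureTheory.integral_sub hg_i.integrableOn hf_i.integrableOn] at hpos
      have := hst b
      linarith [tailf b, tailg b]
    · have hfreq2 : ∃ᶠ x in nhdsWithin (0:ℝ) (Ioi 0), c ≤ l x :=
        (Filter.not_eventually.1 hev).mono fun x hx => not_lt.1 hx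
      obtain ⟨t, hct, ht⟩ :=
        (hfreq2.and_eventually (Ioo_mem_nhdsGT_of_mem ⟨le_refl (0:ℝ), one_pos⟩)).exists
      obtain ⟨x2, hx2c, hx2⟩ :=
        (hfreq.and_eventually (Ioo_mem_nhdsGT_of_mem ⟨le_refl (0:ℝ), ht.1⟩)).exists
      obtain ⟨t1, ht1c, ht1⟩ :=
        (hfreq2.and_eventually (Ioo_mem_nhdsGT_of_mem ⟨le_refl (0:ℝ), hx2.1⟩)).exists
      have key := chord_aux hl_conc ht1.1 ht1.2.le hx2.2.le (lt_trans ht1.2 hx2.2)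
      have htt1 : (0:ℝ) < t - t1 := by linarith [ht1.2, hx2.2]
      set a1 : ℝ := (t - x2) / (t - t1) with ha1_def
      set b1 : ℝ := (x2 - t1) / (t - t1) with hb1_def
      have ha1 : 0 ≤ a1 := div_nonneg (by linarith [hx2.2]) htt1.le
      have hb1 : 0 ≤ b1 := div_nonneg (by linarith [ht1.2]) htt1.le
      have hab1 : a1 + b1 = 1 := by
        rw [ha1_def, hb1_def]
        field_simp
        ring
      have h1 : a1 * c ≤ a1 * l t1 := mul_le_mul_of_nonneg_left ht1c ha1
      have h2 : b1 * c ≤ b1 * l t := mul_le_mul_of_nonneg_left hct hb1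
      have hcc : a1 * c + b1 * c = c := by rw [← add_mul, hab1, one_mul]
      have : c ≤ l x2 := by
        calc c = a1 * c + b1 * c := hcc.symm
          _ ≤ a1 * l t1 + b1 * l t := add_le_add h1 h2
          _ ≤ l x2 := key
      linarith [hx2c]
  · intro hlim x
    have lemA : ∀ s y : ℝ, 0 < y → y < s → 0 ≤ l s → 0 ≤ l y := by
      intro s y hy hys hls
      refine le_of_forall_pos_le_add ?_
      intro ε hε
      have h1 : ((-ε : ℝ) : EReal) <
          liminf (fun x => (Real.log (f x / g x) : EReal)) (nhdsWithin 0 (Ioi 0)) := by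
        refine lt_of_lt_of_le ?_ hlim
        exact_mod_cast (by linarith : (-ε:ℝ) < 0)
      have hev2 := Filter.eventually_lt_of_lt_liminf h1
      obtain ⟨w, hw1, hw2⟩ :=
        (hev2.and (Ioo_mem_nhdsGT_of_mem ⟨le_refl (0:ℝ), hy⟩)).exists
      have hwl : -ε < l w := by exact_mod_cast hw1
      have key := chord_aux hl_conc hw2.1 hw2.2.le hys.le (lt_trans hw2.2 hys)
      have hsw : (0:ℝ) < s - w := by linarith [hw2.2]
      set a1 : ℝ := (s - y) / (s - w) with ha1_def
      set b1 : ℝ := (y - w) / (s - w) with hb1_def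
      have ha1 : 0 ≤ a1 := div_nonneg (by linarith) hsw.le
      have hb1 : 0 ≤ b1 := div_nonneg (by linarith [hw2.2]) hsw.le
      have ha1le : a1 ≤ 1 := by
        rw [ha1_def, div_le_one hsw]
        linarith [hw2.2]
      have h2 : a1 * (-ε) ≤ a1 * l w := mul_le_mul_of_nonneg_left hwl.le ha1
      have h3 : 0 ≤ b1 * l s := mul_nonneg hb1 hls
      nlinarith [key]
    by_cases hcase : ∃ s, x ≤ s ∧ 0 < s ∧ 0 ≤ l s
    · obtain ⟨s, hxs, hs, hls⟩ := hcase
      have hmono : ∀ y ∈ Iic x, g y ≤ f y := by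
        intro y hy
        rcases le_or_gt y 0 with h0 | h0
        · rw [hf_supp y h0, hg_supp y h0]
        · have hys : y ≤ s := le_trans hy hxs
          have hly : 0 ≤ l y := by
            rcases hys.lt_or_eq with h | h
            · exact lemA s y h0 h hls
            · exact h ▸ hls
          exact hge y h0 hly
      have hIic : ∫ y in Iic x, g y ≤ ∫ y in Iic x, f y :=
        setIntegral_mono_on hg_i.integrableOn hf_i.integrableOn measurableSet_Iic hmono
      linarith [tailf x, tailg x]
    · push_neg at hcase
      refine setIntegral_mono_on hf_i.integrableOn hg_i.integrableOn measurableSet_Ioi ?_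
      intro y hy
      rcases le_or_gt y 0 with h0 | h0
      · rw [hf_supp y h0, hg_supp y h0]
      · exact (hlt y h0 (hcase y (le_of_lt hy) h0)).le
end

section
/- Let X and Y be continuous random variables supported on (0,∞) with densities f and g, and suppose l(x) = log(f(x)/g(x)) is continuous and concave. If X ≤_st Y then X ≤_hr Y, i.e., f(x)/(1−F(x)) ≥ g(x)/(1−G(x)) for all x > 0. -/
open MeasureTheory Set Filter

/-- Theorem 1(1), "hr" part: for continuous random variables supported on `(0, ∞)`
with densities `f` and `g` such that `l(x) = log (f x / g x)` is continuous and concave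
on `(0, ∞)`, the stochastic order `X ≤_st Y` implies the hazard rate order `X ≤_hr Y`. -/
theorem stmt_1 (f g : ℝ → ℝ)
    (hf_meas : Measurable f) (hg_meas : Measurable g)
    (hf_pos : ∀ x, 0 < x → 0 < f x) (hf_supp : ∀ x, x ≤ 0 → f x = 0)
    (hg_pos : ∀ x, 0 < x → 0 < g x) (hg_supp : ∀ x, x ≤ 0 → g x = 0)
    (hf_int : ∫ x, f x = 1) (hg_int : ∫ x, g x = 1)
    (hl_cont : ContinuousOn (fun x => Real.log (f x / g x)) (Ioi 0))
    (hl_conc : ConcaveOn ℝ (Ioi 0) (fun x => Real.log (f x / g x)))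
    (hst : ∀ x : ℝ, ∫ y in Ioi x, f y ≤ ∫ y in Ioi x, g y) :
    ∀ x : ℝ, 0 < x →
      g x / (∫ y in Ioi x, g y) ≤ f x / (∫ y in Ioi x, f y) := by
  intro x hx
  have hfx := hf_pos x hx
  have hgx := hg_pos x hx
  have hfi : Integrable f := by
    by_contra h
    rw [integral_undef h] at hf_int; norm_num at hf_int
  have hgi : Integrable g := by
    by_contra h
    rw [integral_undef h] at hg_int; norm_num at hg_int
  -- positivity of tail integrals
  have tail_pos : ∀ h : ℝ → ℝ, Integrable h → (∀ z, 0 < z → 0 < h z) →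
      0 < ∫ y in Ioi x, h y := by
    intro h hi hp
    rw [setIntegral_pos_iff_support_of_nonneg_ae _ hi.integrableOn]
    · have hsub : Ioi x ⊆ Function.support h ∩ Ioi x := by
        intro z hz
        exact ⟨Function.mem_support.2 (ne_of_gt (hp z (hx.trans hz))), hz⟩
      refine lt_of_lt_of_le ?_ (measure_mono hsub)
      simp [Real.volume_Ioi]
    · filter_upwards [ae_restrict_mem measurableSet_Ioi] with z hz
      exact (hp z (hx.trans hz)).le
  have hF : 0 < ∫ y in Ioi x, f y := tail_pos f hfi hf_pos
  have hG : 0 < ∫ y in Ioi x, g y := tail_pos g hgi hg_pos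
  set c : ℝ := f x / g x with hc
  have hcpos : 0 < c := div_pos hfx hgx
  rw [div_le_div_iff₀ hG hF]
  by_cases hcase : ∀ y ∈ Ioi x, f y ≤ c * g y
  · have h1 : ∫ y in Ioi x, f y ≤ ∫ y in Ioi x, c * g y :=
      setIntegral_mono_on hfi.integrableOn (hgi.integrableOn.const_mul c)
        measurableSet_Ioi hcase
    rw [integral_const_mul] at h1
    calc g x * ∫ y in Ioi x, f y ≤ g x * (c * ∫ y in Ioi x, g y) := by
          exact mul_le_mul_of_nonneg_left h1 hgx.le
      _ = f x * ∫ y in Ioi x, g y := by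
          rw [hc]; field_simp
  · push_neg at hcase
    obtain ⟨y0, hy0x, hy0⟩ := hcase
    rw [mem_Ioi] at hy0x
    by_cases hc1 : 1 ≤ c
    · have hgf : g x ≤ f x := by
        rw [hc, le_div_iff₀ hgx] at hc1; linarith
      exact mul_le_mul hgf (hst x) hF.le hfx.le
    · exfalso
      push_neg at hc1
      have hy0pos : 0 < y0 := hx.trans hy0x
      -- log ratio at y0 exceeds that at x
      have hly0 : Real.log (f x / g x) < Real.log (f y0 / g y0) := by
        apply Real.log_lt_log hcpos
        rw [lt_div_iff₀ (hg_pos y0 hy0pos)]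
        linarith [hy0]
      -- concavity gives f z ≤ c * g z on Ioc 0 x
      have key : ∀ z ∈ Ioc 0 x, f z ≤ c * g z := by
        intro z ⟨hz0, hzx⟩
        rcases eq_or_lt_of_le hzx with rfl | hzlt
        · rw [hc]; field_simp; exact le_refl _
        · -- z < x < y0
          set a : ℝ := (y0 - x) / (y0 - z) with ha
          set b : ℝ := (x - z) / (y0 - z) with hb
          have hzy0 : z < y0 := hzlt.trans hy0x
          have hden : 0 < y0 - z := by linarith
          have hapos : 0 < a := div_pos (by linarith) hden
          have hbpos : 0 < b := div_pos (by linarith) hden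
          have hab : a + b = 1 := by
            rw [ha, hb, ← add_div, div_eq_one_iff_eq hden.ne']
            ring
          have hcomb : a • z + b • y0 = x := by
            rw [ha, hb, smul_eq_mul, smul_eq_mul, div_mul_eq_mul_div, div_mul_eq_mul_div,
              ← add_div, div_eq_iff hden.ne']; ring
          have hcc := hl_conc.2 (mem_Ioi.2 hz0) (mem_Ioi.2 hy0pos)
            hapos.le hbpos.le hab
          rw [hcomb] at hcc
          -- l x ≥ a l z + b l y0 > a l z + b l x
          have hlz : Real.log (f z / g z) < Real.log (f x / g x) := by
            by_contra hcon
            push_neg at hcon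
            have : Real.log (f x / g x) <
                a * Real.log (f z / g z) + b * Real.log (f y0 / g y0) := by
              calc Real.log (f x / g x)
                  = a * Real.log (f x / g x) + b * Real.log (f x / g x) := by
                    rw [← add_mul, hab, one_mul]
                _ < a * Real.log (f z / g z) + b * Real.log (f y0 / g y0) := by
                    apply add_lt_add_of_le_of_lt
                    · exact mul_le_mul_of_nonneg_left hcon hapos.le
                    · exact (mul_lt_mul_iff_right₀ hbpos).2 hly0
            simp only [smul_eq_mul] at hcc
            linarith
          have hratio : f z / g z < c := by
            have hfzgz : 0 < f z / g z := div_pos (hf_pos z hz0) (hg_pos z hz0)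
            by_contra hcon
            push_neg at hcon
            exact absurd (Real.log_le_log hcpos hcon) (not_le.2 hlz)
          rw [div_lt_iff₀ (hg_pos z hz0)] at hratio
          linarith [hratio]
      -- integrals over Ioc 0 x
      have h1 : ∫ z in Ioc 0 x, f z ≤ ∫ z in Ioc 0 x, c * g z :=
        setIntegral_mono_on hfi.integrableOn (hgi.integrableOn.const_mul c)
          measurableSet_Ioc key
      rw [integral_const_mul] at h1
      have hGmid : 0 < ∫ z in Ioc 0 x, g z := by
        rw [setIntegral_pos_iff_support_of_nonneg_ae _ hgi.integrableOn]
        · have hsub : Ioc 0 x ⊆ Function.support g ∩ Ioc 0 x := by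
            intro z hz
            exact ⟨Function.mem_support.2 (ne_of_gt (hg_pos z hz.1)), hz⟩
          refine lt_of_lt_of_le ?_ (measure_mono hsub)
          rw [Real.volume_Ioc]
          simp [hx]
        · filter_upwards [ae_restrict_mem measurableSet_Ioc] with z hz
          exact (hg_pos z hz.1).le
      have hstrict : ∫ z in Ioc 0 x, f z < ∫ z in Ioc 0 x, g z := by
        have : c * ∫ z in Ioc 0 x, g z < ∫ z in Ioc 0 x, g z := by
          nth_rewrite 2 [← one_mul (∫ z in Ioc 0 x, g z)]
          exact mul_lt_mul_of_pos_right hc1 hGmid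
        linarith
      -- splitting the full integrals
      have splitf : ∀ h : ℝ → ℝ, Integrable h → (∀ z, z ≤ 0 → h z = 0) →
          (∫ z, h z) = (∫ z in Ioc 0 x, h z) + ∫ z in Ioi x, h z := by
        intro h hi hsupp
        rw [← setIntegral_union Ioc_disjoint_Ioi_same measurableSet_Ioi
          hi.integrableOn hi.integrableOn, Ioc_union_Ioi_eq_Ioi hx.le,
          setIntegral_eq_integral_of_forall_compl_eq_zero]
        intro z hz
        exact hsupp z (by simpa using hz)
      have hsf := splitf f hfi hf_supp
      have hsg := splitf g hgi hg_supp
      rw [hf_int] at hsf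
      rw [hg_int] at hsg
      have := hst x
      linarith
end

section
/- Let X and Y be continuous random variables supported on (0,∞) with densities f and g, and suppose l(x) = log(f(x)/g(x)) is continuously differentiable and concave. If X ≤_rh Y then X ≤_lr Y. -/
open MeasureTheory Set Filter

/-- Theorem 1(2), "rh" part: for continuous random variables supported on `(0, ∞)`
with densities `f` and `g` such that `l(x) = log (f x / g x)` is continuously
differentiable and concave on `(0, ∞)`, the reversed hazard rate order `X ≤_rh Y`
implies the likelihood ratio order `X ≤_lr Y`. -/
theorem stmt_3 (f g : ℝ → ℝ) (l' : ℝ → ℝ)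
    (hf_meas : Measurable f) (hg_meas : Measurable g)
    (hf_pos : ∀ x, 0 < x → 0 < f x) (hf_supp : ∀ x, x ≤ 0 → f x = 0)
    (hg_pos : ∀ x, 0 < x → 0 < g x) (hg_supp : ∀ x, x ≤ 0 → g x = 0)
    (hf_int : ∫ x, f x = 1) (hg_int : ∫ x, g x = 1)
    (hl_deriv : ∀ x ∈ Ioi (0 : ℝ),
      HasDerivAt (fun x => Real.log (f x / g x)) (l' x) x)
    (hl'_cont : ContinuousOn l' (Ioi 0))
    (hl_conc : ConcaveOn ℝ (Ioi 0) (fun x => Real.log (f x / g x)))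
    (hrh : ∀ x : ℝ, 0 < x →
      f x / (∫ y in Ioc 0 x, f y) ≤ g x / (∫ y in Ioc 0 x, g y)) :
    AntitoneOn (fun x => f x / g x) (Ioi 0) := by
  set L : ℝ → ℝ := fun x => Real.log (f x / g x) with hL
  -- integrability of f and g
  have hf_integ : Integrable f := by
    by_contra h
    rw [integral_undef h] at hf_int; norm_num at hf_int
  have hg_integ : Integrable g := by
    by_contra h
    rw [integral_undef h] at hg_int; norm_num at hg_int
  -- deriv L = l' on Ioi 0
  have hderiv_eq : ∀ x ∈ Ioi (0:ℝ), deriv L x = l' x := fun x hx =>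
    (hl_deriv x hx).deriv
  -- l' is antitone on Ioi 0
  have hl'_anti : AntitoneOn l' (Ioi 0) := by
    have := hl_conc.antitoneOn_deriv (fun x hx => (hl_deriv x hx).differentiableAt)
    intro x hx y hy hxy
    rw [← hderiv_eq x hx, ← hderiv_eq y hy]
    exact this hx hy hxy
  -- key step: l' ≤ 0 on Ioi 0
  have hl'_nonpos : ∀ x ∈ Ioi (0:ℝ), l' x ≤ 0 := by
    intro x₀ hx₀
    by_contra hpos
    push_neg at hpos
    have hx₀' : (0:ℝ) < x₀ := hx₀
    set r₀ : ℝ := f x₀ / g x₀ with hr₀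
    have hr₀_pos : 0 < r₀ := div_pos (hf_pos _ hx₀') (hg_pos _ hx₀')
    -- L is strictly monotone on Ioc 0 x₀
    have hLmono : StrictMonoOn L (Ioc 0 x₀) := by
      apply strictMonoOn_of_deriv_pos (convex_Ioc 0 x₀)
      · intro y hy
        exact ((hl_deriv y hy.1).continuousAt).continuousWithinAt
      · intro y hy
        rw [interior_Ioc] at hy
        rw [hderiv_eq y hy.1]
        exact lt_of_lt_of_le hpos (hl'_anti hy.1 hx₀ hy.2.le)
    -- hence f y < r₀ * g y for y ∈ Ioo 0 x₀
    have hlt : ∀ y ∈ Ioo 0 x₀, f y < r₀ * g y := by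
      intro y hy
      have h1 : L y < L x₀ := hLmono ⟨hy.1, hy.2.le⟩ (right_mem_Ioc.2 hx₀') hy.2
      have h2 : f y / g y < r₀ := by
        rw [hL] at h1
        have := (Real.log_lt_log_iff (div_pos (hf_pos _ hy.1) (hg_pos _ hy.1))
          hr₀_pos).mp h1
        simpa using this
      calc f y = (f y / g y) * g y := by field_simp [(hg_pos _ hy.1).ne']
        _ < r₀ * g y := by
            exact mul_lt_mul_of_pos_right h2 (hg_pos _ hy.1)
    have hle : ∀ y ∈ Ioc 0 x₀, f y ≤ r₀ * g y := by
      intro y hy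
      rcases lt_or_eq_of_le hy.2 with h | h
      · exact (hlt y ⟨hy.1, h⟩).le
      · subst h
        rw [hr₀, div_mul_cancel₀ _ (hg_pos _ hy.1).ne']
    -- integrals
    set F : ℝ := ∫ y in Ioc 0 x₀, f y with hF
    set G : ℝ := ∫ y in Ioc 0 x₀, g y with hG
    have hfm : IntegrableOn f (Ioc 0 x₀) := hf_integ.integrableOn
    have hgm : IntegrableOn g (Ioc 0 x₀) := hg_integ.integrableOn
    have hFpos : 0 < F := by
      rw [hF, setIntegral_pos_iff_support_of_nonneg_ae]
      · apply lt_of_lt_of_le (b := volume (Ioc (0:ℝ) x₀))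
        · simp [hx₀']
        · apply measure_mono
          intro y hy
          exact ⟨(hf_pos y hy.1).ne', hy⟩
      · filter_upwards [ae_restrict_mem measurableSet_Ioc] with y hy
        exact (hf_pos y hy.1).le
      · exact hfm
    have hGpos : 0 < G := by
      rw [hG, setIntegral_pos_iff_support_of_nonneg_ae]
      · apply lt_of_lt_of_le (b := volume (Ioc (0:ℝ) x₀))
        · simp [hx₀']
        · apply measure_mono
          intro y hy
          exact ⟨(hg_pos y hy.1).ne', hy⟩
      · filter_upwards [ae_restrict_mem measurableSet_Ioc] with y hy
        exact (hg_pos y hy.1).le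
      · exact hgm
    -- strict inequality F < r₀ * G
    have hdiff : 0 < ∫ y in Ioc 0 x₀, (r₀ * g y - f y) := by
      rw [setIntegral_pos_iff_support_of_nonneg_ae]
      · apply lt_of_lt_of_le (b := volume (Ioo (0:ℝ) x₀))
        · simp [hx₀']
        · apply measure_mono
          intro y hy
          exact ⟨(sub_pos.2 (hlt y hy)).ne', hy.1, hy.2.le⟩
      · filter_upwards [ae_restrict_mem measurableSet_Ioc] with y hy
        exact sub_nonneg.2 (hle y hy)
      · exact (hgm.const_mul r₀).sub hfm
    have hFG : F < r₀ * G := by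
      have : (∫ y in Ioc 0 x₀, (r₀ * g y - f y)) = r₀ * G - F := by
        rw [integral_sub (hgm.const_mul r₀) hfm, integral_const_mul]
      linarith [hdiff, this ▸ hdiff]
    -- contradiction with rh order
    have hrh₀ := hrh x₀ hx₀'
    rw [← hF, ← hG, div_le_div_iff₀ hFpos hGpos] at hrh₀
    have hgne : g x₀ ≠ 0 := (hg_pos _ hx₀').ne'
    have hthis : g x₀ * F < g x₀ * (r₀ * G) := mul_lt_mul_of_pos_left hFG (hg_pos _ hx₀')
    have h2 : g x₀ * (r₀ * G) = f x₀ * G := by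
      rw [hr₀, ← mul_assoc, mul_div_cancel₀ _ hgne]
    linarith
  -- L is antitone on Ioi 0
  have hLanti : AntitoneOn L (Ioi 0) := by
    apply antitoneOn_of_deriv_nonpos (convex_Ioi 0)
    · intro y hy
      exact ((hl_deriv y hy).continuousAt).continuousWithinAt
    · intro y hy
      rw [interior_Ioi] at hy
      exact ((hl_deriv y hy).differentiableAt).differentiableWithinAt
    · intro y hy
      rw [interior_Ioi] at hy
      rw [hderiv_eq y hy]
      exact hl'_nonpos y hy
  -- conclude
  intro x hx y hy hxy
  have h1 : L y ≤ L x := hLanti hx hy hxy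
  have hx' : (0:ℝ) < x := hx
  have hy' : (0:ℝ) < y := hy
  exact (Real.log_le_log_iff (div_pos (hf_pos _ hy') (hg_pos _ hy'))
    (div_pos (hf_pos _ hx') (hg_pos _ hx'))).mp h1
end

section
/- Let X and Y be discrete random variables with probability mass functions f and g, both with support {0,1,...,n} (or all of the nonnegative integers), such that log(f(x)/g(x)) is concave on the support (i.e., f(x+1)f(x−1)g(x)^2 ≤ f(x)^2 g(x+1)g(x−1) for interior points x). Then X ≤_st Y if and only if f(0) ≥ g(0). -/
open Set

private lemma tail_eq_aux (f : ℕ → ℝ) (hs : Summable f) (k : ℕ) :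
    ∑' x : ℕ, (if k < x then f x else 0)
      = (∑' x : ℕ, f x) - ∑ i ∈ Finset.range (k+1), f i := by
  have hind : (fun x : ℕ => if k < x then f x else 0)
      = Set.indicator {x : ℕ | k < x} f := by
    ext x; simp [Set.indicator_apply, Set.mem_setOf_eq]
  have hsum : Summable (fun x : ℕ => if k < x then f x else 0) := by
    rw [hind]; exact hs.indicator _
  have h1 := Summable.sum_add_tsum_nat_add (f := fun x : ℕ => if k < x then f x else 0) (k+1) hsum
  have h2 : ∑ i ∈ Finset.range (k+1), (if k < i then f i else 0) = 0 := by
    apply Finset.sum_eq_zero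
    intro i hi
    have := Finset.mem_range.mp hi
    rw [if_neg (by omega)]
  have h3 : (fun i : ℕ => if k < i + (k+1) then f (i + (k+1)) else 0)
      = fun i => f (i + (k+1)) := by
    funext i; rw [if_pos]; omega
  have h4 := Summable.sum_add_tsum_nat_add (f := f) (k+1) hs
  rw [h2, zero_add, h3] at h1
  linarith [h1, h4]

private lemma summable_tail_aux (f : ℕ → ℝ) (hs : Summable f) (k : ℕ) :
    Summable (fun x : ℕ => if k < x then f x else 0) := by
  have hind : (fun x : ℕ => if k < x then f x else 0)
      = Set.indicator {x : ℕ | k < x} f := by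
    ext x; simp [Set.indicator_apply, Set.mem_setOf_eq]
  rw [hind]; exact hs.indicator _

/-- Theorem 2(1), "st" part: for discrete random variables with pmfs `f` and `g`,
both supported on `{0, 1, ..., n}` (when `N = n + 1`) or on all of `ℕ` (when `N = ⊤`),
such that `log (f x / g x)` is discretely concave on the support, the stochastic order
`X ≤_st Y` holds iff `f 0 ≥ g 0`. -/
theorem stmt_4 (f g : ℕ → ℝ) (N : ℕ∞) (hN : 0 < N)
    (hf_nonneg : ∀ x, 0 ≤ f x) (hg_nonneg : ∀ x, 0 ≤ g x)
    (hf_supp : ∀ x : ℕ, 0 < f x ↔ (x : ℕ∞) < N)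
    (hg_supp : ∀ x : ℕ, 0 < g x ↔ (x : ℕ∞) < N)
    (hf_sum : ∑' x : ℕ, f x = 1) (hg_sum : ∑' x : ℕ, g x = 1)
    (hconc : ∀ x : ℕ, ((x : ℕ∞) + 2 < N) →
      f (x + 2) * f x * (g (x + 1)) ^ 2 ≤ (f (x + 1)) ^ 2 * g (x + 2) * g x) :
    (∀ k : ℕ, (∑' x : ℕ, if k < x then f x else 0) ≤ ∑' x : ℕ, if k < x then g x else 0)
      ↔ g 0 ≤ f 0 := by
  -- summability
  have hSf : Summable f := by
    by_contra h
    rw [tsum_eq_zero_of_not_summable h] at hf_sum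
    norm_num at hf_sum
  have hSg : Summable g := by
    by_contra h
    rw [tsum_eq_zero_of_not_summable h] at hg_sum
    norm_num at hg_sum
  -- zero outside support
  have hf_zero : ∀ x : ℕ, ¬ ((x : ℕ∞) < N) → f x = 0 := fun x hx =>
    le_antisymm (le_of_not_gt (fun h => hx ((hf_supp x).1 h))) (hf_nonneg x)
  have hg_zero : ∀ x : ℕ, ¬ ((x : ℕ∞) < N) → g x = 0 := fun x hx =>
    le_antisymm (le_of_not_gt (fun h => hx ((hg_supp x).1 h))) (hg_nonneg x)
  have h0N : ((0 : ℕ) : ℕ∞) < N := by exact_mod_cast hN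
  have hf0 : 0 < f 0 := (hf_supp 0).2 h0N
  have hg0 : 0 < g 0 := (hg_supp 0).2 h0N
  have hmono : ∀ x y : ℕ, x ≤ y → ((y : ℕ∞) < N) → ((x : ℕ∞) < N) := by
    intro x y hxy hy
    exact lt_of_le_of_lt (by exact_mod_cast hxy) hy
  constructor
  · -- forward: take k = 0
    intro h
    have h0 := h 0
    rw [tail_eq_aux f hSf 0, tail_eq_aux g hSg 0, hf_sum, hg_sum] at h0
    simp only [zero_add, Finset.range_one, Finset.sum_singleton] at h0
    linarith
  · -- backward
    intro hfg0 k
    -- Claim A: ratio-decrease propagates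
    have claimA : ∀ x : ℕ, f (x+1) * g x ≤ f x * g (x+1) →
        f (x+2) * g (x+1) ≤ f (x+1) * g (x+2) := by
      intro x hP
      by_cases hx2 : ((x+2 : ℕ) : ℕ∞) < N
      · have hx : ((x : ℕ∞)) < N := hmono x (x+2) (by omega) hx2
        have hx1 : ((x+1 : ℕ) : ℕ∞) < N := hmono (x+1) (x+2) (by omega) hx2
        have hfx : 0 < f x := (hf_supp x).2 hx
        have hgx : 0 < g x := (hg_supp x).2 hx
        have hfx1 : 0 < f (x+1) := (hf_supp (x+1)).2 hx1
        have hgx1 : 0 < g (x+1) := (hg_supp (x+1)).2 hx1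
        have hgx2 : 0 < g (x+2) := (hg_supp (x+2)).2 hx2
        have hc := hconc x (by push_cast at hx2 ⊢; exact hx2)
        have key : f (x+2) * g (x+1) * (f x * g (x+1))
            ≤ f (x+1) * g (x+2) * (f x * g (x+1)) := by
          calc f (x+2) * g (x+1) * (f x * g (x+1))
              = f (x+2) * f x * (g (x+1))^2 := by ring
            _ ≤ (f (x+1))^2 * g (x+2) * g x := hc
            _ = (f (x+1) * g (x+2)) * (f (x+1) * g x) := by ring
            _ ≤ (f (x+1) * g (x+2)) * (f x * g (x+1)) :=
                mul_le_mul_of_nonneg_left hP (mul_nonneg hfx1.le hgx2.le)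
            _ = f (x+1) * g (x+2) * (f x * g (x+1)) := by ring
        exact le_of_mul_le_mul_right key (mul_pos hfx hgx1)
      · have hfx2 : f (x+2) = 0 := hf_zero _ hx2
        have hgx2 : g (x+2) = 0 := hg_zero _ hx2
        rw [hfx2, hgx2]
        simp
    -- propagation: P j → P (j + m)
    have claimAiter : ∀ j m : ℕ, f (j+1) * g j ≤ f j * g (j+1) →
        f (j+m+1) * g (j+m) ≤ f (j+m) * g (j+m+1) := by
      intro j m
      induction m with
      | zero => intro h; simpa using h
      | succ m ih =>
        intro h
        exact claimA (j+m) (ih h)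
    -- Claim C: single crossing (strict, inside support)
    have claimC : ∀ x : ℕ, f x < g x → ((x+1 : ℕ) : ℕ∞) < N → f (x+1) < g (x+1) := by
      intro x hlt hx1
      have hx : ((x : ℕ∞)) < N := hmono x (x+1) (by omega) hx1
      have hgx : 0 < g x := (hg_supp x).2 hx
      have hgx1 : 0 < g (x+1) := (hg_supp (x+1)).2 hx1
      by_cases hP : f (x+1) * g x ≤ f x * g (x+1)
      · have h1 : f (x+1) * g x < g x * g (x+1) := lt_of_le_of_lt hP (by nlinarith)
        nlinarith
      · exfalso
        push_neg at hP
        have hnoP : ∀ j, j ≤ x → f j * g (j+1) < f (j+1) * g j := by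
          intro j hj
          by_contra hc
          push_neg at hc
          have h2 := claimAiter j (x - j) hc
          have hxj : j + (x - j) = x := by omega
          rw [hxj] at h2
          exact absurd h2 (not_le.mpr hP)
        have hchain : ∀ j, j ≤ x → f 0 * g j ≤ f j * g 0 := by
          intro j
          induction j with
          | zero => intro _; exact le_rfl
          | succ j ih =>
            intro hj
            have hj' : j ≤ x := by omega
            have h1 := ih hj'
            have h2 := hnoP j hj'
            have hjN : ((j : ℕ∞)) < N := hmono j x hj' hx
            have hgj : 0 < g j := (hg_supp j).2 hjN
            have hgj1 : 0 ≤ g (j+1) := hg_nonneg (j+1)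
            nlinarith [mul_le_mul_of_nonneg_right h1 hgj1,
              mul_le_mul_of_nonneg_right h2.le (le_of_lt hg0), hgj]
        have h3 := hchain x le_rfl
        nlinarith [mul_le_mul_of_nonneg_left hfg0 (hf_nonneg x),
          mul_lt_mul_of_pos_left hlt hf0]
    -- propagation of being below
    have claimD : ∀ x₀ m : ℕ, f x₀ < g x₀ → f (x₀ + m) ≤ g (x₀ + m) := by
      intro x₀ m hlt
      have key : ∀ m : ℕ, f (x₀ + m) < g (x₀ + m) ∨ ¬ (((x₀ + m : ℕ) : ℕ∞) < N) := by
        intro m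
        induction m with
        | zero => left; simpa using hlt
        | succ m ih =>
          rcases ih with h | h
          · by_cases hy : ((x₀ + m + 1 : ℕ) : ℕ∞) < N
            · left; exact claimC (x₀ + m) h hy
            · right; exact hy
          · right
            intro hc
            exact h (hmono (x₀+m) (x₀+m+1) (Nat.le_succ _) hc)
      rcases key m with h | h
      · exact h.le
      · rw [hf_zero _ h, hg_zero _ h]
    -- tail comparison at k
    by_cases hcase : ∀ x ≤ k, g x ≤ f x
    · rw [tail_eq_aux f hSf k, tail_eq_aux g hSg k, hf_sum, hg_sum]
      have hsum : ∑ i ∈ Finset.range (k+1), g i ≤ ∑ i ∈ Finset.range (k+1), f i := by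
        apply Finset.sum_le_sum
        intro i hi
        have := Finset.mem_range.mp hi
        exact hcase i (by omega)
      linarith
    · push_neg at hcase
      obtain ⟨x₀, hx₀k, hx₀⟩ := hcase
      apply Summable.tsum_le_tsum _ (summable_tail_aux f hSf k) (summable_tail_aux g hSg k)
      intro x
      by_cases hx : k < x
      · rw [if_pos hx, if_pos hx]
        have hxe : x = x₀ + (x - x₀) := by omega
        rw [hxe]
        exact claimD x₀ (x - x₀) hx₀
      · rw [if_neg hx, if_neg hx]
end

section
/- Let X and Y be discrete random variables with pmfs f and g, both supported on {0,1,...,n}, such that log(f(x)/g(x)) is concave on the support. If X ≤_st Y then X ≤_hr Y, i.e., f(k)/Pr(X ≥ k) ≥ g(k)/Pr(Y ≥ k) for all k in the support. -/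
open Finset

/-- If the ratio `f/g` is decreasing at `k` (i.e. `g k * f (k+1) ≤ f k * g (k+1)`),
then by log-concavity it keeps decreasing, so `g k * f (k+j) ≤ f k * g (k+j)`. -/
private lemma dec_chain (n : ℕ) (f g : ℕ → ℝ)
    (hf_supp : ∀ x : ℕ, 0 < f x ↔ x ≤ n)
    (hg_supp : ∀ x : ℕ, 0 < g x ↔ x ≤ n)
    (hf0 : ∀ x, n < x → f x = 0) (hg0 : ∀ x, n < x → g x = 0)
    (hconc : ∀ x : ℕ, x + 2 ≤ n →
      f (x + 2) * f x * (g (x + 1)) ^ 2 ≤ (f (x + 1)) ^ 2 * g (x + 2) * g x)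
    (k : ℕ) (hk : k ≤ n) (hcase : g k * f (k+1) ≤ f k * g (k+1)) :
    ∀ j, k + j ≤ n →
      (g (k+j) * f (k+j+1) ≤ f (k+j) * g (k+j+1)) ∧ g k * f (k+j) ≤ f k * g (k+j) := by
  intro j
  induction j with
  | zero => exact fun _ => ⟨by simpa using hcase, le_of_eq (mul_comm _ _)⟩
  | succ j ih =>
    intro hj1
    have hxn : k + j + 1 ≤ n := by omega
    obtain ⟨A, B⟩ := ih (by omega)
    set x := k + j with hx
    have hfx : 0 < f x := (hf_supp x).2 (by omega)
    have hgx : 0 < g x := (hg_supp x).2 (by omega)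
    have hfx1 : 0 < f (x+1) := (hf_supp _).2 (by omega)
    have hgx1 : 0 < g (x+1) := (hg_supp _).2 (by omega)
    have hfk : 0 < f k := (hf_supp k).2 hk
    have hgk : 0 < g k := (hg_supp k).2 hk
    have second : g k * f (x+1) ≤ f k * g (x+1) := by
      nlinarith [mul_le_mul_of_nonneg_right B hfx1.le,
        mul_le_mul_of_nonneg_left A hfk.le]
    have first : g (x+1) * f (x+2) ≤ f (x+1) * g (x+2) := by
      rcases Nat.lt_or_ge n (x+2) with h | h
      · have h1 : f (x+2) = 0 := hf0 _ h
        have h2 : g (x+2) = 0 := hg0 _ h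
        simp [h1, h2]
      · have hc := hconc x h
        have hgx2 : 0 < g (x+2) := (hg_supp _).2 h
        nlinarith [hc, mul_le_mul_of_nonneg_left A (mul_nonneg hfx1.le hgx2.le),
          mul_pos hfx hgx1]
    have e1 : k + (j+1) = x + 1 := by omega
    rw [e1]
    exact ⟨first, second⟩

/-- If the ratio `f/g` is increasing at `k` (as an inequality `f ≤ g`-side), then by
log-concavity it was increasing all the way below `k`, so `f (k-m) * g k ≤ g (k-m) * f k`. -/
private lemma inc_chain (n : ℕ) (f g : ℕ → ℝ)
    (hf_supp : ∀ x : ℕ, 0 < f x ↔ x ≤ n)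
    (hg_supp : ∀ x : ℕ, 0 < g x ↔ x ≤ n)
    (hconc : ∀ x : ℕ, x + 2 ≤ n →
      f (x + 2) * f x * (g (x + 1)) ^ 2 ≤ (f (x + 1)) ^ 2 * g (x + 2) * g x)
    (k : ℕ) (hk : k + 1 ≤ n) (hcase : f k * g (k+1) ≤ g k * f (k+1)) :
    ∀ m, m ≤ k →
      (f (k-m) * g (k-m+1) ≤ g (k-m) * f (k-m+1)) ∧ f (k-m) * g k ≤ g (k-m) * f k := by
  intro m
  induction m with
  | zero => exact fun _ => ⟨by simpa using hcase, le_of_eq (mul_comm _ _)⟩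
  | succ m ih =>
    intro hm1
    obtain ⟨A, B⟩ := ih (by omega)
    set x := k - (m+1) with hx
    have e1 : k - m = x + 1 := by omega
    rw [e1] at A B
    have hx2n : x + 2 ≤ n := by omega
    have hfx : 0 < f x := (hf_supp _).2 (by omega)
    have hgx : 0 < g x := (hg_supp _).2 (by omega)
    have hfx1 : 0 < f (x+1) := (hf_supp _).2 (by omega)
    have hgx1 : 0 < g (x+1) := (hg_supp _).2 (by omega)
    have hfx2 : 0 < f (x+2) := (hf_supp _).2 hx2n
    have hgx2 : 0 < g (x+2) := (hg_supp _).2 hx2n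
    have hfk : 0 < f k := (hf_supp k).2 (by omega)
    have hgk : 0 < g k := (hg_supp k).2 (by omega)
    have hc := hconc x hx2n
    have first : f x * g (x+1) ≤ g x * f (x+1) := by
      nlinarith [hc, mul_le_mul_of_nonneg_left A (mul_nonneg hgx.le hfx1.le) ,
        mul_pos hgx1 hfx2]
    have second : f x * g k ≤ g x * f k := by
      nlinarith [mul_le_mul_of_nonneg_right first (mul_nonneg hfx1.le hgk.le),
        mul_le_mul_of_nonneg_left B (mul_nonneg hgx.le hfx1.le),
        mul_pos hfx1 hgx1]
    exact ⟨first, second⟩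

/-- Theorem 2(1), "hr" part: for discrete random variables with pmfs `f` and `g`,
both supported exactly on `{0, 1, ..., n}`, such that `log (f x / g x)` is discretely
concave on the support, the stochastic order `X ≤_st Y` implies the hazard rate
order `X ≤_hr Y`. -/
theorem stmt_6 (n : ℕ) (f g : ℕ → ℝ)
    (hf_nonneg : ∀ x, 0 ≤ f x) (hg_nonneg : ∀ x, 0 ≤ g x)
    (hf_supp : ∀ x : ℕ, 0 < f x ↔ x ≤ n)
    (hg_supp : ∀ x : ℕ, 0 < g x ↔ x ≤ n)
    (hf_sum : ∑ x ∈ Finset.range (n + 1), f x = 1)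
    (hg_sum : ∑ x ∈ Finset.range (n + 1), g x = 1)
    (hconc : ∀ x : ℕ, x + 2 ≤ n →
      f (x + 2) * f x * (g (x + 1)) ^ 2 ≤ (f (x + 1)) ^ 2 * g (x + 2) * g x)
    (hst : ∀ k : ℕ, ∑ x ∈ Finset.Ioc k n, f x ≤ ∑ x ∈ Finset.Ioc k n, g x) :
    ∀ k : ℕ, k ≤ n →
      g k / (∑ x ∈ Finset.Icc k n, g x) ≤ f k / (∑ x ∈ Finset.Icc k n, f x) := by
  intro k hk
  have hf0 : ∀ x, n < x → f x = 0 := fun x hx =>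
    le_antisymm (not_lt.1 (fun h => absurd ((hf_supp x).1 h) (by omega))) (hf_nonneg x)
  have hg0 : ∀ x, n < x → g x = 0 := fun x hx =>
    le_antisymm (not_lt.1 (fun h => absurd ((hg_supp x).1 h) (by omega))) (hg_nonneg x)
  have hfk : 0 < f k := (hf_supp k).2 hk
  have hgk : 0 < g k := (hg_supp k).2 hk
  have hFpos : 0 < ∑ x ∈ Finset.Icc k n, f x :=
    Finset.sum_pos' (fun i _ => hf_nonneg i) ⟨k, Finset.mem_Icc.2 ⟨le_refl k, hk⟩, hfk⟩
  have hGpos : 0 < ∑ x ∈ Finset.Icc k n, g x :=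
    Finset.sum_pos' (fun i _ => hg_nonneg i) ⟨k, Finset.mem_Icc.2 ⟨le_refl k, hk⟩, hgk⟩
  rw [div_le_div_iff₀ hGpos hFpos]
  -- stochastic order gives the tail-sum comparison on `Icc k n`
  have hIcc0 : Finset.Icc 0 n = Finset.range (n+1) := by
    ext a; simp [Nat.lt_succ_iff]
  have hstIcc : ∑ x ∈ Finset.Icc k n, f x ≤ ∑ x ∈ Finset.Icc k n, g x := by
    cases k with
    | zero => rw [hIcc0, hf_sum, hg_sum]
    | succ j => rw [Finset.Icc_add_one_left_eq_Ioc]; exact hst j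
  by_cases hgf : g k ≤ f k
  · exact mul_le_mul hgf hstIcc hFpos.le hfk.le
  push_neg at hgf
  by_cases hcase : g k * f (k+1) ≤ f k * g (k+1)
  · -- the ratio f/g decreases from k on; pointwise comparison on the tail
    rw [Finset.mul_sum, Finset.mul_sum]
    apply Finset.sum_le_sum
    intro x hx
    obtain ⟨hx1, hx2⟩ := Finset.mem_Icc.1 hx
    have h2 := (dec_chain n f g hf_supp hg_supp hf0 hg0 hconc k hk hcase (x - k)
      (by omega)).2
    rwa [show k + (x - k) = x by omega] at h2
  · -- the ratio f/g increases up to k; contradiction with stochastic order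
    push_neg at hcase
    exfalso
    have hkn : k + 1 ≤ n := by
      by_contra h
      have h1 : f (k+1) = 0 := hf0 _ (by omega)
      have h2 : g (k+1) = 0 := hg0 _ (by omega)
      rw [h1, h2] at hcase
      simp at hcase
    have hlt : ∀ x, x ≤ k → f x < g x := by
      intro x hxk
      have h2 := (inc_chain n f g hf_supp hg_supp hconc k hkn hcase.le (k - x)
        (by omega)).2
      rw [show k - (k - x) = x by omega] at h2
      have hgx : 0 < g x := (hg_supp x).2 (by omega)
      nlinarith
    have hsumlt : ∑ x ∈ Finset.range (k+1), f x < ∑ x ∈ Finset.range (k+1), g x := by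
      apply Finset.sum_lt_sum_of_nonempty ⟨0, Finset.mem_range.2 (by omega)⟩
      intro i hi
      exact hlt i (Nat.lt_succ_iff.1 (Finset.mem_range.1 hi))
    have hsplitf : ∑ x ∈ Finset.range (k+1), f x + ∑ x ∈ Finset.Ioc k n, f x
        = ∑ x ∈ Finset.range (n+1), f x := by
      rw [Finset.range_eq_Ico,
        show Finset.Ioc k n = Finset.Ico (k+1) (n+1) by
          rw [Finset.Ico_add_one_right_eq_Icc, Finset.Icc_add_one_left_eq_Ioc], Finset.range_eq_Ico]
      exact Finset.sum_Ico_consecutive f (Nat.zero_le _) (by omega)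
    have hsplitg : ∑ x ∈ Finset.range (k+1), g x + ∑ x ∈ Finset.Ioc k n, g x
        = ∑ x ∈ Finset.range (n+1), g x := by
      rw [Finset.range_eq_Ico,
        show Finset.Ioc k n = Finset.Ico (k+1) (n+1) by
          rw [Finset.Ico_add_one_right_eq_Icc, Finset.Icc_add_one_left_eq_Ioc], Finset.range_eq_Ico]
      exact Finset.sum_Ico_consecutive g (Nat.zero_le _) (by omega)
    have := hst k
    rw [hf_sum] at hsplitf
    rw [hg_sum] at hsplitg
    linarith
end

section
/- Let B_1,...,B_n be independent Bernoulli random variables with parameters p_1,...,p_n ∈ (0,1), X = B_1 + ... + B_n, and Y ~ Binomial(n, p) with p ∈ (0,1). Then X ≤_lr Y (the ratio Pr(X=k)/Pr(Y=k) is nonincreasing in k on {0,...,n}) if and only if p ≥ 1 − n / (∑_{i=1}^n (1−p_i)^{-1}). -/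
open Finset

/-- The pmf of `X = B₁ + ⋯ + Bₙ`, a sum of independent Bernoulli(pᵢ) random
variables (the Poisson-binomial distribution). -/
noncomputable def poissonBinomialPMF (n : ℕ) (p : Fin n → ℝ) (k : ℕ) : ℝ :=
  ∑ S ∈ Finset.powersetCard k (Finset.univ : Finset (Fin n)),
    (∏ i ∈ S, p i) * ∏ i ∈ Finset.univ \ S, (1 - p i)

/-- The pmf of the binomial distribution with parameters `n` and `p`. -/
noncomputable def binomialPMF (n : ℕ) (p : ℝ) (k : ℕ) : ℝ :=
  (n.choose k : ℝ) * p ^ k * (1 - p) ^ (n - k)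

lemma pairBij {n : ℕ} (k : ℕ) (F : Finset (Fin n) → Fin n → ℝ) :
    ∑ S ∈ powersetCard (k+1) (univ : Finset (Fin n)), ∑ j ∈ S, F S j
      = ∑ R ∈ powersetCard k (univ : Finset (Fin n)), ∑ j ∈ univ \ R, F (insert j R) j := by
  rw [Finset.sum_sigma', Finset.sum_sigma']
  apply Finset.sum_nbij' (fun x => (⟨x.1.erase x.2, x.2⟩ : Σ _ : Finset (Fin n), Fin n))
    (fun x => ⟨insert x.2 x.1, x.2⟩)
  · rintro ⟨S, j⟩ h
    simp only [Finset.mem_sigma, mem_powersetCard_univ, mem_sdiff, mem_univ, true_and] at h ⊢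
    exact ⟨by rw [card_erase_of_mem h.2, h.1]; rfl, notMem_erase _ _⟩
  · rintro ⟨R, j⟩ h
    simp only [Finset.mem_sigma, mem_powersetCard_univ, mem_sdiff, mem_univ, true_and] at h ⊢
    exact ⟨by rw [card_insert_of_notMem h.2, h.1], mem_insert_self _ _⟩
  · rintro ⟨S, j⟩ h
    simp only [Finset.mem_sigma, mem_powersetCard_univ] at h
    simp [insert_erase h.2]
  · rintro ⟨R, j⟩ h
    simp only [Finset.mem_sigma, mem_powersetCard_univ, mem_sdiff, mem_univ, true_and] at h
    simp [erase_insert h.2]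
  · rintro ⟨S, j⟩ h
    simp only [Finset.mem_sigma, mem_powersetCard_univ] at h
    simp [insert_erase h.2]

lemma innerNonneg {ι : Type*} [DecidableEq ι] (U : Finset ι) (y : ι → ℝ) :
    0 ≤ ∑ j ∈ U, (∑ i ∈ U.erase j, (y j - y i)) * y j := by
  have hswap : ∀ f : ι → ι → ℝ, ∑ j ∈ U, ∑ i ∈ U.erase j, f j i
      = ∑ j ∈ U, ∑ i ∈ U.erase j, f i j := by
    intro f
    rw [Finset.sum_sigma', Finset.sum_sigma']
    apply Finset.sum_nbij' (fun x => (⟨x.2, x.1⟩ : Σ _ : ι, ι)) (fun x => ⟨x.2, x.1⟩)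
    · rintro ⟨j, i⟩ h
      simp only [Finset.mem_sigma, mem_erase] at h ⊢
      exact ⟨h.2.2, fun e => h.2.1 e.symm, h.1⟩
    · rintro ⟨j, i⟩ h
      simp only [Finset.mem_sigma, mem_erase] at h ⊢
      exact ⟨h.2.2, fun e => h.2.1 e.symm, h.1⟩
    · rintro ⟨j, i⟩ _; rfl
    · rintro ⟨j, i⟩ _; rfl
    · rintro ⟨j, i⟩ _; rfl
  have h2 : (2:ℝ) * ∑ j ∈ U, (∑ i ∈ U.erase j, (y j - y i)) * y j
      = ∑ j ∈ U, ∑ i ∈ U.erase j, (y j - y i)^2 := by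
    have e1 : ∀ j ∈ U, (∑ i ∈ U.erase j, (y j - y i)) * y j
        = ∑ i ∈ U.erase j, (y j - y i) * y j := fun j _ => Finset.sum_mul _ _ _
    rw [Finset.sum_congr rfl e1]
    have := hswap (fun j i => (y j - y i) * y j)
    have comb : ∑ j ∈ U, ∑ i ∈ U.erase j, ((y j - y i) * y j + (y i - y j) * y i)
        = ∑ j ∈ U, ∑ i ∈ U.erase j, (y j - y i)^2 := by
      apply Finset.sum_congr rfl; intro j _
      apply Finset.sum_congr rfl; intro i _; ring
    rw [two_mul]
    nth_rewrite 2 [this]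
    rw [← Finset.sum_add_distrib]
    rw [← comb]
    apply Finset.sum_congr rfl; intro j _
    rw [← Finset.sum_add_distrib]
  nlinarith [Finset.sum_nonneg (fun j (_ : j ∈ U) => Finset.sum_nonneg
    (fun i (_ : i ∈ U.erase j) => sq_nonneg (y j - y i)))]

lemma hA_lem {n : ℕ} (k : ℕ) (x : Fin n → ℝ) :
    ((k:ℝ)+1) * (∑ S ∈ powersetCard (k+1) (univ : Finset (Fin n)), ∏ i ∈ S, x i)
      = ∑ S ∈ powersetCard k (univ : Finset (Fin n)), (∑ i ∈ univ \ S, x i) * ∏ i ∈ S, x i := by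
  have h1 : ∀ T ∈ powersetCard (k+1) (univ : Finset (Fin n)),
      ((k:ℝ)+1) * ∏ i ∈ T, x i = ∑ j ∈ T, x j * ∏ i ∈ T.erase j, x i := by
    intro T hT
    rw [mem_powersetCard_univ] at hT
    rw [Finset.sum_congr rfl (fun j hj => Finset.mul_prod_erase T x hj),
      Finset.sum_const, hT, nsmul_eq_mul]
    push_cast; ring
  rw [Finset.mul_sum, Finset.sum_congr rfl h1,
    pairBij k (fun S j => x j * ∏ i ∈ S.erase j, x i)]
  apply Finset.sum_congr rfl
  intro R hR
  rw [mem_powersetCard_univ] at hR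
  rw [Finset.sum_mul]
  apply Finset.sum_congr rfl
  intro j hj
  rw [mem_sdiff] at hj
  rw [erase_insert hj.2]

lemma keyIneq {n : ℕ} (k : ℕ) (hk : k < n) (x : Fin n → ℝ) (hx : ∀ i, 0 ≤ x i) :
    (n : ℝ) * ((k:ℝ)+1) * (∑ S ∈ powersetCard (k+1) (univ : Finset (Fin n)), ∏ i ∈ S, x i)
      ≤ ((n : ℝ) - k) * ((∑ i, x i) * ∑ S ∈ powersetCard k (univ : Finset (Fin n)), ∏ i ∈ S, x i) := by
  set A := ∑ S ∈ powersetCard k (univ : Finset (Fin n)), (∑ i ∈ univ \ S, x i) * ∏ i ∈ S, x i with hAdef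
  set B := ∑ S ∈ powersetCard k (univ : Finset (Fin n)), (∑ i ∈ S, x i) * ∏ i ∈ S, x i with hBdef
  have hcard : ∀ S ∈ powersetCard k (univ : Finset (Fin n)),
      ((univ \ S).card : ℝ) = (n:ℝ) - k ∧ S.card = k := by
    intro S hS
    rw [mem_powersetCard_univ] at hS
    refine ⟨?_, hS⟩
    rw [card_sdiff_of_subset (subset_univ S), card_univ, Fintype.card_fin, hS, Nat.cast_sub hk.le]
  -- Claim 2 : k * A ≤ (n - k) * B
  have claim2 : (k:ℝ) * A ≤ ((n:ℝ) - k) * B := by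
    have hD : ((n:ℝ) - k) * B - (k:ℝ) * A
        = ∑ S ∈ powersetCard k (univ : Finset (Fin n)),
            ∑ j ∈ S, (∑ i ∈ univ \ S, (x j - x i)) * ∏ i ∈ S, x i := by
      rw [hAdef, hBdef, Finset.mul_sum, Finset.mul_sum, ← Finset.sum_sub_distrib]
      apply Finset.sum_congr rfl
      intro S hS
      obtain ⟨hc1, hc2⟩ := hcard S hS
      rw [← Finset.sum_mul]
      have inner : ∑ j ∈ S, ∑ i ∈ univ \ S, (x j - x i)
          = ((n:ℝ)-k) * (∑ j ∈ S, x j) - (k:ℝ) * ∑ i ∈ univ \ S, x i := by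
        simp only [Finset.sum_sub_distrib, Finset.sum_const, nsmul_eq_mul, ← Finset.mul_sum,
          hc1, hc2]
      rw [inner]
      ring
    have hDnn : 0 ≤ ((n:ℝ) - k) * B - (k:ℝ) * A := by
      rw [hD]
      rcases k with _ | k'
      · apply Finset.sum_nonneg
        intro S hS
        apply Finset.sum_nonneg
        intro j hj
        apply mul_nonneg
        · apply Finset.sum_nonneg
          intro i hi
          rw [mem_powersetCard_univ, Finset.card_eq_zero] at hS
          subst hS
          simp at hj
        · exact Finset.prod_nonneg fun i _ => hx i
      · rw [pairBij k' (fun S j => (∑ i ∈ univ \ S, (x j - x i)) * ∏ i ∈ S, x i)]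
        apply Finset.sum_nonneg
        intro R hR
        have hstep : ∀ j ∈ univ \ R,
            (∑ i ∈ univ \ insert j R, (x j - x i)) * ∏ i ∈ insert j R, x i
            = ((∑ i ∈ (univ \ R).erase j, (x j - x i)) * x j) * ∏ i ∈ R, x i := by
          intro j hj
          rw [mem_sdiff] at hj
          rw [Finset.sdiff_insert, Finset.prod_insert hj.2]
          ring
        rw [Finset.sum_congr rfl hstep, ← Finset.sum_mul]
        exact mul_nonneg (innerNonneg (univ \ R) x) (Finset.prod_nonneg fun i _ => hx i)
    linarith
  have hAB : A + B = (∑ i, x i) * ∑ S ∈ powersetCard k (univ : Finset (Fin n)), ∏ i ∈ S, x i := by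
    rw [hAdef, hBdef, ← Finset.sum_add_distrib, Finset.mul_sum]
    apply Finset.sum_congr rfl
    intro S hS
    rw [← add_mul, Finset.sum_sdiff (subset_univ S)]
  have hA : ((k:ℝ)+1) * (∑ S ∈ powersetCard (k+1) (univ : Finset (Fin n)), ∏ i ∈ S, x i) = A :=
    hA_lem k x
  nlinarith [hA, hAB, claim2]

/-- Example 0, "lr" part: if `X = B₁ + ⋯ + Bₙ` is a sum of independent Bernoulli(pᵢ)
variables, `pᵢ ∈ (0,1)`, and `Y ~ Binomial(n, p)`, `p ∈ (0,1)`, then `X ≤_lr Y`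
(the pmf ratio is nonincreasing on `{0, ..., n}`) iff
`p ≥ 1 − n / ∑ᵢ (1 − pᵢ)⁻¹`. -/
theorem stmt_8 (n : ℕ) (hn : 0 < n) (p : Fin n → ℝ) (q : ℝ)
    (hp : ∀ i, p i ∈ Set.Ioo (0 : ℝ) 1) (hq : q ∈ Set.Ioo (0 : ℝ) 1) :
    AntitoneOn (fun k : ℕ => poissonBinomialPMF n p k / binomialPMF n q k)
        (Set.Iic n) ↔
      1 - (n : ℝ) / (∑ i, (1 - p i)⁻¹) ≤ q := by
  obtain ⟨hq0, hq1⟩ := hq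
  have hq1' : 0 < 1 - q := by linarith
  set x : Fin n → ℝ := fun i => p i / (1 - p i) with hxdef
  have hp1 : ∀ i, 0 < 1 - p i := fun i => by have := (hp i).2; linarith
  have hx : ∀ i, 0 ≤ x i := fun i => div_nonneg (hp i).1.le (hp1 i).le
  set E : ℕ → ℝ := fun k => ∑ S ∈ powersetCard k (univ : Finset (Fin n)), ∏ i ∈ S, x i with hEdef
  set C : ℝ := ∏ i, (1 - p i) with hCdef
  have hC : 0 < C := Finset.prod_pos fun i _ => hp1 i
  have hEnn : ∀ k, 0 ≤ E k := fun k => Finset.sum_nonneg fun S _ =>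
    Finset.prod_nonneg fun i _ => hx i
  -- poissonBinomialPMF = C * E k
  have pb_eq : ∀ k, poissonBinomialPMF n p k = C * E k := by
    intro k
    rw [poissonBinomialPMF, hEdef, Finset.mul_sum]
    apply Finset.sum_congr rfl
    intro S hS
    have h1 : ∏ i ∈ S, p i = (∏ i ∈ S, x i) * ∏ i ∈ S, (1 - p i) := by
      rw [← Finset.prod_mul_distrib]
      apply Finset.prod_congr rfl
      intro i _
      exact (div_mul_cancel₀ (p i) (hp1 i).ne').symm
    rw [h1, hCdef, ← Finset.prod_sdiff (subset_univ S)]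
    ring
  have E0 : E 0 = 1 := by simp [hEdef]
  have E1 : E 1 = ∑ i, x i := by
    simp [hEdef, Finset.powersetCard_one, Finset.sum_map]
  -- binomial pmf positivity
  have gpos : ∀ k, k ≤ n → 0 < binomialPMF n q k := by
    intro k hk
    rw [binomialPMF]
    have := Nat.choose_pos hk
    positivity
  -- criterion equivalence
  have hSpos : 0 < ∑ i, (1 - p i)⁻¹ :=
    Finset.sum_pos (fun i _ => inv_pos.mpr (hp1 i)) (univ_nonempty_iff.mpr ⟨⟨0, hn⟩⟩)
  have hsumx : ∑ i, x i = (∑ i, (1 - p i)⁻¹) - n := by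
    have hxi : ∀ i : Fin n, x i = (1 - p i)⁻¹ - 1 := by
      intro i
      rw [hxdef, inv_eq_one_div, div_sub_one (hp1 i).ne']
      congr 1
      ring
    rw [Finset.sum_congr rfl (fun i _ => hxi i), Finset.sum_sub_distrib]
    simp
  have crit_iff : (1 - (n : ℝ) / (∑ i, (1 - p i)⁻¹) ≤ q) ↔ (1-q) * (∑ i, x i) ≤ n * q := by
    rw [hsumx]
    rw [sub_le_iff_le_add, ← sub_le_iff_le_add']
    rw [le_div_iff₀ hSpos]
    constructor
    · intro h; nlinarith
    · intro h; nlinarith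
  constructor
  · -- forward
    intro hanti
    have h01 := hanti (a := 0) (by simp) (b := 1) (by simp; omega) (by norm_num)
    simp only at h01
    rw [div_le_div_iff₀ (gpos 1 hn) (gpos 0 (Nat.zero_le n))] at h01
    rw [pb_eq, pb_eq, E0, E1] at h01
    rw [binomialPMF, binomialPMF] at h01
    simp only [Nat.choose_zero_right, Nat.choose_one_right, pow_zero, Nat.sub_zero,
      Nat.cast_one, one_mul, mul_one, pow_one] at h01
    -- h01 : C * (∑ x) * (1-q)^n ≤ C * (n * q * (1-q)^(n-1))
    have hpow : (1-q)^n = (1-q)^(n-1) * (1-q) := by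
      rw [← pow_succ]; congr 1; omega
    rw [hpow] at h01
    have hP : 0 < (1-q)^(n-1) := pow_pos hq1' _
    rw [crit_iff]
    nlinarith [h01, mul_pos hC hP]
  · -- reverse
    intro hcrit
    rw [crit_iff] at hcrit
    have step : ∀ k, k < n →
        poissonBinomialPMF n p (k+1) / binomialPMF n q (k+1)
          ≤ poissonBinomialPMF n p k / binomialPMF n q k := by
      intro k hk
      rw [div_le_div_iff₀ (gpos (k+1) hk) (gpos k hk.le)]
      have hchoose : ((n.choose (k+1)):ℝ) * ((k:ℝ)+1) = (n.choose k : ℝ) * ((n:ℝ) - k) := by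
        have h := congrArg (Nat.cast (R := ℝ)) (Nat.choose_succ_right_eq n k)
        push_cast [Nat.cast_sub hk.le] at h
        linarith
    -- scalar step: choose n k * (1-q) * E(k+1) ≤ choose n (k+1) * q * E k
      have scalar : (n.choose k : ℝ) * ((1-q) * E (k+1)) ≤ (n.choose (k+1) : ℝ) * (q * E k) := by
        have hkey := keyIneq k hk x hx
        have hnk : (0:ℝ) ≤ (n:ℝ) - k := by
          have : (k:ℝ) < n := by exact_mod_cast hk
          linarith
        have hEk := hEnn k
        have hEk1 := hEnn (k+1)
        have hsx : 0 ≤ ∑ i, x i := Finset.sum_nonneg fun i _ => hx i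
        have hck : 0 < (n.choose k : ℝ) := by exact_mod_cast Nat.choose_pos hk.le
        have hck1 : 0 < (n.choose (k+1) : ℝ) := by exact_mod_cast Nat.choose_pos hk
        have hnpos : (0:ℝ) < n := by exact_mod_cast hn
        -- (k+1)*(1-q)*E(k+1)*n ≤ (n-k)*q*E k*n
        have h1 : ((k:ℝ)+1) * ((1-q) * E (k+1)) * n ≤ ((n:ℝ)-k) * (q * E k) * n := by
          nlinarith [mul_le_mul_of_nonneg_left hkey hq1'.le,
            mul_le_mul_of_nonneg_left hcrit (mul_nonneg hnk hEk)]
        have h2 : ((k:ℝ)+1) * ((1-q) * E (k+1)) ≤ ((n:ℝ)-k) * (q * E k) :=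
          le_of_mul_le_mul_right (by nlinarith [h1]) hnpos
        have h3 := mul_le_mul_of_nonneg_left h2 hck.le
        -- choose n k * (n-k) = choose n (k+1) * (k+1)
        have hkpos : (0:ℝ) < (k:ℝ)+1 := by positivity
        apply le_of_mul_le_mul_right _ hkpos
        calc (n.choose k : ℝ) * ((1-q) * E (k+1)) * ((k:ℝ)+1)
            = (n.choose k : ℝ) * (((k:ℝ)+1) * ((1-q) * E (k+1))) := by ring
          _ ≤ (n.choose k : ℝ) * (((n:ℝ)-k) * (q * E k)) := h3
          _ = (n.choose (k+1) : ℝ) * (q * E k) * ((k:ℝ)+1) := by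
              linear_combination (-(q * E k)) * hchoose
      -- now the pmf-level inequality
      rw [pb_eq, pb_eq, binomialPMF, binomialPMF]
      have hpow : (1-q)^(n-k) = (1-q)^(n-(k+1)) * (1-q) := by
        rw [← pow_succ]; congr 1; omega
      have hD : (0:ℝ) < C * (q^k * (1-q)^(n-(k+1))) := by positivity
      have hmul := mul_le_mul_of_nonneg_left scalar hD.le
      calc C * E (k+1) * ((n.choose k : ℝ) * q ^ k * (1 - q) ^ (n - k))
          = C * (q^k * (1-q)^(n-(k+1))) * ((n.choose k : ℝ) * ((1-q) * E (k+1))) := by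
            rw [hpow]; ring
        _ ≤ C * (q^k * (1-q)^(n-(k+1))) * ((n.choose (k+1) : ℝ) * (q * E k)) := hmul
        _ = C * E k * ((n.choose (k+1):ℝ) * q ^ (k+1) * (1 - q) ^ (n - (k+1))) := by
            rw [pow_succ]; ring
    -- build AntitoneOn from step
    intro a ha b hb hab
    simp only [Set.mem_Iic] at ha hb
    clear crit_iff hcrit
    induction b with
    | zero => interval_cases a; exact le_refl _
    | succ m ih =>
      rcases Nat.lt_succ_iff_lt_or_eq.mp (Nat.lt_succ_of_le hab) with h | h
      · exact le_trans (step m (by omega)) (ih (by omega) (by omega))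
      · subst h; exact le_refl _
end

section
/- Let X ~ Poisson(λ) with λ > 0 and let Y be a mixture of Poisson(t) distributions with respect to a probability measure μ on t ∈ (0,∞). Then X ≤_st Y if and only if ∫ e^{−t} dμ(t) ≤ e^{−λ}. -/
open MeasureTheory Set

noncomputable def pk (k : ℕ) (t : ℝ) : ℝ := ∑ x ∈ Finset.range (k+1), t ^ x / x.factorial

lemma cont_pk (k : ℕ) : Continuous (pk k) :=
  continuous_finset_sum _ fun i _ => (continuous_pow i).div_const _

lemma pk_nonneg (k : ℕ) {t : ℝ} (ht : 0 ≤ t) : 0 ≤ pk k t :=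
  Finset.sum_nonneg fun i _ => by positivity

lemma pk_le_exp (k : ℕ) {t : ℝ} (ht : 0 ≤ t) : pk k t ≤ Real.exp t :=
  Real.sum_le_exp_of_nonneg ht _

lemma pow_div_le_exp (x : ℕ) {t : ℝ} (ht : 0 ≤ t) : t ^ x / x.factorial ≤ Real.exp t := by
  calc t ^ x / x.factorial ≤ ∑ i ∈ Finset.range (x+1), t ^ i / i.factorial := by
        exact Finset.single_le_sum (f := fun i => t ^ i / (i.factorial : ℝ))
          (fun i _ => by positivity) (Finset.self_mem_range_succ x)
    _ ≤ Real.exp t := Real.sum_le_exp_of_nonneg ht _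

lemma summable_g (t : ℝ) : Summable (fun x : ℕ => t ^ x * Real.exp (-t) / x.factorial) := by
  have : (fun x : ℕ => t ^ x * Real.exp (-t) / x.factorial)
      = fun x : ℕ => (t ^ x / x.factorial) * Real.exp (-t) := by funext x; ring
  rw [this]
  exact (Real.summable_pow_div_factorial t).mul_right _

lemma tsum_g (t : ℝ) : ∑' x : ℕ, t ^ x * Real.exp (-t) / x.factorial = 1 := by
  have h1 : (fun x : ℕ => t ^ x * Real.exp (-t) / x.factorial)
      = fun x : ℕ => (t ^ x / x.factorial) * Real.exp (-t) := by funext x; ring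
  rw [h1, tsum_mul_right]
  have : ∑' x : ℕ, t ^ x / (x.factorial : ℝ) = Real.exp t := by
    rw [Real.exp_eq_exp_ℝ, NormedSpace.exp_eq_tsum_div]
  rw [this, Real.exp_neg, mul_inv_cancel₀ (Real.exp_ne_zero t)]

lemma tail_eq (k : ℕ) (t : ℝ) :
    (∑' x : ℕ, if k < x then t ^ x * Real.exp (-t) / x.factorial else 0)
      = 1 - Real.exp (-t) * pk k t := by
  set f : ℕ → ℝ := fun x => t ^ x * Real.exp (-t) / x.factorial with hf
  have hs : Summable f := summable_g t
  have hsplit : (fun x : ℕ => if k < x then f x else 0)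
      = fun x => f x - (if x ∈ Finset.range (k+1) then f x else 0) := by
    funext x
    by_cases h : k < x
    · simp [h, Finset.mem_range, Nat.lt_succ_iff, not_le.mpr h]
    · simp [h, Finset.mem_range, Nat.lt_succ_iff, not_lt.mp h]
  have hs2 : Summable (fun x : ℕ => if x ∈ Finset.range (k+1) then f x else 0) :=
    summable_of_ne_finset_zero (s := Finset.range (k+1)) (fun b hb => if_neg hb)
  rw [hsplit, Summable.tsum_sub hs hs2, tsum_eq_sum (s := Finset.range (k+1)) (fun b hb => if_neg hb)]
  have h2 : ∑ x ∈ Finset.range (k+1), (if x ∈ Finset.range (k+1) then f x else 0)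
      = Real.exp (-t) * pk k t := by
    rw [Finset.sum_ite_of_true (fun x hx => hx), pk, Finset.mul_sum]
    exact Finset.sum_congr rfl fun x _ => by rw [hf]; ring
  rw [h2, tsum_g t]

lemma hasDerivAt_pk (k : ℕ) (t : ℝ) :
    HasDerivAt (pk k) (pk k t - t ^ k / k.factorial) t := by
  induction k with
  | zero =>
      have : pk 0 = fun _ : ℝ => 1 := by funext s; simp [pk]
      rw [this]
      simpa [pk] using (hasDerivAt_const t (1:ℝ))
  | succ k ih =>
      have hpk : pk (k+1) = fun s => pk k s + s ^ (k+1) / (k+1).factorial := by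
        funext s; simp [pk, Finset.sum_range_succ]
      rw [hpk]
      have hterm : HasDerivAt (fun s : ℝ => s ^ (k+1) / ((k+1).factorial : ℝ))
          (t ^ k / k.factorial) t := by
        have := (hasDerivAt_pow (k+1) t).div_const ((k+1).factorial : ℝ)
        refine this.congr_deriv ?_
        rw [Nat.factorial_succ]
        push_cast
        have hkf : (k.factorial : ℝ) ≠ 0 := Nat.cast_ne_zero.mpr k.factorial_ne_zero
        field_simp
      have := ih.add hterm
      refine this.congr_deriv ?_
      ring

lemma hasDerivAt_F (k : ℕ) (c : ℝ) (t : ℝ) :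
    HasDerivAt (fun s => Real.exp (-s) * (c - pk k s))
      (Real.exp (-t) * (t ^ k / k.factorial - c)) t := by
  have h1 : HasDerivAt (fun s : ℝ => Real.exp (-s)) (-Real.exp (-t)) t := by
    exact ((Real.hasDerivAt_exp (-t)).comp t (hasDerivAt_neg t)).congr_deriv (by ring)
  have h2 : HasDerivAt (fun s : ℝ => c - pk k s) (-(pk k t - t ^ k / k.factorial)) t := by
    exact ((hasDerivAt_const t c).sub (hasDerivAt_pk k t)).congr_deriv (by ring)
  have := h1.mul h2
  refine this.congr_deriv ?_
  ring

lemma F_min (k : ℕ) {lam : ℝ} (hlam : 0 < lam) {t : ℝ} (ht : 0 < t) :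
    Real.exp (-lam) * (lam ^ k / k.factorial - pk k lam)
      ≤ Real.exp (-t) * (lam ^ k / k.factorial - pk k t) := by
  set c : ℝ := lam ^ k / k.factorial with hc
  set F : ℝ → ℝ := fun s => Real.exp (-s) * (c - pk k s) with hF
  have hderiv : ∀ s : ℝ, deriv F s = Real.exp (-s) * (s ^ k / k.factorial - c) :=
    fun s => (hasDerivAt_F k c s).deriv
  have hcont : Continuous F := by
    have : ∀ s, HasDerivAt F (Real.exp (-s) * (s ^ k / k.factorial - c)) s :=
      hasDerivAt_F k c
    exact continuous_iff_continuousAt.mpr fun s => (this s).continuousAt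
  have hdiff : Differentiable ℝ F := fun s => (hasDerivAt_F k c s).differentiableAt
  have hfac : (0:ℝ) < k.factorial := by positivity
  rcases le_total t lam with h | h
  · have hanti : AntitoneOn F (Icc 0 lam) := by
      apply antitoneOn_of_deriv_nonpos (convex_Icc 0 lam) hcont.continuousOn
        (hdiff.differentiableOn)
      intro x hx
      rw [interior_Icc] at hx
      rw [hderiv]
      have hxk : x ^ k ≤ lam ^ k := pow_le_pow_left₀ hx.1.le hx.2.le k
      have h3 : x ^ k / k.factorial - c ≤ 0 := by
        rw [hc]
        have := (div_le_div_iff_of_pos_right hfac).mpr hxk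
        linarith
      nlinarith [Real.exp_pos (-x)]
    exact hanti ⟨ht.le, h⟩ ⟨hlam.le, le_refl lam⟩ h
  · have hmono : MonotoneOn F (Ici lam) := by
      apply monotoneOn_of_deriv_nonneg (convex_Ici lam) hcont.continuousOn
        (hdiff.differentiableOn)
      intro x hx
      rw [interior_Ici] at hx
      rw [hderiv]
      have hxk : lam ^ k ≤ x ^ k := pow_le_pow_left₀ hlam.le (le_of_lt hx) k
      have h3 : 0 ≤ x ^ k / k.factorial - c := by
        rw [hc]
        have := (div_le_div_iff_of_pos_right hfac).mpr hxk
        linarith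
      nlinarith [Real.exp_pos (-x)]
    exact hmono (Set.mem_Ici.mpr (le_refl lam)) (Set.mem_Ici.mpr h) h

lemma pointwise (k : ℕ) {lam : ℝ} (hlam : 0 < lam) {t : ℝ} (ht : 0 < t) :
    (1 - Real.exp (-lam) * pk k lam)
      + (lam ^ k / k.factorial) * (Real.exp (-lam) - Real.exp (-t))
      ≤ 1 - Real.exp (-t) * pk k t := by
  have := F_min k hlam ht
  nlinarith [this]

section Meas

variable {μ : Measure ℝ}

lemma ae_pos (hμ : μ (Ioi 0)ᶜ = 0) : ∀ᵐ t ∂μ, 0 < t := by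
  have h : ∀ᵐ t ∂μ, t ∈ Ioi 0 := MeasureTheory.mem_ae_iff.mpr hμ
  filter_upwards [h] with t ht
  exact ht

lemma int_exp [IsProbabilityMeasure μ] (hμ : μ (Ioi 0)ᶜ = 0) : Integrable (fun t => Real.exp (-t)) μ := by
  apply Integrable.mono' (integrable_const (1:ℝ))
    (Real.continuous_exp.comp continuous_neg).aestronglyMeasurable
  filter_upwards [ae_pos hμ] with t ht
  simp only [Function.comp_apply, Real.norm_eq_abs]
  rw [abs_of_pos (Real.exp_pos _)]
  exact Real.exp_le_one_iff.mpr (by linarith)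

lemma g_nonneg (x : ℕ) {t : ℝ} (ht : 0 ≤ t) : 0 ≤ t ^ x * Real.exp (-t) / x.factorial := by
  positivity

lemma g_le_one (x : ℕ) {t : ℝ} (ht : 0 ≤ t) : t ^ x * Real.exp (-t) / x.factorial ≤ 1 := by
  have h1 : t ^ x / x.factorial ≤ Real.exp t := pow_div_le_exp x ht
  have h2 : (0:ℝ) < Real.exp (-t) := Real.exp_pos _
  have h3 : Real.exp (-t) * Real.exp t = 1 := by
    rw [Real.exp_neg]; exact inv_mul_cancel₀ (Real.exp_ne_zero t)
  calc t ^ x * Real.exp (-t) / x.factorial = (t ^ x / x.factorial) * Real.exp (-t) := by ring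
    _ ≤ Real.exp t * Real.exp (-t) := by
        exact mul_le_mul_of_nonneg_right h1 h2.le
    _ = 1 := by rw [mul_comm]; exact h3

lemma cont_g (x : ℕ) : Continuous (fun t : ℝ => t ^ x * Real.exp (-t) / x.factorial) :=
  ((continuous_pow x).mul (Real.continuous_exp.comp continuous_neg)).div_const _

lemma int_g [IsProbabilityMeasure μ] (hμ : μ (Ioi 0)ᶜ = 0) (x : ℕ) : Integrable (fun t => t ^ x * Real.exp (-t) / x.factorial) μ := by
  apply Integrable.mono' (integrable_const (1:ℝ)) (cont_g x).aestronglyMeasurable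
  filter_upwards [ae_pos hμ] with t ht
  rw [Real.norm_eq_abs, abs_of_nonneg (g_nonneg x ht.le)]
  exact g_le_one x ht.le

lemma swap [IsProbabilityMeasure μ] (hμ : μ (Ioi 0)ᶜ = 0) (k : ℕ) :
    (∑' x : ℕ, if k < x then ∫ t, t ^ x * Real.exp (-t) / x.factorial ∂μ else 0)
      = ∫ t, (∑' x : ℕ, if k < x then t ^ x * Real.exp (-t) / x.factorial else 0) ∂μ := by
  set f : ℕ → ℝ → ℝ := fun x t => if k < x then t ^ x * Real.exp (-t) / x.factorial else 0
    with hfdef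
  have hmeas : ∀ x : ℕ, AEStronglyMeasurable (f x) μ := by
    intro x
    by_cases h : k < x
    · simpa [hfdef, h] using (cont_g x).aestronglyMeasurable
    · simpa [hfdef, h] using aestronglyMeasurable_const (b := (0:ℝ))
  have hbound : ∑' x : ℕ, ∫⁻ t, ‖f x t‖₊ ∂μ ≠ ⊤ := by
    rw [← MeasureTheory.lintegral_tsum (fun x => (hmeas x).aemeasurable.nnnorm.coe_nnreal_ennreal)]
    have hle : ∫⁻ t, (∑' x : ℕ, (‖f x t‖₊ : ENNReal)) ∂μ ≤ ∫⁻ _, 1 ∂μ := by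
      apply lintegral_mono_ae
      filter_upwards [ae_pos hμ] with t ht
      have hnn : ∀ x : ℕ, 0 ≤ f x t := by
        intro x; by_cases h : k < x <;> simp [hfdef, h, g_nonneg x ht.le]
      have hsum : Summable (fun x => f x t) := by
        apply (summable_g t).of_nonneg_of_le hnn
        intro x; by_cases h : k < x <;> simp [hfdef, h, g_nonneg x ht.le]
      have heq : ∀ x : ℕ, (‖f x t‖₊ : ENNReal) = ENNReal.ofReal (f x t) := by
        intro x
        exact Real.enorm_eq_ofReal (hnn x)
      simp_rw [heq]
      rw [← ENNReal.ofReal_tsum_of_nonneg hnn hsum]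
      have hle1 : ∑' x : ℕ, f x t ≤ 1 := by
        rw [hfdef]
        rw [tail_eq k t]
        have := pk_nonneg k ht.le
        nlinarith [Real.exp_pos (-t), pk_nonneg k ht.le]
      exact le_trans (ENNReal.ofReal_le_ofReal hle1) (by simp)
    rw [MeasureTheory.lintegral_one, measure_univ] at hle
    exact ne_top_of_le_ne_top (by simp) hle
  rw [MeasureTheory.integral_tsum hmeas hbound]
  apply tsum_congr
  intro x
  by_cases h : k < x <;> simp [hfdef, h]

end Meas

/-- Example 1, "st" part: let `X ~ Poisson(λ)`, `λ > 0`, and let `Y` be a mixture of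
`Poisson(t)` distributions with respect to a probability measure `μ` on `(0, ∞)`.
Then `X ≤_st Y` iff `∫ e^{−t} dμ(t) ≤ e^{−λ}`. -/
theorem stmt_10 (lam : ℝ) (hlam : 0 < lam)
    (μ : Measure ℝ) [IsProbabilityMeasure μ] (hμ : μ (Ioi 0)ᶜ = 0) :
    (∀ k : ℕ,
        (∑' x : ℕ, if k < x then lam ^ x * Real.exp (-lam) / x.factorial else 0) ≤
        ∑' x : ℕ, if k < x then ∫ t, t ^ x * Real.exp (-t) / x.factorial ∂μ else 0) ↔
      ∫ t, Real.exp (-t) ∂μ ≤ Real.exp (-lam) := by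
  have hI : Integrable (fun t => Real.exp (-t)) μ := int_exp hμ
  constructor
  · intro h
    have h0 := h 0
    rw [swap hμ 0, tail_eq 0 lam] at h0
    have hfun : (fun t : ℝ => ∑' x : ℕ, if 0 < x then t ^ x * Real.exp (-t) / x.factorial else 0)
        = fun t => 1 - Real.exp (-t) := by
      funext t
      rw [tail_eq 0 t]
      simp [pk]
    rw [hfun] at h0
    rw [integral_sub (integrable_const 1) hI, integral_const, probReal_univ] at h0
    have hpk1 : pk 0 lam = 1 := by simp [pk]
    rw [hpk1] at h0
    simp only [ENNReal.toReal_one, one_smul, mul_one] at h0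
    linarith
  · intro hle k
    rw [swap hμ k, tail_eq k lam]
    have hfun : (fun t : ℝ => ∑' x : ℕ, if k < x then t ^ x * Real.exp (-t) / x.factorial else 0)
        = fun t => 1 - Real.exp (-t) * pk k t := funext fun t => tail_eq k t
    rw [hfun]
    set c : ℝ := lam ^ k / k.factorial with hc
    have hc0 : 0 ≤ c := by positivity
    have hInt1 : Integrable
        (fun t => (1 - Real.exp (-lam) * pk k lam + c * Real.exp (-lam)) - c * Real.exp (-t)) μ :=
      (integrable_const _).sub (hI.const_mul c)
    have hInt2 : Integrable (fun t => 1 - Real.exp (-t) * pk k t) μ := by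
      apply Integrable.mono' (integrable_const (1:ℝ))
        (continuous_const.sub
          ((Real.continuous_exp.comp continuous_neg).mul (cont_pk k))).aestronglyMeasurable
      filter_upwards [ae_pos hμ] with t ht
      simp only [Pi.sub_apply, Pi.mul_apply, Function.comp_apply]
      have h1 : pk k t ≤ Real.exp t := pk_le_exp k ht.le
      have h2 : 0 ≤ pk k t := pk_nonneg k ht.le
      have h3 : Real.exp (-t) * Real.exp t = 1 := by
        rw [Real.exp_neg]; exact inv_mul_cancel₀ (Real.exp_ne_zero t)
      have h4 : 0 < Real.exp (-t) := Real.exp_pos _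
      rw [Real.norm_eq_abs, abs_of_nonneg (by nlinarith)]
      nlinarith
    have hptwise : ∀ᵐ t ∂μ,
        (1 - Real.exp (-lam) * pk k lam + c * Real.exp (-lam)) - c * Real.exp (-t)
          ≤ 1 - Real.exp (-t) * pk k t := by
      filter_upwards [ae_pos hμ] with t ht
      have := pointwise k hlam ht
      rw [← hc] at this
      linarith
    have hmono := integral_mono_ae hInt1 hInt2 hptwise
    rw [integral_sub (integrable_const _) (hI.const_mul c), integral_const, probReal_univ,
      integral_const_mul] at hmono
    simp only [one_smul, ENNReal.toReal_one] at hmono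
    have : c * ∫ t, Real.exp (-t) ∂μ ≤ c * Real.exp (-lam) :=
      mul_le_mul_of_nonneg_left hle hc0
    linarith
end

section
/- Let X ~ Poisson(λ) with λ > 0 and let Y be a mixture of Poisson(t) distributions with respect to a probability measure μ on (0,∞). Then X ≤_lr Y (i.e., Pr(X=x)/Pr(Y=x) is nonincreasing in x) if and only if λ ≤ (∫ t e^{−t} dμ(t)) / (∫ e^{−t} dμ(t)). -/
open MeasureTheory Set

private lemma ae_pos_of_compl (μ : Measure ℝ) (hμ : μ (Ioi 0)ᶜ = 0) :
    ∀ᵐ t ∂μ, 0 < t := by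
  rw [ae_iff]
  convert hμ using 2
  ext t; simp

private lemma int_aux (μ : Measure ℝ) [IsProbabilityMeasure μ] (hμ : μ (Ioi 0)ᶜ = 0)
    (x : ℕ) : Integrable (fun t : ℝ => t ^ x * Real.exp (-t)) μ := by
  refine Integrable.mono' (integrable_const ((x.factorial : ℝ))) ?_ ?_
  · exact (Continuous.mul (continuous_pow x) (Real.continuous_exp.comp continuous_neg)).aestronglyMeasurable
  · filter_upwards [ae_pos_of_compl μ hμ] with t ht
    have h1 : 0 ≤ t ^ x * Real.exp (-t) :=
      mul_nonneg (pow_nonneg ht.le x) (Real.exp_pos _).le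
    rw [Real.norm_eq_abs, abs_of_nonneg h1]
    have h2 : t ^ x / x.factorial ≤ Real.exp t := Real.pow_div_factorial_le_exp (hx := ht.le) (n := x)
    have h3 : (0:ℝ) < x.factorial := by exact_mod_cast x.factorial_pos
    have h4 : t ^ x ≤ x.factorial * Real.exp t := by
      rw [div_le_iff₀ h3] at h2; linarith [h2]
    calc t ^ x * Real.exp (-t) ≤ (x.factorial * Real.exp t) * Real.exp (-t) :=
          mul_le_mul_of_nonneg_right h4 (Real.exp_pos _).le
      _ = x.factorial := by rw [mul_assoc, ← Real.exp_add]; simp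

private lemma pos_aux (μ : Measure ℝ) [IsProbabilityMeasure μ] (hμ : μ (Ioi 0)ᶜ = 0)
    (x : ℕ) : 0 < ∫ t, t ^ x * Real.exp (-t) ∂μ := by
  have hae := ae_pos_of_compl μ hμ
  have hnn : 0 ≤ᵐ[μ] fun t : ℝ => t ^ x * Real.exp (-t) := by
    filter_upwards [hae] with t ht
    exact mul_nonneg (pow_nonneg ht.le x) (Real.exp_pos _).le
  rw [integral_pos_iff_support_of_nonneg_ae hnn (int_aux μ hμ x)]
  have hsub : Ioi (0:ℝ) ⊆ Function.support fun t : ℝ => t ^ x * Real.exp (-t) := by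
    intro t ht
    exact ne_of_gt (mul_pos (pow_pos ht x) (Real.exp_pos _))
  have h1 : μ (Ioi (0:ℝ)) = 1 := by
    have := measure_add_measure_compl (μ := μ) (measurableSet_Ioi (a := (0:ℝ)))
    rw [hμ, add_zero] at this
    simp [this]
  calc (0:ENNReal) < 1 := by norm_num
    _ = μ (Ioi 0) := h1.symm
    _ ≤ μ (Function.support fun t : ℝ => t ^ x * Real.exp (-t)) := measure_mono hsub

private lemma key_aux (lam : ℝ) (hlam : 0 < lam)
    (μ : Measure ℝ) [IsProbabilityMeasure μ] (hμ : μ (Ioi 0)ᶜ = 0)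
    (h0 : lam * ∫ t, t ^ 0 * Real.exp (-t) ∂μ ≤ ∫ t, t ^ 1 * Real.exp (-t) ∂μ)
    (x : ℕ) :
    lam * ∫ t, t ^ x * Real.exp (-t) ∂μ ≤ ∫ t, t ^ (x + 1) * Real.exp (-t) ∂μ := by
  set F : ℝ → ℝ := fun t => (t ^ x - lam ^ x) * (t - lam) * Real.exp (-t) with hF
  have h1 := int_aux μ hμ (x + 1)
  have h2 := (int_aux μ hμ x).const_mul lam
  have h3 := (int_aux μ hμ 1).const_mul (lam ^ x)
  have h4 := (int_aux μ hμ 0).const_mul (lam ^ (x + 1))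
  have hFeq : F = fun t => (t ^ (x+1) * Real.exp (-t) - lam * (t ^ x * Real.exp (-t))
      - lam ^ x * (t ^ 1 * Real.exp (-t))) + lam ^ (x+1) * (t ^ 0 * Real.exp (-t)) := by
    funext t; simp only [hF, pow_succ, pow_one, pow_zero]; ring
  have hFint : ∫ t, F t ∂μ = (∫ t, t ^ (x+1) * Real.exp (-t) ∂μ)
      - lam * (∫ t, t ^ x * Real.exp (-t) ∂μ)
      - lam ^ x * (∫ t, t ^ 1 * Real.exp (-t) ∂μ)
      + lam ^ (x+1) * (∫ t, t ^ 0 * Real.exp (-t) ∂μ) := by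
    have hA : Integrable (fun t : ℝ => t ^ (x+1) * Real.exp (-t)
        - lam * (t ^ x * Real.exp (-t))) μ := h1.sub h2
    have hB : Integrable (fun t : ℝ => t ^ (x+1) * Real.exp (-t)
        - lam * (t ^ x * Real.exp (-t)) - lam ^ x * (t ^ 1 * Real.exp (-t))) μ := hA.sub h3
    rw [hFeq, integral_add hB h4, integral_sub hA h3,
      integral_sub h1 h2, integral_const_mul, integral_const_mul, integral_const_mul]
  have hFnn : 0 ≤ ∫ t, F t ∂μ := by
    refine integral_nonneg_of_ae ?_
    filter_upwards [ae_pos_of_compl μ hμ] with t ht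
    have : 0 ≤ (t ^ x - lam ^ x) * (t - lam) := by
      rcases le_total t lam with h | h
      · have ha := sub_nonpos.2 (pow_le_pow_left₀ ht.le h x)
        have hb := sub_nonpos.2 h
        nlinarith
      · exact mul_nonneg (sub_nonneg.2 (pow_le_pow_left₀ hlam.le h x)) (sub_nonneg.2 h)
    exact mul_nonneg this (Real.exp_pos _).le
  simp only [pow_succ, pow_zero, one_mul] at hFint h0 ⊢
  nlinarith [hFnn, hFint, mul_le_mul_of_nonneg_left h0 (pow_pos hlam x).le]

/-- Example 1, "lr" part: let `X ~ Poisson(λ)`, `λ > 0`, and let `Y` be a mixture of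
`Poisson(t)` distributions with respect to a probability measure `μ` on `(0, ∞)`.
Then `X ≤_lr Y` (the pmf ratio is nonincreasing in `x`) iff
`λ ≤ (∫ t e^{−t} dμ(t)) / (∫ e^{−t} dμ(t))`. -/
theorem stmt_11 (lam : ℝ) (hlam : 0 < lam)
    (μ : Measure ℝ) [IsProbabilityMeasure μ] (hμ : μ (Ioi 0)ᶜ = 0) :
    Antitone (fun x : ℕ =>
        (lam ^ x * Real.exp (-lam) / x.factorial) /
          ∫ t, t ^ x * Real.exp (-t) / x.factorial ∂μ) ↔
      lam ≤ (∫ t, t * Real.exp (-t) ∂μ) / ∫ t, Real.exp (-t) ∂μ := by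
  have hm := pos_aux μ hμ
  have hm0 : (∫ t, Real.exp (-t) ∂μ) = ∫ t, t ^ 0 * Real.exp (-t) ∂μ := by
    simp
  have hm1 : (∫ t, t * Real.exp (-t) ∂μ) = ∫ t, t ^ 1 * Real.exp (-t) ∂μ := by
    simp
  have hsimp : ∀ x : ℕ, (lam ^ x * Real.exp (-lam) / x.factorial) /
      ∫ t, t ^ x * Real.exp (-t) / x.factorial ∂μ
      = lam ^ x * Real.exp (-lam) / ∫ t, t ^ x * Real.exp (-t) ∂μ := by
    intro x
    have hfac : ((x.factorial : ℝ)) ≠ 0 := by positivity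
    have hmne := (hm x).ne'
    rw [show (fun t : ℝ => t ^ x * Real.exp (-t) / x.factorial)
        = fun t : ℝ => (t ^ x * Real.exp (-t)) / x.factorial from rfl, integral_div]
    field_simp
  constructor
  · intro h
    have h01 := h (show (0:ℕ) ≤ 1 by norm_num)
    simp only [hsimp] at h01
    rw [hm0, hm1, le_div_iff₀ (hm 0)]
    have := (div_le_div_iff₀ (hm 1) (hm 0)).1 h01
    have he := Real.exp_pos (-lam)
    nlinarith [this]
  · intro h
    rw [hm0, hm1, le_div_iff₀ (hm 0)] at h
    refine antitone_nat_of_succ_le fun x => ?_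
    simp only [hsimp]
    rw [div_le_div_iff₀ (hm (x+1)) (hm x)]
    have hk := key_aux lam hlam μ hμ (by linarith) x
    have he := Real.exp_pos (-lam)
    have hp := pow_pos hlam x
    have hmx := hm x
    rw [pow_succ]
    nlinarith [mul_le_mul_of_nonneg_left hk (mul_pos hp he).le]
end

section
/- Let X ~ Binomial(n, p) with p ∈ (0,1) and let Y be a mixture of Binomial(n, t) distributions with respect to a probability measure μ on t ∈ (0,1). Then X ≤_st Y if and only if ∫ (1−t)^n dμ(t) ≤ (1−p)^n. -/
open MeasureTheory Set

lemma tel12 (f : ℕ → ℝ) (k n : ℕ) (h : k ≤ n) :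
    ∑ x ∈ Finset.Ioc k n, (f (x - 1) - f x) = f k - f n := by
  induction n, h using Nat.le_induction with
  | base => simp
  | succ n hkn ih =>
    rw [Finset.sum_Ioc_succ_top (by omega), ih]
    simp

lemma sumbinom12 (n : ℕ) (t : ℝ) :
    ∑ x ∈ Finset.Ioc 0 n, (n.choose x : ℝ) * t ^ x * (1 - t) ^ (n - x) = 1 - (1 - t) ^ n := by
  have h := add_pow t (1 - t) n
  simp only [add_sub_cancel, one_pow] at h
  have hins : Finset.range (n + 1) = insert 0 (Finset.Ioc 0 n) := by
    ext y; simp [Finset.mem_range, Finset.mem_Ioc]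
  rw [hins, Finset.sum_insert (by simp)] at h
  simp at h
  have : ∑ x ∈ Finset.Ioc 0 n, (n.choose x : ℝ) * t ^ x * (1 - t) ^ (n - x)
      = ∑ x ∈ Finset.Ioc 0 n, t ^ x * (1 - t) ^ (n - x) * (n.choose x : ℝ) := by
    apply Finset.sum_congr rfl; intros; ring
  rw [this]; linarith

lemma hderiv12 (n k : ℕ) (hk : k < n) (t : ℝ) :
    HasDerivAt (fun s : ℝ => ∑ x ∈ Finset.Ioc k n, (n.choose x : ℝ) * s ^ x * (1 - s) ^ (n - x))
      ((n : ℝ) * ((n - 1).choose k : ℝ) * t ^ k * (1 - t) ^ (n - 1 - k)) t := by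
  set b : ℕ → ℝ := fun j => ((n - 1).choose j : ℝ) * t ^ j * (1 - t) ^ (n - 1 - j) with hb
  have key : ∀ x ∈ Finset.Ioc k n,
      HasDerivAt (fun s : ℝ => (n.choose x : ℝ) * s ^ x * (1 - s) ^ (n - x))
        ((n : ℝ) * (b (x - 1) - b x)) t := by
    intro x hx
    rw [Finset.mem_Ioc] at hx
    have hx1 : 1 ≤ x := by omega
    have h1 : HasDerivAt (fun s : ℝ => s ^ x) ((x : ℝ) * t ^ (x - 1)) t := hasDerivAt_pow x t
    have h2 : HasDerivAt (fun s : ℝ => (1 - s) ^ (n - x))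
        (((n - x : ℕ) : ℝ) * (1 - t) ^ (n - x - 1) * (-1)) t :=
      (hasDerivAt_pow (n - x) (1 - t)).comp t ((hasDerivAt_id t).const_sub 1)
    have h3 := (h1.mul h2).const_mul ((n.choose x : ℝ))
    have hfun : (fun s : ℝ => (n.choose x : ℝ) * s ^ x * (1 - s) ^ (n - x))
        = fun s : ℝ => (n.choose x : ℝ) * (s ^ x * (1 - s) ^ (n - x)) := by
      funext s; ring
    rw [hfun]
    convert h3 using 1
    · rfl
    · rfl
    · rfl
    have e1 : (n.choose x : ℝ) * x = (n : ℝ) * ((n - 1).choose (x - 1)) := by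
      have h5 := Nat.add_one_mul_choose_eq (n - 1) (x - 1)
      simp only [Nat.succ_eq_add_one, show n - 1 + 1 = n by omega,
        show x - 1 + 1 = x by omega] at h5
      exact_mod_cast h5.symm
    have e2 : (n.choose x : ℝ) * ((n - x : ℕ) : ℝ) = (n : ℝ) * ((n - 1).choose x) := by
      have h4 : n.choose x * (n - x) = n.choose (x + 1) * (x + 1) := (Nat.choose_succ_right_eq n x).symm
      have h5 := Nat.add_one_mul_choose_eq (n - 1) x
      simp only [Nat.succ_eq_add_one, show n - 1 + 1 = n by omega] at h5
      exact_mod_cast h4.trans h5.symm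
    have ex1 : n - 1 - (x - 1) = n - x := by omega
    have ex2 : n - 1 - x = n - x - 1 := by omega
    simp only [hb, ex1, ex2]
    linear_combination (t ^ x * (1 - t) ^ (n - x - 1)) * e2 - (t ^ (x - 1) * (1 - t) ^ (n - x)) * e1
  have hsum := HasDerivAt.sum key
  have htel : ∑ x ∈ Finset.Ioc k n, (n : ℝ) * (b (x - 1) - b x) = (n : ℝ) * (b k - b n) := by
    rw [← Finset.mul_sum, tel12 b k n (le_of_lt hk)]
  have hbn : b n = 0 := by
    simp [hb, Nat.choose_eq_zero_of_lt (show n - 1 < n by omega)]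
  rw [htel, hbn] at hsum
  convert hsum using 1
  · rfl
  · rfl
  · ext s; rw [Finset.sum_apply]
  rw [hb]; ring

lemma keyineq12 (n k : ℕ) (hk : k < n) (t q : ℝ) (ht0 : 0 ≤ t) (ht1 : t ≤ 1)
    (hq0 : 0 < q) (hq1 : q < 1) (h : t * (1 - q) ≤ q * (1 - t)) :
    (n : ℝ) * ((n - 1).choose k) * t ^ k * (1 - t) ^ (n - 1 - k) ≤
      ((n - 1).choose k : ℝ) * (q / (1 - q)) ^ k * ((n : ℝ) * (1 - t) ^ (n - 1)) := by
  have hsplit : (1 - t) ^ (n - 1) = (1 - t) ^ k * (1 - t) ^ (n - 1 - k) := by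
    rw [← pow_add]; congr 1; omega
  have hppos : (0:ℝ) < (1 - q) ^ k := pow_pos (by linarith) k
  have hmul : t ^ k * (1 - q) ^ k ≤ q ^ k * (1 - t) ^ k := by
    rw [← mul_pow, ← mul_pow]
    exact pow_le_pow_left₀ (mul_nonneg ht0 (by linarith)) h k
  have hu : (0:ℝ) ≤ (1 - t) ^ (n - 1 - k) := pow_nonneg (by linarith) _
  have hNC : (0:ℝ) ≤ (n : ℝ) * ((n - 1).choose k) := by positivity
  rw [hsplit, div_pow,
    show ((n - 1).choose k : ℝ) * (q ^ k / (1 - q) ^ k) * ((n : ℝ) * ((1 - t) ^ k * (1 - t) ^ (n - 1 - k)))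
      = (((n - 1).choose k : ℝ) * q ^ k * ((n : ℝ) * ((1 - t) ^ k * (1 - t) ^ (n - 1 - k)))) / (1 - q) ^ k
      from by ring, le_div_iff₀ hppos]
  nlinarith [mul_le_mul_of_nonneg_left (mul_le_mul_of_nonneg_right hmul hu) hNC]

lemma keyineq12' (n k : ℕ) (hk : k < n) (t q : ℝ) (ht0 : 0 ≤ t) (ht1 : t ≤ 1)
    (hq0 : 0 < q) (hq1 : q < 1) (h : q * (1 - t) ≤ t * (1 - q)) :
    ((n - 1).choose k : ℝ) * (q / (1 - q)) ^ k * ((n : ℝ) * (1 - t) ^ (n - 1)) ≤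
      (n : ℝ) * ((n - 1).choose k) * t ^ k * (1 - t) ^ (n - 1 - k) := by
  have hsplit : (1 - t) ^ (n - 1) = (1 - t) ^ k * (1 - t) ^ (n - 1 - k) := by
    rw [← pow_add]; congr 1; omega
  have hppos : (0:ℝ) < (1 - q) ^ k := pow_pos (by linarith) k
  have hmul : q ^ k * (1 - t) ^ k ≤ t ^ k * (1 - q) ^ k := by
    rw [← mul_pow, ← mul_pow]
    exact pow_le_pow_left₀ (mul_nonneg hq0.le (by linarith)) h k
  have hu : (0:ℝ) ≤ (1 - t) ^ (n - 1 - k) := pow_nonneg (by linarith) _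
  have hNC : (0:ℝ) ≤ (n : ℝ) * ((n - 1).choose k) := by positivity
  rw [hsplit, div_pow,
    show ((n - 1).choose k : ℝ) * (q ^ k / (1 - q) ^ k) * ((n : ℝ) * ((1 - t) ^ k * (1 - t) ^ (n - 1 - k)))
      = (((n - 1).choose k : ℝ) * q ^ k * ((n : ℝ) * ((1 - t) ^ k * (1 - t) ^ (n - 1 - k)))) / (1 - q) ^ k
      from by ring, div_le_iff₀ hppos]
  nlinarith [mul_le_mul_of_nonneg_left (mul_le_mul_of_nonneg_right hmul hu) hNC]


/-- Example 2, "st" part: let `X ~ Binomial(n, p)`, `p ∈ (0,1)`, and let `Y` be a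
mixture of `Binomial(n, t)` distributions with respect to a probability measure `μ`
on `(0, 1)`. Then `X ≤_st Y` iff `∫ (1−t)^n dμ(t) ≤ (1−p)^n`. -/
theorem stmt_12 (n : ℕ) (hn : 0 < n) (p : ℝ) (hp : p ∈ Ioo (0 : ℝ) 1)
    (μ : Measure ℝ) [IsProbabilityMeasure μ] (hμ : μ (Ioo (0 : ℝ) 1)ᶜ = 0) :
    (∀ k : ℕ,
        ∑ x ∈ Finset.Ioc k n, (n.choose x : ℝ) * p ^ x * (1 - p) ^ (n - x) ≤
        ∑ x ∈ Finset.Ioc k n, ∫ t, (n.choose x : ℝ) * t ^ x * (1 - t) ^ (n - x) ∂μ) ↔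
      ∫ t, (1 - t) ^ n ∂μ ≤ (1 - p) ^ n := by
  obtain ⟨hp0, hp1⟩ := hp
  have hae : ∀ᵐ t ∂μ, t ∈ Ioo (0:ℝ) 1 := by
    rw [ae_iff]; exact hμ
  have hint : ∀ x : ℕ,
      Integrable (fun t : ℝ => (n.choose x : ℝ) * t ^ x * (1 - t) ^ (n - x)) μ := by
    intro x
    apply (integrable_const ((n.choose x : ℝ))).mono'
    · exact Continuous.aestronglyMeasurable (by continuity)
    · filter_upwards [hae] with t ht
      obtain ⟨ht0, ht1⟩ := ht
      have h2 : (0:ℝ) ≤ 1 - t := by linarith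
      rw [Real.norm_eq_abs, abs_of_nonneg (mul_nonneg (mul_nonneg (Nat.cast_nonneg _)
        (pow_nonneg ht0.le _)) (pow_nonneg h2 _))]
      have e1 : t ^ x ≤ 1 := pow_le_one₀ ht0.le ht1.le
      have e2 : (1 - t) ^ (n - x) ≤ 1 := pow_le_one₀ h2 (by linarith)
      have e3 : (0:ℝ) ≤ t ^ x := pow_nonneg ht0.le _
      have e4 : (0:ℝ) ≤ (1 - t) ^ (n - x) := pow_nonneg h2 _
      have e5 : (0:ℝ) ≤ (n.choose x : ℝ) := Nat.cast_nonneg _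
      calc (n.choose x : ℝ) * t ^ x * (1 - t) ^ (n - x)
          ≤ (n.choose x : ℝ) * 1 * 1 :=
            mul_le_mul (mul_le_mul_of_nonneg_left e1 e5) e2 e4
              (by rw [mul_one]; exact e5)
        _ = (n.choose x : ℝ) := by ring
  have hintn : Integrable (fun t : ℝ => (1 - t) ^ n) μ := by
    apply (integrable_const (1:ℝ)).mono'
    · exact Continuous.aestronglyMeasurable (by continuity)
    · filter_upwards [hae] with t ht
      obtain ⟨ht0, ht1⟩ := ht
      have h2 : (0:ℝ) ≤ 1 - t := by linarith
      rw [Real.norm_eq_abs, abs_of_nonneg (pow_nonneg h2 _)]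
      exact pow_le_one₀ h2 (by linarith)
  have hswap : ∀ k : ℕ,
      ∑ x ∈ Finset.Ioc k n, ∫ t, (n.choose x : ℝ) * t ^ x * (1 - t) ^ (n - x) ∂μ
        = ∫ t, ∑ x ∈ Finset.Ioc k n, (n.choose x : ℝ) * t ^ x * (1 - t) ^ (n - x) ∂μ :=
    fun k => (integral_finset_sum _ (fun x _ => hint x)).symm
  constructor
  · intro h
    have h0 := h 0
    rw [hswap 0] at h0
    simp only [sumbinom12] at h0
    rw [integral_sub (integrable_const 1) hintn, integral_const, probReal_univ] at h0
    simp only [ENNReal.toReal_one, smul_eq_mul, one_mul] at h0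
    linarith
  · intro hle k
    rcases le_or_gt n k with hnk | hkn
    · rw [Finset.Ioc_eq_empty (not_lt.mpr hnk)]
      simp
    · set A : ℝ := ((n - 1).choose k : ℝ) * (p / (1 - p)) ^ k with hA
      have hA0 : 0 ≤ A :=
        mul_nonneg (Nat.cast_nonneg _) (pow_nonneg (div_nonneg hp0.le (by linarith)) k)
      set φ : ℝ → ℝ := fun t => ∑ x ∈ Finset.Ioc k n, (n.choose x : ℝ) * t ^ x * (1 - t) ^ (n - x)
        with hφ
      set H : ℝ → ℝ := fun t => φ t + A * (1 - t) ^ n with hH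
      have hHd : ∀ t : ℝ, HasDerivAt H
          ((n : ℝ) * ((n - 1).choose k) * t ^ k * (1 - t) ^ (n - 1 - k)
            - A * ((n : ℝ) * (1 - t) ^ (n - 1))) t := by
        intro t
        have h1 := hderiv12 n k hkn t
        have h2 : HasDerivAt (fun s : ℝ => A * (1 - s) ^ n)
            (A * ((n : ℝ) * (1 - t) ^ (n - 1) * (-1))) t :=
          (((hasDerivAt_pow n (1 - t)).comp t ((hasDerivAt_id t).const_sub 1))).const_mul A
        convert h1.add h2 using 1
        · rfl
        · rfl
        · rfl
        ring
      have hHdiff : Differentiable ℝ H := fun t => (hHd t).differentiableAt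
      have hkey : ∀ t ∈ Icc (0:ℝ) 1, H p ≤ H t := by
        have hmono1 : AntitoneOn H (Icc 0 p) := by
          apply antitoneOn_of_deriv_nonpos (convex_Icc 0 p) hHdiff.continuous.continuousOn
            (hHdiff.differentiableOn)
          intro t ht
          rw [interior_Icc] at ht
          rw [(hHd t).deriv, sub_nonpos, hA]
          exact keyineq12 n k hkn t p ht.1.le (by linarith [ht.2]) hp0 hp1 (by nlinarith [ht.2])
        have hmono2 : MonotoneOn H (Icc p 1) := by
          apply monotoneOn_of_deriv_nonneg (convex_Icc p 1) hHdiff.continuous.continuousOn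
            (hHdiff.differentiableOn)
          intro t ht
          rw [interior_Icc] at ht
          rw [(hHd t).deriv, sub_nonneg, hA]
          exact keyineq12' n k hkn t p (by linarith [ht.1]) ht.2.le hp0 hp1 (by nlinarith [ht.1])
        intro t ht
        rcases le_total t p with h' | h'
        · exact hmono1 ⟨ht.1, h'⟩ ⟨hp0.le, le_refl p⟩ h'
        · exact hmono2 ⟨le_refl p, hp1.le⟩ ⟨h', ht.2⟩ h'
      rw [hswap k]
      have hφint : Integrable φ μ := integrable_finset_sum _ (fun x _ => hint x)
      have h1 : ∫ t, (H p - A * (1 - t) ^ n) ∂μ ≤ ∫ t, φ t ∂μ := by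
        apply integral_mono_ae ((integrable_const (H p)).sub (hintn.const_mul A)) hφint
        filter_upwards [hae] with t ht
        have h2 := hkey t ⟨ht.1.le, ht.2.le⟩
        simp only [hH, Pi.sub_apply] at h2 ⊢
        linarith
      have h2 : ∫ t, (H p - A * (1 - t) ^ n) ∂μ = H p - A * ∫ t, (1 - t) ^ n ∂μ := by
        rw [integral_sub (integrable_const _) (hintn.const_mul A), integral_const, probReal_univ,
          integral_const_mul]
        simp
      have h3 : H p - A * (1 - p) ^ n ≤ H p - A * ∫ t, (1 - t) ^ n ∂μ := by
        nlinarith [mul_le_mul_of_nonneg_left hle hA0]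
      have h4 : H p - A * (1 - p) ^ n = φ p := by simp [hH]
      show φ p ≤ ∫ t, φ t ∂μ
      rw [← h4]
      linarith
end

section
/- Let X ~ NegativeBinomial(k, p) with k > 0, p ∈ (0,1), and let Y be a mixture of NB(k, t) distributions with respect to a probability measure μ on t ∈ (0,1). Then X ≤_st Y if and only if ∫ t^k dμ(t) ≤ p^k, and X ≤_lr Y if and only if p ≥ (∫ t^{k+1} dμ(t)) / (∫ t^k dμ(t)). -/
open MeasureTheory Set
open scoped ENNReal NNReal

/-- The pmf of the negative binomial distribution `NB(k, p)` at `x`, where `k > 0`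
need not be an integer: `Γ(k+x)/(Γ(k) x!) pᵏ (1−p)ˣ`. -/
noncomputable def nbPMF (k p : ℝ) (x : ℕ) : ℝ :=
  Real.Gamma (k + x) / (Real.Gamma k * x.factorial) * p ^ k * (1 - p) ^ x


noncomputable def nbC (k : ℝ) (x : ℕ) : ℝ := Real.Gamma (k + x) / (Real.Gamma k * x.factorial)

lemma nbC_pos {k : ℝ} (hk : 0 < k) (x : ℕ) : 0 < nbC k x := by
  apply div_pos
  · exact Real.Gamma_pos_of_pos (by positivity)
  · exact mul_pos (Real.Gamma_pos_of_pos hk) (by positivity)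

lemma nbC_zero {k : ℝ} (hk : 0 < k) : nbC k 0 = 1 := by
  simp [nbC, Real.Gamma_pos_of_pos hk, (Real.Gamma_pos_of_pos hk).ne']

lemma nbC_succ {k : ℝ} (hk : 0 < k) (x : ℕ) :
    nbC k (x + 1) * (x + 1) = nbC k x * (k + x) := by
  have h1 : (k + (x:ℝ) + 1) = k + ((x:ℕ)+1 : ℕ) := by push_cast; ring
  have h2 : Real.Gamma (k + ((x:ℕ)+1 : ℕ)) = (k + x) * Real.Gamma (k + x) := by
    rw [← h1, Real.Gamma_add_one (by positivity)]
  have hΓ : Real.Gamma k ≠ 0 := (Real.Gamma_pos_of_pos hk).ne'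
  have hfac : ((x+1).factorial : ℝ) = (x+1) * x.factorial := by
    rw [Nat.factorial_succ]; push_cast; ring
  have hfx : (x.factorial : ℝ) ≠ 0 := by positivity
  rw [nbC, nbC, h2, hfac]
  field_simp

lemma nbC_le {k : ℝ} (hk : 0 < k) (x : ℕ) :
    nbC k x ≤ ((x:ℝ) + 1) ^ (⌈k⌉₊) := by
  set K := ⌈k⌉₊ with hK
  induction x with
  | zero => simp [nbC_zero hk, one_le_pow₀]  -- 1 ≤ 1^K? (0+1)^K = 1
  | succ n ih =>
    have hpos : (0:ℝ) < (n:ℝ) + 1 := by positivity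
    have hkK : k ≤ K := Nat.le_ceil k
    have hsucc := nbC_succ hk n
    have hb : (1 : ℝ) + (K:ℝ) * (1 / ((n:ℝ)+1)) ≤ (1 + 1/((n:ℝ)+1)) ^ K := by
      apply one_add_mul_le_pow
      have : (0:ℝ) ≤ 1 / ((n:ℝ)+1) := by positivity
      linarith
    -- (n+2)^K = (n+1)^K * (1 + 1/(n+1))^K
    have hfact : ((n:ℝ) + 1 + 1) = ((n:ℝ)+1) * (1 + 1/((n:ℝ)+1)) := by
      field_simp
    have hexp : ((n:ℝ) + 1 + 1) ^ K = ((n:ℝ)+1)^K * (1 + 1/((n:ℝ)+1))^K := by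
      rw [hfact, mul_pow]
    have hGe : ((n:ℝ)+1)^K * ((1:ℝ) + (K:ℝ)/((n:ℝ)+1)) ≤ ((n:ℝ)+1+1)^K := by
      rw [hexp]
      apply mul_le_mul_of_nonneg_left _ (by positivity)
      rw [div_eq_mul_one_div]
      exact hb
    -- nbC k (n+1) = nbC k n * (k+n)/(n+1)
    have h1 : nbC k (n+1) = nbC k n * (k + n) / ((n:ℝ)+1) := by
      field_simp at hsucc ⊢
      push_cast at hsucc ⊢
      linarith [hsucc]
    rw [h1]
    have hkn : nbC k n * (k + n) ≤ ((n:ℝ)+1)^K * ((K:ℝ) + n) := by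
      apply mul_le_mul ih (by linarith) (by positivity) (by positivity)
    have h2 : ((n:ℝ)+1)^K * ((K:ℝ) + n) ≤ ((n:ℝ)+1+1)^K * ((n:ℝ)+1) := by
      calc ((n:ℝ)+1)^K * ((K:ℝ) + n) ≤ ((n:ℝ)+1)^K * (((n:ℝ)+1) + (K:ℝ)) := by
            apply mul_le_mul_of_nonneg_left (by linarith) (by positivity)
        _ = (((n:ℝ)+1)^K * ((1:ℝ) + (K:ℝ)/((n:ℝ)+1))) * ((n:ℝ)+1) := by
            field_simp
        _ ≤ ((n:ℝ)+1+1)^K * ((n:ℝ)+1) := by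
            apply mul_le_mul_of_nonneg_right hGe (by positivity)
    rw [div_le_iff₀ hpos]
    push_cast
    calc nbC k n * (k + n) ≤ ((n:ℝ)+1)^K * ((K:ℝ) + n) := hkn
      _ ≤ ((n:ℝ)+1+1)^K * ((n:ℝ)+1) := h2

lemma summable_aux_pow {s : ℝ} (hs0 : 0 ≤ s) (hs1 : s < 1) (L : ℕ) :
    Summable (fun n : ℕ => ((n:ℝ) + 1) ^ L * s ^ n) := by
  have h1 : Summable (fun n : ℕ => (n:ℝ) ^ L * s ^ n) :=
    summable_pow_mul_geometric_of_norm_lt_one L (by rwa [Real.norm_eq_abs, abs_of_nonneg hs0])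
  have h2 : Summable (fun n : ℕ => s ^ n) := summable_geometric_of_lt_one hs0 hs1
  have h3 : Summable (fun n : ℕ => (2:ℝ)^L * ((n:ℝ) ^ L * s ^ n) + (2:ℝ)^L * s ^ n) :=
    ((h1.mul_left _).add (h2.mul_left _))
  apply h3.of_nonneg_of_le (fun n => by positivity)
  intro n
  have hb : ((n:ℝ)+1)^L ≤ (2:ℝ)^L * (n:ℝ)^L + (2:ℝ)^L := by
    rcases Nat.eq_zero_or_pos n with h | h
    · subst h
      have h1 : (1:ℝ) ≤ (2:ℝ)^L := one_le_pow₀ (by norm_num)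
      have h2 : (0:ℝ) ≤ (2:ℝ)^L * (0:ℝ)^L := mul_nonneg (by positivity) (pow_nonneg le_rfl L)
      push_cast
      norm_num
      linarith
    · have h1n : (1:ℝ) ≤ (n:ℝ) := by exact_mod_cast h
      have : ((n:ℝ)+1)^L ≤ (2*(n:ℝ))^L := by
        apply pow_le_pow_left₀ (by positivity) (by linarith)
      rw [mul_pow] at this
      nlinarith [pow_nonneg hs0 n, pow_pos (lt_of_lt_of_le one_pos h1n) L, pow_pos (show (0:ℝ)<2 by norm_num) L]
  calc ((n:ℝ)+1)^L * s^n ≤ ((2:ℝ)^L * (n:ℝ)^L + (2:ℝ)^L) * s^n := by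
        apply mul_le_mul_of_nonneg_right hb (by positivity)
    _ = (2:ℝ)^L * ((n:ℝ)^L * s^n) + (2:ℝ)^L * s^n := by ring

lemma summable_main {k : ℝ} (hk : 0 < k) {s : ℝ} (hs0 : 0 ≤ s) (hs1 : s < 1) :
    Summable (fun n : ℕ => nbC k n * ((n:ℝ) + 1) * s ^ n) := by
  apply (summable_aux_pow hs0 hs1 (⌈k⌉₊ + 1)).of_nonneg_of_le
  · intro n
    have := nbC_pos hk n
    positivity
  · intro n
    have h1 := nbC_le hk n
    have h2 : (0:ℝ) ≤ ((n:ℝ)+1) := by positivity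
    calc nbC k n * ((n:ℝ)+1) * s^n ≤ (((n:ℝ)+1)^(⌈k⌉₊) * ((n:ℝ)+1)) * s^n := by
          apply mul_le_mul_of_nonneg_right _ (by positivity)
          exact mul_le_mul_of_nonneg_right h1 h2
      _ = ((n:ℝ)+1)^(⌈k⌉₊+1) * s^n := by rw [pow_succ]

lemma hasSum_binom {k : ℝ} (hk : 0 < k) {q : ℝ} (hq0 : 0 ≤ q) (hq1 : q < 1) :
    HasSum (fun x : ℕ => nbC k x * q ^ x) ((1 - q) ^ (-k)) := by
  set s : ℝ := (q + 1) / 2 with hs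
  have hs0 : 0 < s := by simp only [hs]; linarith
  have hs1 : s < 1 := by simp only [hs]; linarith
  have hqs : q < s := by simp only [hs]; linarith
  set u : ℕ → ℝ := fun n => nbC k n * (n:ℝ) * s ^ (n - 1) with hu_def
  have hmain := summable_main hk hs0.le hs1
  have hu : Summable u := by
    apply (hmain.mul_left s⁻¹).of_nonneg_of_le
    · intro n
      simp only [hu_def]
      have := nbC_pos hk n
      positivity
    · intro n
      cases n with
      | zero =>
        simp only [hu_def]
        have := nbC_pos hk 0
        simp
        positivity
      | succ m =>
        have h1 : u (m+1) = nbC k (m+1) * ((m:ℝ)+1) * s ^ m := by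
          show nbC k (m+1) * (((m:ℕ)+1 : ℕ):ℝ) * s ^ (m+1-1) = _
          simp only [Nat.add_sub_cancel]
          push_cast
          ring
        have h2 : s⁻¹ * (nbC k (m+1) * ((m:ℝ)+1+1) * s ^ (m+1))
            = nbC k (m+1) * ((m:ℝ)+1+1) * s ^ m := by
          rw [pow_succ]; field_simp
        rw [h1]
        push_cast
        rw [h2]
        have := nbC_pos hk (m+1)
        have hsp : (0:ℝ) ≤ s ^ m := by positivity
        nlinarith
  have hsummable_at : ∀ y : ℝ, |y| ≤ s → Summable (fun n => nbC k n * y ^ n) := by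
    intro y hy
    apply hmain.of_norm_bounded
    intro n
    have hc := nbC_pos hk n
    rw [norm_mul, Real.norm_eq_abs, Real.norm_eq_abs, abs_of_pos hc, abs_pow]
    calc nbC k n * |y| ^ n ≤ nbC k n * s ^ n := by
          apply mul_le_mul_of_nonneg_left (pow_le_pow_left₀ (abs_nonneg y) hy n) hc.le
      _ ≤ nbC k n * ((n:ℝ)+1) * s ^ n := by
          have hsp : (0:ℝ) ≤ s ^ n := by positivity
          nlinarith [mul_nonneg (mul_nonneg hc.le (Nat.cast_nonneg n)) hsp]
  have hbound : ∀ (n : ℕ) (y : ℝ), y ∈ Ioo (-s) s →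
      ‖nbC k n * ((n:ℝ) * y ^ (n-1))‖ ≤ u n := by
    intro n y hy
    have hc := nbC_pos hk n
    have hya : |y| ≤ s := by
      rw [abs_le]; exact ⟨hy.1.le, hy.2.le⟩
    rw [norm_mul, norm_mul, Real.norm_eq_abs, Real.norm_eq_abs, Real.norm_eq_abs,
      abs_of_pos hc, Nat.abs_cast, abs_pow, hu_def]
    simp only []
    rw [mul_assoc]
    apply mul_le_mul_of_nonneg_left _ hc.le
    apply mul_le_mul_of_nonneg_left _ (Nat.cast_nonneg n)
    exact pow_le_pow_left₀ (abs_nonneg y) hya _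
  set S : ℝ → ℝ := fun y => ∑' n, nbC k n * y ^ n with hS_def
  set D : ℝ → ℝ := fun y => ∑' n, nbC k n * ((n:ℝ) * y ^ (n-1)) with hD_def
  have hS : ∀ y ∈ Ioo (-s) s, HasDerivAt S (D y) y := by
    intro y hy
    exact hasDerivAt_tsum_of_isPreconnected hu isOpen_Ioo (convex_Ioo _ _).isPreconnected
      (fun n z _ => (hasDerivAt_pow n z).const_mul (nbC k n)) hbound
      (⟨by linarith, hqs⟩ : q ∈ Ioo (-s) s)
      (hsummable_at q (by rw [abs_of_nonneg hq0]; linarith)) hy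
  have hsummable_deriv : ∀ y : ℝ, y ∈ Ioo (-s) s →
      Summable (fun n => nbC k n * ((n:ℝ) * y ^ (n-1))) := by
    intro y hy
    exact Summable.of_norm_bounded hu (fun n => hbound n y hy)
  have hkey : ∀ y ∈ Ioo (-s) s, (1 - y) * D y = k * S y := by
    intro y hy
    have hya : |y| ≤ s := by rw [abs_le]; exact ⟨hy.1.le, hy.2.le⟩
    have hsy := hsummable_at y hya
    have hsy' := hsummable_deriv y hy
    have h1 : D y = ∑' n, nbC k (n+1) * (((n:ℝ)+1) * y ^ n) := by
      show ∑' n, nbC k n * ((n:ℝ) * y ^ (n-1)) = _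
      rw [Summable.tsum_eq_zero_add hsy']
      simp only [Nat.cast_zero, zero_mul, mul_zero, zero_add, Nat.add_sub_cancel]
      exact tsum_congr (fun n => by push_cast; ring)
    have h2 : ∀ n : ℕ, nbC k (n+1) * (((n:ℝ)+1) * y ^ n)
        = k * (nbC k n * y ^ n) + (n:ℝ) * (nbC k n * y ^ n) := by
      intro n
      have hc := nbC_succ hk n
      calc nbC k (n+1) * (((n:ℝ)+1) * y ^ n) = (nbC k (n+1) * ((n:ℝ)+1)) * y ^ n := by ring
        _ = (nbC k n * (k + n)) * y ^ n := by rw [hc]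
        _ = k * (nbC k n * y ^ n) + (n:ℝ) * (nbC k n * y ^ n) := by ring
    have hB : Summable (fun n : ℕ => (n:ℝ) * (nbC k n * y ^ n)) := by
      apply (hsy'.mul_left y).congr
      intro n
      cases n with
      | zero => simp
      | succ m => simp only [Nat.add_sub_cancel]; push_cast; ring
    have hswap : ∀ n : ℕ, (n:ℝ) * (nbC k n * y ^ n) = y * (nbC k n * ((n:ℝ) * y ^ (n-1))) := by
      intro n
      cases n with
      | zero => simp
      | succ m => simp only [Nat.add_sub_cancel]; push_cast; ring
    have hn_eq : ∑' n : ℕ, (n:ℝ) * (nbC k n * y ^ n) = y * D y := by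
      rw [tsum_congr hswap, tsum_mul_left]
    have h3 : D y = k * S y + y * D y := by
      calc D y = ∑' n, nbC k (n+1) * (((n:ℝ)+1) * y ^ n) := h1
        _ = ∑' n : ℕ, (k * (nbC k n * y ^ n) + (n:ℝ) * (nbC k n * y ^ n)) := tsum_congr h2
        _ = (∑' n : ℕ, k * (nbC k n * y ^ n)) + ∑' n : ℕ, (n:ℝ) * (nbC k n * y ^ n) :=
            Summable.tsum_add (hsy.mul_left k) hB
        _ = k * S y + y * D y := by rw [tsum_mul_left, hn_eq]
    linarith [h3]
  set G : ℝ → ℝ := fun y => (1 - y) ^ k * S y with hG_def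
  have hG : ∀ y ∈ Ioo (-s) s, HasDerivAt G 0 y := by
    intro y hy
    have h1y : (0:ℝ) < 1 - y := by linarith [hy.2]
    have hinner : HasDerivAt (fun z : ℝ => 1 - z) (-1) y := (hasDerivAt_id y).const_sub 1
    have houter : HasDerivAt (fun x : ℝ => x ^ k) (k * (1 - y) ^ (k - 1)) (1 - y) :=
      Real.hasDerivAt_rpow_const (Or.inl h1y.ne')
    have hd1 : HasDerivAt (fun z : ℝ => (1 - z) ^ k) ((k * (1 - y) ^ (k - 1)) * (-1)) y :=
      houter.comp y hinner
    have hd := hd1.mul (hS y hy)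
    have hV : (k * (1 - y) ^ (k - 1)) * (-1) * S y + (1 - y) ^ k * D y = 0 := by
      have e1 : (1 - y) ^ k = (1 - y) ^ (k - 1) * (1 - y) := by
        rw [← Real.rpow_add_one h1y.ne' (k - 1)]
        norm_num
      rw [e1]
      have hky := hkey y hy
      linear_combination ((1:ℝ) - y) ^ (k - 1) * hky
    rw [hV] at hd
    exact hd
  have hsubset : Icc (0:ℝ) q ⊆ Ioo (-s) s := by
    intro y hy
    exact ⟨by linarith [hy.1], by linarith [hy.2]⟩
  have hconst : G q = G 0 := by
    have hcont : ContinuousOn G (Icc 0 q) := fun y hy =>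
      (hG y (hsubset hy)).continuousAt.continuousWithinAt
    have hder : ∀ y ∈ Ico (0:ℝ) q, HasDerivWithinAt G 0 (Ici y) y := fun y hy =>
      (hG y (hsubset (Ico_subset_Icc_self hy))).hasDerivWithinAt
    exact constant_of_has_deriv_right_zero hcont hder q (right_mem_Icc.2 hq0)
  have hS0 : S 0 = 1 := by
    show ∑' n, nbC k n * (0:ℝ) ^ n = 1
    rw [tsum_eq_single 0 (fun n hn => by simp [zero_pow hn])]
    simp [nbC_zero hk]
  have hG0 : G 0 = 1 := by
    show (1 - (0:ℝ)) ^ k * S 0 = 1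
    rw [hS0]
    simp [Real.one_rpow]
  have hq1' : (0:ℝ) < 1 - q := by linarith
  have hSq : S q = (1 - q) ^ (-k) := by
    have h : (1 - q) ^ k * S q = 1 := by
      have h' := hconst
      rw [hG0] at h'
      exact h'
    rw [Real.rpow_neg hq1'.le]
    have hpos : (0:ℝ) < (1 - q) ^ k := Real.rpow_pos_of_pos hq1' k
    field_simp
    linear_combination h
  have hsq : Summable (fun n => nbC k n * q ^ n) :=
    hsummable_at q (by rw [abs_of_nonneg hq0]; linarith)
  have := hsq.hasSum
  rwa [show ∑' n, nbC k n * q ^ n = (1 - q) ^ (-k) from hSq] at this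

lemma integral_cs {ν : Measure ℝ} (f g : ℝ → ℝ)
    (hff : Integrable (fun t => f t * f t) ν)
    (hgg : Integrable (fun t => g t * g t) ν)
    (hfg : Integrable (fun t => f t * g t) ν)
    (hgpos : 0 < ∫ t, g t * g t ∂ν) :
    (∫ t, f t * g t ∂ν) ^ 2 ≤ (∫ t, f t * f t ∂ν) * ∫ t, g t * g t ∂ν := by
  set A := ∫ t, f t * f t ∂ν with hA
  set B := ∫ t, f t * g t ∂ν with hB
  set C := ∫ t, g t * g t ∂ν with hC
  set lam := B / C with hlam_def
  have h0 : 0 ≤ ∫ t, (f t - lam * g t) ^ 2 ∂ν := integral_nonneg (fun t => sq_nonneg _)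
  have hptw : (fun t => (f t - lam * g t) ^ 2)
      = fun t => (f t * f t - (2 * lam) * (f t * g t)) + (lam * lam) * (g t * g t) := by
    funext t; ring
  have hexp : ∫ t, (f t - lam * g t) ^ 2 ∂ν = (A - (2 * lam) * B) + (lam * lam) * C := by
    have h1 : Integrable (fun t => f t * f t - 2 * lam * (f t * g t)) ν :=
      hff.sub (hfg.const_mul _)
    have h2 : Integrable (fun t => lam * lam * (g t * g t)) ν := hgg.const_mul _
    have h3 : Integrable (fun t => 2 * lam * (f t * g t)) ν := hfg.const_mul _
    rw [hptw, integral_add h1 h2, integral_sub hff h3, integral_const_mul, integral_const_mul]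
  rw [hexp] at h0
  have hlam : lam * C = B := div_mul_cancel₀ B hgpos.ne'
  nlinarith [h0, hlam, hgpos]

lemma tsum_tail_eq (f : ℕ → ℝ) (hf : Summable f) (m : ℕ) :
    ∑' x : ℕ, (if m < x then f x else 0)
      = (∑' x, f x) - ∑ x ∈ Finset.range (m+1), f x := by
  have hT : Summable (fun x : ℕ => if m < x then f x else 0) := by
    apply (hf.indicator {x | m < x}).congr
    intro x
    simp [Set.indicator_apply]
  have hHzero : ∀ x ∉ Finset.range (m+1), (if m < x then (0:ℝ) else f x) = 0 := by
    intro x hx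
    rw [Finset.mem_range, not_lt] at hx
    simp [Nat.lt_of_succ_le hx]
  have hH : Summable (fun x : ℕ => if m < x then (0:ℝ) else f x) :=
    summable_of_ne_finset_zero hHzero
  have hadd : ∑' x, f x
      = (∑' x : ℕ, (if m < x then f x else 0)) + ∑' x : ℕ, (if m < x then (0:ℝ) else f x) := by
    rw [← Summable.tsum_add hT hH]
    exact tsum_congr (fun x => by by_cases h : m < x <;> simp [h])
  have hHval : ∑' x : ℕ, (if m < x then (0:ℝ) else f x) = ∑ x ∈ Finset.range (m+1), f x := by
    rw [tsum_eq_sum hHzero]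
    apply Finset.sum_congr rfl
    intro x hx
    rw [Finset.mem_range] at hx
    simp [Nat.not_lt.mpr (Nat.lt_succ_iff.mp hx)]
  rw [hHval] at hadd
  linarith

lemma logconvex_seq (b : ℕ → ℝ) (hpos : ∀ x, 0 < b x)
    (hconv : ∀ x, b (x+1) ^ 2 ≤ b x * b (x+2)) (h0 : b 0 ≤ 1)
    {x₀ : ℕ} (hx0 : 1 < b x₀) : ∀ x, x₀ ≤ x → b x₀ ≤ b x := by
  set r : ℕ → ℝ := fun i => b (i+1) / b i with hr_def
  have hrmono : Monotone r := by
    apply monotone_nat_of_le_succ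
    intro i
    show b (i+1) / b i ≤ b (i+2) / b (i+1)
    rw [div_le_div_iff₀ (hpos i) (hpos (i+1))]
    have := hconv i
    nlinarith [this]
  have hex : ∃ i, i < x₀ ∧ 1 < r i := by
    by_contra hcon
    push_neg at hcon
    have hle : ∀ j, j ≤ x₀ → b j ≤ 1 := by
      intro j
      induction j with
      | zero => intro _; exact h0
      | succ n ih =>
        intro hj
        have hn : n < x₀ := Nat.lt_of_succ_le hj
        have h1 : r n ≤ 1 := hcon n hn
        have h2 : b (n+1) ≤ b n := by
          have := (div_le_one (hpos n)).mp h1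
          exact this
        exact le_trans h2 (ih (Nat.le_of_lt hn))
    exact absurd (hle x₀ le_rfl) (not_le.mpr hx0)
  obtain ⟨i, hi, hri⟩ := hex
  have hstep : ∀ j, i ≤ j → b j ≤ b (j+1) := by
    intro j hj
    have h1 : 1 < r j := lt_of_lt_of_le hri (hrmono hj)
    have := (one_le_div (hpos j)).mp h1.le
    exact this
  intro x hx
  induction x, hx using Nat.le_induction with
  | base => exact le_rfl
  | succ n hn ih =>
    exact le_trans ih (hstep n (le_trans (Nat.le_of_lt hi) hn))


lemma nbPMF_eq' (k p : ℝ) (x : ℕ) : nbPMF k p x = nbC k x * (p ^ k * (1 - p) ^ x) := by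
  rw [nbPMF, nbC]; ring

lemma hasSum_nbPMF' {k : ℝ} (hk : 0 < k) {t : ℝ} (ht : t ∈ Ioo (0:ℝ) 1) :
    HasSum (nbPMF k t) 1 := by
  obtain ⟨h0, h1⟩ := ht
  have hb := hasSum_binom hk (q := 1 - t) (by linarith) (by linarith)
  have hb' := hb.mul_left (t ^ k)
  have hval : t ^ k * (1 - (1 - t)) ^ (-k) = 1 := by
    have he : (1:ℝ) - (1 - t) = t := by ring
    rw [he, Real.rpow_neg h0.le]
    have : t ^ k ≠ 0 := (Real.rpow_pos_of_pos h0 k).ne'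
    field_simp
  have hfun : (fun x : ℕ => t ^ k * (nbC k x * (1 - t) ^ x)) = nbPMF k t := by
    funext x; rw [nbPMF_eq']; ring
  rw [hval] at hb'
  rwa [hfun] at hb'

noncomputable def Aint (k : ℝ) (μ : Measure ℝ) (j x : ℕ) : ℝ :=
  ∫ t, t ^ k * t ^ j * (1 - t) ^ x ∂μ


section Measure
variable {k : ℝ} {μ : Measure ℝ}

lemma ae_mem_Ioo (hμ : μ (Ioo (0:ℝ) 1)ᶜ = 0) : ∀ᵐ t ∂μ, t ∈ Ioo (0:ℝ) 1 := by
  rw [ae_iff]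
  convert hμ using 2
  rfl

lemma integrable_of_bound (hμ : μ (Ioo (0:ℝ) 1)ᶜ = 0) [IsProbabilityMeasure μ]
    (F : ℝ → ℝ) (hm : Measurable F) (C : ℝ)
    (hb : ∀ t ∈ Ioo (0:ℝ) 1, |F t| ≤ C) : Integrable F μ := by
  apply Integrable.mono' (integrable_const C) hm.aestronglyMeasurable
  exact (ae_mem_Ioo hμ).mono fun t ht => by rw [Real.norm_eq_abs]; exact hb t ht

lemma meas_base (k : ℝ) (j x : ℕ) : Measurable (fun t : ℝ => t ^ k * t ^ j * (1 - t) ^ x) := by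
  fun_prop

lemma bound_base (hk : 0 < k) (j x : ℕ) {t : ℝ} (ht : t ∈ Ioo (0:ℝ) 1) :
    0 < t ^ k * t ^ j * (1 - t) ^ x ∧ t ^ k * t ^ j * (1 - t) ^ x ≤ 1 := by
  obtain ⟨h0, h1⟩ := ht
  have hrp : 0 < t ^ k := Real.rpow_pos_of_pos h0 k
  have hrle : t ^ k ≤ 1 := Real.rpow_le_one h0.le h1.le hk.le
  have hjp : 0 < t ^ j := pow_pos h0 j
  have hjle : t ^ j ≤ 1 := pow_le_one₀ h0.le h1.le
  have hxp : 0 < (1 - t) ^ x := pow_pos (by linarith) x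
  have hxle : (1 - t) ^ x ≤ 1 := pow_le_one₀ (by linarith) (by linarith)
  constructor
  · positivity
  · have hab : t ^ k * t ^ j ≤ 1 := mul_le_one₀ hrle hjp.le hjle
    exact mul_le_one₀ hab hxp.le hxle

lemma integrable_base (hμ : μ (Ioo (0:ℝ) 1)ᶜ = 0) [IsProbabilityMeasure μ] (hk : 0 < k)
    (j x : ℕ) : Integrable (fun t : ℝ => t ^ k * t ^ j * (1 - t) ^ x) μ := by
  apply integrable_of_bound hμ _ (meas_base k j x) 1
  intro t ht
  obtain ⟨h1, h2⟩ := bound_base hk j x ht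
  rw [abs_of_pos h1]; exact h2

lemma Aint_pos (hμ : μ (Ioo (0:ℝ) 1)ᶜ = 0) [IsProbabilityMeasure μ] (hk : 0 < k)
    (j x : ℕ) : 0 < Aint k μ j x := by
  rw [Aint]
  refine (integral_pos_iff_support_of_nonneg_ae
    ((ae_mem_Ioo hμ).mono fun t ht => (bound_base hk j x ht).1.le)
    (integrable_base hμ hk j x)).mpr ?_
  · have hIoo : μ (Ioo (0:ℝ) 1) = 1 := by
      have := measure_add_measure_compl (μ := μ) (measurableSet_Ioo (a := (0:ℝ)) (b := 1))
      rw [hμ, add_zero, measure_univ] at this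
      exact this
    have hsub : Ioo (0:ℝ) 1 ⊆ Function.support (fun t => t ^ k * t ^ j * (1 - t) ^ x) :=
      fun t ht => (bound_base hk j x ht).1.ne'
    calc (0:ℝ≥0∞) < 1 := by norm_num
      _ = μ (Ioo (0:ℝ) 1) := hIoo.symm
      _ ≤ μ (Function.support fun t => t ^ k * t ^ j * (1 - t) ^ x) := measure_mono hsub


lemma Aint_succ (hμ : μ (Ioo (0:ℝ) 1)ᶜ = 0) [IsProbabilityMeasure μ] (hk : 0 < k)
    (j x : ℕ) : Aint k μ j (x+1) = Aint k μ j x - Aint k μ (j+1) x := by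
  have hptw : (fun t : ℝ => t ^ k * t ^ j * (1 - t) ^ (x+1))
      = fun t => t ^ k * t ^ j * (1 - t) ^ x - t ^ k * t ^ (j+1) * (1 - t) ^ x := by
    funext t; ring
  rw [Aint, hptw, integral_sub (integrable_base hμ hk j x) (integrable_base hμ hk (j+1) x)]
  rfl

lemma Aint_cs (hμ : μ (Ioo (0:ℝ) 1)ᶜ = 0) [IsProbabilityMeasure μ] (hk : 0 < k)
    (j x : ℕ) : (Aint k μ (j+1) x) ^ 2 ≤ Aint k μ j x * Aint k μ (j+2) x := by
  set f : ℝ → ℝ := fun t => Real.sqrt (t ^ k * t ^ j * (1 - t) ^ x) with hf_def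
  set g : ℝ → ℝ := fun t => Real.sqrt (t ^ k * t ^ (j+2) * (1 - t) ^ x) with hg_def
  have hkey : ∀ t ∈ Ioo (0:ℝ) 1,
      f t * f t = t ^ k * t ^ j * (1 - t) ^ x
      ∧ g t * g t = t ^ k * t ^ (j+2) * (1 - t) ^ x
      ∧ f t * g t = t ^ k * t ^ (j+1) * (1 - t) ^ x := by
    intro t ht
    have h1 := (bound_base hk j x ht).1
    have h2 := (bound_base hk (j+2) x ht).1
    have h3 := (bound_base hk (j+1) x ht).1
    refine ⟨Real.mul_self_sqrt h1.le, Real.mul_self_sqrt h2.le, ?_⟩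
    rw [hf_def, hg_def]
    simp only []
    rw [← Real.sqrt_mul h1.le]
    have : t ^ k * t ^ j * (1 - t) ^ x * (t ^ k * t ^ (j+2) * (1 - t) ^ x)
        = (t ^ k * t ^ (j+1) * (1 - t) ^ x) ^ 2 := by ring
    rw [this, Real.sqrt_sq h3.le]
  have hae := ae_mem_Ioo hμ
  have hff : (fun t => f t * f t) =ᵐ[μ] fun t => t ^ k * t ^ j * (1 - t) ^ x :=
    hae.mono fun t ht => (hkey t ht).1
  have hgg : (fun t => g t * g t) =ᵐ[μ] fun t => t ^ k * t ^ (j+2) * (1 - t) ^ x :=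
    hae.mono fun t ht => (hkey t ht).2.1
  have hfg : (fun t => f t * g t) =ᵐ[μ] fun t => t ^ k * t ^ (j+1) * (1 - t) ^ x :=
    hae.mono fun t ht => (hkey t ht).2.2
  have hIff : Integrable (fun t => f t * f t) μ := ((integrable_base hμ hk j x).congr hff.symm)
  have hIgg : Integrable (fun t => g t * g t) μ := ((integrable_base hμ hk (j+2) x).congr hgg.symm)
  have hIfg : Integrable (fun t => f t * g t) μ := ((integrable_base hμ hk (j+1) x).congr hfg.symm)
  have e1 : ∫ t, f t * f t ∂μ = Aint k μ j x := integral_congr_ae hff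
  have e2 : ∫ t, g t * g t ∂μ = Aint k μ (j+2) x := integral_congr_ae hgg
  have e3 : ∫ t, f t * g t ∂μ = Aint k μ (j+1) x := integral_congr_ae hfg
  have hgpos : 0 < ∫ t, g t * g t ∂μ := by rw [e2]; exact Aint_pos hμ hk (j+2) x
  have := integral_cs f g hIff hIgg hIfg hgpos
  rwa [e1, e2, e3] at this

lemma Aint_cs_x (hμ : μ (Ioo (0:ℝ) 1)ᶜ = 0) [IsProbabilityMeasure μ] (hk : 0 < k)
    (j x : ℕ) : (Aint k μ j (x+1)) ^ 2 ≤ Aint k μ j x * Aint k μ j (x+2) := by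
  set f : ℝ → ℝ := fun t => Real.sqrt (t ^ k * t ^ j * (1 - t) ^ x) with hf_def
  set g : ℝ → ℝ := fun t => Real.sqrt (t ^ k * t ^ j * (1 - t) ^ (x+2)) with hg_def
  have hkey : ∀ t ∈ Ioo (0:ℝ) 1,
      f t * f t = t ^ k * t ^ j * (1 - t) ^ x
      ∧ g t * g t = t ^ k * t ^ j * (1 - t) ^ (x+2)
      ∧ f t * g t = t ^ k * t ^ j * (1 - t) ^ (x+1) := by
    intro t ht
    have h1 := (bound_base hk j x ht).1
    have h2 := (bound_base hk j (x+2) ht).1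
    have h3 := (bound_base hk j (x+1) ht).1
    refine ⟨Real.mul_self_sqrt h1.le, Real.mul_self_sqrt h2.le, ?_⟩
    rw [hf_def, hg_def]
    simp only []
    rw [← Real.sqrt_mul h1.le]
    have : t ^ k * t ^ j * (1 - t) ^ x * (t ^ k * t ^ j * (1 - t) ^ (x+2))
        = (t ^ k * t ^ j * (1 - t) ^ (x+1)) ^ 2 := by ring
    rw [this, Real.sqrt_sq h3.le]
  have hae := ae_mem_Ioo hμ
  have hff : (fun t => f t * f t) =ᵐ[μ] fun t => t ^ k * t ^ j * (1 - t) ^ x :=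
    hae.mono fun t ht => (hkey t ht).1
  have hgg : (fun t => g t * g t) =ᵐ[μ] fun t => t ^ k * t ^ j * (1 - t) ^ (x+2) :=
    hae.mono fun t ht => (hkey t ht).2.1
  have hfg : (fun t => f t * g t) =ᵐ[μ] fun t => t ^ k * t ^ j * (1 - t) ^ (x+1) :=
    hae.mono fun t ht => (hkey t ht).2.2
  have hIff : Integrable (fun t => f t * f t) μ := ((integrable_base hμ hk j x).congr hff.symm)
  have hIgg : Integrable (fun t => g t * g t) μ := ((integrable_base hμ hk j (x+2)).congr hgg.symm)
  have hIfg : Integrable (fun t => f t * g t) μ := ((integrable_base hμ hk j (x+1)).congr hfg.symm)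
  have e1 : ∫ t, f t * f t ∂μ = Aint k μ j x := integral_congr_ae hff
  have e2 : ∫ t, g t * g t ∂μ = Aint k μ j (x+2) := integral_congr_ae hgg
  have e3 : ∫ t, f t * g t ∂μ = Aint k μ j (x+1) := integral_congr_ae hfg
  have hgpos : 0 < ∫ t, g t * g t ∂μ := by rw [e2]; exact Aint_pos hμ hk j (x+2)
  have := integral_cs f g hIff hIgg hIfg hgpos
  rwa [e1, e2, e3] at this

lemma nbPMF_eq (k t : ℝ) (x : ℕ) :
    nbPMF k t x = nbC k x * (t ^ k * t ^ (0:ℕ) * (1 - t) ^ x) := by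
  rw [nbPMF, nbC, pow_zero]
  ring

lemma integral_nbPMF_eq (k : ℝ) (μ : Measure ℝ) (x : ℕ) :
    ∫ t, nbPMF k t x ∂μ = nbC k x * Aint k μ 0 x := by
  have hfun : (fun t => nbPMF k t x) = fun t => nbC k x * (t ^ k * t ^ (0:ℕ) * (1 - t) ^ x) :=
    funext fun t => nbPMF_eq k t x
  rw [hfun, integral_const_mul, Aint]

lemma nbPMF_nonneg {k t : ℝ} (hk : 0 < k) (ht : t ∈ Ioo (0:ℝ) 1) (x : ℕ) :
    0 ≤ nbPMF k t x := by
  rw [nbPMF_eq]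
  exact mul_nonneg (nbC_pos hk x).le (bound_base hk 0 x ht).1.le

lemma integrable_nbPMF (hμ : μ (Ioo (0:ℝ) 1)ᶜ = 0) [IsProbabilityMeasure μ] (hk : 0 < k)
    (x : ℕ) : Integrable (fun t => nbPMF k t x) μ := by
  have : (fun t => nbPMF k t x) = fun t => nbC k x * (t ^ k * t ^ (0:ℕ) * (1 - t) ^ x) := by
    funext t; exact nbPMF_eq k t x
  rw [this]
  exact (integrable_base hμ hk 0 x).const_mul _

lemma hasSum_mix (hμ : μ (Ioo (0:ℝ) 1)ᶜ = 0) [IsProbabilityMeasure μ] (hk : 0 < k) :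
    HasSum (fun x : ℕ => ∫ t, nbPMF k t x ∂μ) 1 := by
  have hae := ae_mem_Ioo hμ
  have hnn : ∀ x : ℕ, (0:ℝ → ℝ) ≤ᵐ[μ] fun t => nbPMF k t x :=
    fun x => hae.mono fun t ht => by simpa using nbPMF_nonneg hk ht x
  have hint := integrable_nbPMF hμ hk
  set T : ℕ → ℝ≥0∞ := fun x => ENNReal.ofReal (∫ t, nbPMF k t x ∂μ) with hT_def
  have h1 : ∀ x, T x = ∫⁻ t, ENNReal.ofReal (nbPMF k t x) ∂μ := fun x =>
    ofReal_integral_eq_lintegral_ofReal (hint x) (hnn x)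
  have hmeas : ∀ x : ℕ, Measurable (fun t => ENNReal.ofReal (nbPMF k t x)) := by
    intro x
    apply Measurable.ennreal_ofReal
    have : (fun t => nbPMF k t x) = fun t => nbC k x * (t ^ k * t ^ (0:ℕ) * (1 - t) ^ x) := by
      funext t; exact nbPMF_eq k t x
    rw [this]
    exact (meas_base k 0 x).const_mul _
  have h2 : ∑' x, T x = 1 := by
    rw [tsum_congr h1, ← lintegral_tsum (fun x => (hmeas x).aemeasurable)]
    have h3 : ∀ᵐ t ∂μ, ∑' x, ENNReal.ofReal (nbPMF k t x) = 1 := by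
      apply hae.mono
      intro t ht
      have hsum := hasSum_nbPMF' hk ht
      rw [← ENNReal.ofReal_tsum_of_nonneg (fun x => nbPMF_nonneg hk ht x) hsum.summable,
        hsum.tsum_eq]
      simp
    rw [lintegral_congr_ae h3, lintegral_one, measure_univ]
  have hfin : ∀ x, T x ≠ ⊤ := fun x => ENNReal.ofReal_ne_top
  have hsummable : Summable (fun x : ℕ => ∫ t, nbPMF k t x ∂μ) := by
    have := ENNReal.summable_toReal (by rw [h2]; exact ENNReal.one_ne_top)
    apply this.congr
    intro x
    rw [hT_def, ENNReal.toReal_ofReal (integral_nonneg_of_ae (hnn x))]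
  have htsum : ∑' x : ℕ, ∫ t, nbPMF k t x ∂μ = 1 := by
    have h4 := ENNReal.tsum_toReal_eq hfin
    rw [h2] at h4
    simp only [ENNReal.toReal_one] at h4
    rw [h4]
    exact tsum_congr fun x =>
      (ENNReal.toReal_ofReal (integral_nonneg_of_ae (hnn x))).symm
  rw [← htsum]
  exact hsummable.hasSum

end Measure

lemma nbPMF_zero {k : ℝ} (hk : 0 < k) (p : ℝ) : nbPMF k p 0 = p ^ k := by
  have : Real.Gamma k ≠ 0 := (Real.Gamma_pos_of_pos hk).ne'
  simp [nbPMF, this]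

/-- Example 3: let `X ~ NB(k, p)`, `k > 0`, `p ∈ (0,1)`, and let `Y` be a mixture of
`NB(k, t)` distributions with respect to a probability measure `μ` on `(0, 1)`. Then
`X ≤_st Y` iff `∫ tᵏ dμ(t) ≤ pᵏ`, and `X ≤_lr Y` iff
`p ≥ (∫ t^{k+1} dμ(t)) / (∫ tᵏ dμ(t))`. -/
theorem stmt_13 (k p : ℝ) (hk : 0 < k) (hp : p ∈ Ioo (0 : ℝ) 1)
    (μ : Measure ℝ) [IsProbabilityMeasure μ] (hμ : μ (Ioo (0 : ℝ) 1)ᶜ = 0) :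
    ((∀ m : ℕ,
        (∑' x : ℕ, if m < x then nbPMF k p x else 0) ≤
        ∑' x : ℕ, if m < x then ∫ t, nbPMF k t x ∂μ else 0) ↔
      ∫ t, t ^ k ∂μ ≤ p ^ k) ∧
    (Antitone (fun x : ℕ => nbPMF k p x / ∫ t, nbPMF k t x ∂μ) ↔
      (∫ t, t ^ (k + 1) ∂μ) / (∫ t, t ^ k ∂μ) ≤ p) := by
  obtain ⟨hp0, hp1⟩ := hp
  have hq0 : (0:ℝ) < 1 - p := by linarith
  have hpk : (0:ℝ) < p ^ k := Real.rpow_pos_of_pos hp0 k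
  set f : ℕ → ℝ := nbPMF k p with hf_def
  set g : ℕ → ℝ := fun x => ∫ t, nbPMF k t x ∂μ with hg_def
  set A : ℕ → ℝ := fun x => Aint k μ 0 x with hA_def
  set B : ℕ → ℝ := fun x => Aint k μ 1 x with hB_def
  have hf1 : HasSum f 1 := hasSum_nbPMF' hk ⟨hp0, hp1⟩
  have hg1 : HasSum g 1 := hasSum_mix hμ hk
  have hg_eq : ∀ x, g x = nbC k x * A x := fun x => integral_nbPMF_eq k μ x
  have hf_eq : ∀ x, f x = nbC k x * (p ^ k * (1-p) ^ x) := fun x => nbPMF_eq' k p x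
  have hApos : ∀ x, 0 < A x := fun x => Aint_pos hμ hk 0 x
  have hBpos : ∀ x, 0 < B x := fun x => Aint_pos hμ hk 1 x
  have hAsucc : ∀ x, A (x+1) = A x - B x := fun x => Aint_succ hμ hk 0 x
  -- integral identities
  have hI1 : ∫ t, t ^ k ∂μ = A 0 := by
    rw [hA_def]
    simp only [Aint]
    exact integral_congr_ae (Filter.Eventually.of_forall fun t => by simp)
  have hI2 : ∫ t, t ^ (k+1) ∂μ = B 0 := by
    rw [hB_def]
    simp only [Aint]
    apply integral_congr_ae
    apply (ae_mem_Ioo hμ).mono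
    intro t ht
    have h0 : t ≠ 0 := ne_of_gt ht.1
    show t ^ (k + 1) = t ^ k * t ^ (1:ℕ) * (1 - t) ^ (0:ℕ)
    rw [Real.rpow_add_one h0 k]
    simp
  have htail_f : ∀ m : ℕ, ∑' x : ℕ, (if m < x then f x else 0)
      = 1 - ∑ x ∈ Finset.range (m+1), f x := by
    intro m
    rw [tsum_tail_eq f hf1.summable m, hf1.tsum_eq]
  have htail_g : ∀ m : ℕ, ∑' x : ℕ, (if m < x then g x else 0)
      = 1 - ∑ x ∈ Finset.range (m+1), g x := by
    intro m
    rw [tsum_tail_eq g hg1.summable m, hg1.tsum_eq]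
  have hf0 : f 0 = p ^ k := nbPMF_zero hk p
  have hg0 : g 0 = ∫ t, t ^ k ∂μ := by
    rw [hg_def]
    exact integral_congr_ae (Filter.Eventually.of_forall fun t => by
      simp [nbPMF_zero hk t])
  constructor
  · -- part 1
    constructor
    · intro h
      have h0 := h 0
      rw [htail_f 0, htail_g 0, Finset.sum_range_one, Finset.sum_range_one] at h0
      rw [← hg0]
      rw [← hf0]
      linarith
    · intro hle m
      have hA0le : A 0 ≤ p ^ k * (1-p) ^ 0 := by
        rw [pow_zero, mul_one, ← hI1]
        exact hle
      rw [htail_f m, htail_g m]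
      set d : ℕ → ℝ := fun x => p ^ k * (1-p) ^ x with hd_def
      have hdpos : ∀ x, 0 < d x := fun x => by
        simp only [hd_def]; positivity
      by_cases hcase : ∀ x ≤ m, A x ≤ d x
      · have hsum : ∑ x ∈ Finset.range (m+1), g x ≤ ∑ x ∈ Finset.range (m+1), f x := by
          apply Finset.sum_le_sum
          intro x hx
          rw [Finset.mem_range, Nat.lt_succ_iff] at hx
          rw [hg_eq, hf_eq]
          exact mul_le_mul_of_nonneg_left (hcase x hx) (nbC_pos hk x).le
        linarith
      · push_neg at hcase
        obtain ⟨x₀, hx₀m, hx₀⟩ := hcase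
        set b : ℕ → ℝ := fun x => A x / d x with hb_def
        have hbpos : ∀ x, 0 < b x := fun x => div_pos (hApos x) (hdpos x)
        have hdd : ∀ x, d (x+1) ^ 2 = d x * d (x+2) := by
          intro x
          simp only [hd_def]
          ring
        have hbconv : ∀ x, b (x+1) ^ 2 ≤ b x * b (x+2) := by
          intro x
          have hcs := Aint_cs_x hμ hk 0 x
          simp only [hb_def, div_pow, div_mul_div_comm]
          rw [hdd x]
          exact div_le_div_of_nonneg_right hcs (by positivity) |>.trans_eq rfl
        have hb0 : b 0 ≤ 1 := by
          simp only [hb_def]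
          rw [div_le_one (hdpos 0)]
          exact hA0le
        have hbx₀ : 1 < b x₀ := by
          simp only [hb_def]
          rw [lt_div_iff₀ (hdpos x₀), one_mul]
          exact hx₀
        have hclaim : ∀ x, m < x → f x ≤ g x := by
          intro x hx
          have h1 : b x₀ ≤ b x :=
            logconvex_seq b hbpos hbconv hb0 hbx₀ x (le_trans hx₀m (le_of_lt hx))
          have h2 : 1 < b x := lt_of_lt_of_le hbx₀ h1
          have h3 : d x ≤ A x := by
            rw [hb_def] at h2
            simp only [] at h2
            rw [lt_div_iff₀ (hdpos x), one_mul] at h2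
            exact h2.le
          rw [hf_eq, hg_eq]
          exact mul_le_mul_of_nonneg_left h3 (nbC_pos hk x).le
        rw [← htail_f m, ← htail_g m]
        have hsT : Summable (fun x : ℕ => if m < x then f x else 0) := by
          apply (hf1.summable.indicator {x | m < x}).congr
          intro x
          simp [Set.indicator_apply]
        have hsG : Summable (fun x : ℕ => if m < x then g x else 0) := by
          apply (hg1.summable.indicator {x | m < x}).congr
          intro x
          simp [Set.indicator_apply]
        apply Summable.tsum_le_tsum _ hsT hsG
        intro x
        by_cases hx : m < x
        · simp only [hx, if_true]
          exact hclaim x hx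
        · simp [hx]
  · -- part 2
    have hstep : ∀ x : ℕ,
        (f (x+1) / g (x+1) ≤ f x / g x ↔ (1-p) * A x ≤ A (x+1)) := by
      intro x
      have hgx : ∀ y : ℕ, f y / g y = (p ^ k * (1-p) ^ y) / A y := by
        intro y
        rw [hf_eq, hg_eq, mul_div_mul_left _ _ (nbC_pos hk y).ne']
      rw [hgx, hgx]
      rw [div_le_div_iff₀ (hApos (x+1)) (hApos x)]
      constructor
      · intro h
        have h2 : (p ^ k * (1-p) ^ x) * ((1-p) * A x) ≤ (p ^ k * (1-p) ^ x) * A (x+1) := by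
          calc (p ^ k * (1-p) ^ x) * ((1-p) * A x)
              = p ^ k * (1-p) ^ (x+1) * A x := by ring
            _ ≤ p ^ k * (1-p) ^ x * A (x+1) := h
            _ = (p ^ k * (1-p) ^ x) * A (x+1) := by ring
        exact le_of_mul_le_mul_left h2 (by positivity)
      · intro h
        calc p ^ k * (1-p) ^ (x+1) * A x = (p ^ k * (1-p) ^ x) * ((1-p) * A x) := by ring
          _ ≤ (p ^ k * (1-p) ^ x) * A (x+1) := by
              apply mul_le_mul_of_nonneg_left h (by positivity)
          _ = p ^ k * (1-p) ^ x * A (x+1) := by ring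
    rw [hI1, hI2]
    constructor
    · intro hant
      have h01 : f 1 / g 1 ≤ f 0 / g 0 := hant (by norm_num : (0:ℕ) ≤ 1)
      have h1 := (hstep 0).mp h01
      rw [hAsucc 0] at h1
      rw [div_le_iff₀ (hApos 0)]
      linarith
    · intro hcond
      have hB0 : B 0 ≤ p * A 0 := by
        rw [div_le_iff₀ (hApos 0)] at hcond
        linarith
      have hind : ∀ x, B x ≤ p * A x := by
        intro x
        induction x with
        | zero => exact hB0
        | succ n ih =>
          have hcs := Aint_cs hμ hk 0 n
          have hBsucc : B (n+1) = B n - Aint k μ 2 n := Aint_succ hμ hk 1 n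
          have hAn1 : A (n+1) = A n - B n := hAsucc n
          have hABlt : B n < A n := by
            have := hApos (n+1)
            rw [hAn1] at this
            linarith
          rw [hBsucc, hAn1]
          have hcs' : (B n) ^ 2 ≤ A n * Aint k μ 2 n := by
            have : Aint k μ (0+1) n = B n := rfl
            rw [← this]
            exact hcs
          nlinarith [hApos n, hBpos n, mul_nonneg (sub_nonneg.mpr ih) (sub_nonneg.mpr hABlt.le)]
      apply antitone_nat_of_succ_le
      intro x
      apply (hstep x).mpr
      rw [hAsucc x]
      have := hind x
      nlinarith [hApos x]
end

section
/- Let X ~ Gamma(α, β) (scale parameterization, density proportional to x^{α−1} e^{−x/β}) and let Y be a scale mixture of Gamma(α, t) distributions with respect to a probability measure μ on t ∈ (0,∞). Then X ≤_st Y if and only if ∫ t^{−α} dμ(t) ≤ β^{−α}. -/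
open MeasureTheory Set
open scoped ENNReal

namespace Stmt14

noncomputable def phi (α : ℝ) (s : ℝ) : ℝ := Real.exp (-s) * s ^ (α - 1)
noncomputable def U (α : ℝ) (r : ℝ) : ℝ := ∫ s in Ioi r, phi α s
noncomputable def V (α : ℝ) (r : ℝ) : ℝ := ∫ s in Ioc 0 r, phi α s

lemma phi_meas (α : ℝ) : Measurable (phi α) :=
  (Real.measurable_exp.comp measurable_neg).mul (measurable_id.pow_const _)

lemma integrableOn_phi {α : ℝ} (hα : 0 < α) {r : ℝ} (hr : 0 ≤ r) :
    IntegrableOn (phi α) (Ioi r) :=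
  (Real.GammaIntegral_convergent hα).mono_set (Ioi_subset_Ioi hr)

lemma phi_nonneg {α s : ℝ} (hs : 0 ≤ s) : 0 ≤ phi α s :=
  mul_nonneg (Real.exp_nonneg _) (Real.rpow_nonneg hs _)

lemma U_add_V {α : ℝ} (hα : 0 < α) {r : ℝ} (hr : 0 ≤ r) :
    V α r + U α r = Real.Gamma α := by
  rw [Real.Gamma_eq_integral hα]
  have : Ioi (0:ℝ) = Ioc 0 r ∪ Ioi r := (Ioc_union_Ioi_eq_Ioi hr).symm
  rw [this, setIntegral_union Ioc_disjoint_Ioi_same measurableSet_Ioi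
    (((Real.GammaIntegral_convergent hα)).mono_set Ioc_subset_Ioi_self)
    (integrableOn_phi hα hr)]
  rfl

lemma V_nonneg {α : ℝ} {r : ℝ} : 0 ≤ V α r :=
  setIntegral_nonneg measurableSet_Ioc fun s hs => phi_nonneg hs.1.le

lemma U_nonneg {α : ℝ} {r : ℝ} (hr : 0 ≤ r) : 0 ≤ U α r :=
  setIntegral_nonneg measurableSet_Ioi fun s hs => phi_nonneg (hr.trans hs.le)

lemma U_le_Gamma {α : ℝ} (hα : 0 < α) {r : ℝ} (hr : 0 ≤ r) : U α r ≤ Real.Gamma α := by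
  have := U_add_V hα hr
  nlinarith [V_nonneg (α := α) (r := r)]

lemma V_le {α : ℝ} (hα : 0 < α) {r : ℝ} (hr : 0 ≤ r) : V α r ≤ r ^ α / α := by
  have h1 : V α r ≤ ∫ s in Ioc 0 r, s ^ (α - 1) := by
    apply setIntegral_mono_on (((Real.GammaIntegral_convergent hα)).mono_set Ioc_subset_Ioi_self)
    · exact (intervalIntegral.intervalIntegrable_rpow' (a := 0) (b := r) (by linarith)).1
    · exact measurableSet_Ioc
    · intro s hs
      calc Real.exp (-s) * s ^ (α - 1) ≤ 1 * s ^ (α - 1) := by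
            apply mul_le_mul_of_nonneg_right _ (Real.rpow_nonneg hs.1.le _)
            exact Real.exp_le_one_iff.2 (by linarith [hs.1])
        _ = s ^ (α - 1) := one_mul _
  have h2 : (∫ s in Ioc 0 r, s ^ (α - 1)) = r ^ α / α := by
    rw [← intervalIntegral.integral_of_le hr, integral_rpow (Or.inl (by linarith))]
    rw [Real.zero_rpow (by linarith : α - 1 + 1 ≠ 0)]
    ring_nf
  linarith

lemma V_ge {α : ℝ} (hα : 0 < α) {r : ℝ} (hr : 0 ≤ r) :
    Real.exp (-r) * (r ^ α / α) ≤ V α r := by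
  have h1 : (∫ s in Ioc 0 r, Real.exp (-r) * s ^ (α - 1)) ≤ V α r := by
    apply setIntegral_mono_on
    · exact (intervalIntegral.intervalIntegrable_rpow' (a := 0) (b := r) (by linarith)).1.const_mul _
    · exact (((Real.GammaIntegral_convergent hα)).mono_set Ioc_subset_Ioi_self)
    · exact measurableSet_Ioc
    · intro s hs
      exact mul_le_mul_of_nonneg_right
        (Real.exp_le_exp.2 (by linarith [hs.2])) (Real.rpow_nonneg hs.1.le _)
  have h2 : (∫ s in Ioc 0 r, Real.exp (-r) * s ^ (α - 1))
      = Real.exp (-r) * (r ^ α / α) := by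
    rw [integral_const_mul, ← intervalIntegral.integral_of_le hr,
      integral_rpow (Or.inl (by linarith)), Real.zero_rpow (by linarith : α - 1 + 1 ≠ 0)]
    ring_nf
  linarith



/-- pointwise identity used in the substitution -/
lemma pt_eq {α : ℝ} {t y : ℝ} (ht : 0 < t) (hy : 0 < y) :
    t ^ (-α) * y ^ (α - 1) * Real.exp (-y / t) = t⁻¹ * phi α (t⁻¹ * y) := by
  unfold phi
  rw [show t⁻¹ * y = y / t by ring, Real.div_rpow hy.le ht.le]
  rw [Real.rpow_sub ht, Real.rpow_one, Real.rpow_neg ht.le]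
  have h1 : Real.exp (-(y/t)) = Real.exp (-y/t) := by ring_nf
  rw [h1]
  field_simp

lemma integrableOn_sub {α : ℝ} (hα : 0 < α) {t x : ℝ} (ht : 0 < t) (hx : 0 ≤ x) :
    IntegrableOn (fun y => t ^ (-α) * y ^ (α - 1) * Real.exp (-y / t)) (Ioi x) := by
  have h0 : IntegrableOn (fun y => phi α (t⁻¹ * y)) (Ioi x) := by
    rw [integrableOn_Ioi_comp_mul_left_iff (phi α) x (inv_pos.2 ht)]
    exact integrableOn_phi hα (by positivity)
  apply IntegrableOn.congr_fun (h0.const_mul t⁻¹) _ measurableSet_Ioi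
  intro y hy
  exact (pt_eq ht (lt_of_le_of_lt hx hy)).symm

lemma integral_sub_eq {α : ℝ} {t x : ℝ} (ht : 0 < t) (hx : 0 ≤ x) :
    (∫ y in Ioi x, t ^ (-α) * y ^ (α - 1) * Real.exp (-y / t)) = U α (x / t) := by
  have h1 : (∫ y in Ioi x, t ^ (-α) * y ^ (α - 1) * Real.exp (-y / t))
      = ∫ y in Ioi x, t⁻¹ * phi α (t⁻¹ * y) := by
    apply setIntegral_congr_fun measurableSet_Ioi
    intro y hy
    exact pt_eq ht (lt_of_le_of_lt hx hy)
  rw [h1, integral_const_mul, integral_comp_mul_left_Ioi (phi α) x (inv_pos.2 ht)]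
  rw [smul_eq_mul]
  have : t⁻¹ * x = x / t := by ring
  rw [this, inv_inv, U]
  field_simp

lemma hasDerivAt_U {α : ℝ} (hα : 0 < α) {r : ℝ} (hr : 0 < r) :
    HasDerivAt (U α) (-phi α r) r := by
  have hii : ∀ a b : ℝ, 0 < a → 0 < b → IntervalIntegrable (phi α) volume a b := by
    intro a b ha hb
    constructor
    · exact (integrableOn_phi hα ha.le).mono_set Ioc_subset_Ioi_self
    · exact (integrableOn_phi hα hb.le).mono_set Ioc_subset_Ioi_self
  have hW : HasDerivAt (fun u => ∫ s in (1:ℝ)..u, phi α s) (phi α r) r := by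
    apply intervalIntegral.integral_hasDerivAt_right (hii 1 r one_pos hr)
      ((phi_meas α).stronglyMeasurable.stronglyMeasurableAtFilter)
    · apply ContinuousAt.mul
      · exact (Real.continuous_exp.comp continuous_neg).continuousAt
      · exact Real.continuousAt_rpow_const _ _ (Or.inl hr.ne')
  have key : ∀ u : ℝ, 0 < u → U α u = U α 1 - ∫ s in (1:ℝ)..u, phi α s := by
    intro u hu
    rcases le_total u 1 with h | h
    · rw [intervalIntegral.integral_symm, intervalIntegral.integral_of_le h]
      have hsplit : Ioi u = Ioc u 1 ∪ Ioi 1 := (Ioc_union_Ioi_eq_Ioi h).symm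
      rw [U, hsplit, setIntegral_union Ioc_disjoint_Ioi_same measurableSet_Ioi
        ((integrableOn_phi hα hu.le).mono_set Ioc_subset_Ioi_self)
        (integrableOn_phi hα zero_le_one)]
      unfold U
      ring
    · rw [intervalIntegral.integral_of_le h]
      have hsplit : Ioi (1:ℝ) = Ioc 1 u ∪ Ioi u := (Ioc_union_Ioi_eq_Ioi h).symm
      have : U α 1 = (∫ s in Ioc 1 u, phi α s) + U α u := by
        rw [U, hsplit, setIntegral_union Ioc_disjoint_Ioi_same measurableSet_Ioi
          ((integrableOn_phi hα zero_le_one).mono_set Ioc_subset_Ioi_self)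
          (integrableOn_phi hα hu.le)]
        rfl
      rw [this]; ring
  have heq : (fun u => U α 1 - ∫ s in (1:ℝ)..u, phi α s) =ᶠ[nhds r] U α := by
    filter_upwards [Ioi_mem_nhds hr] with u hu
    exact (key u hu).symm
  have := (hW.const_sub (U α 1)).congr_of_eventuallyEq heq.symm
  simpa using this



/-- derivative of `h s = U α (x/s) + K * s^(-α)` with `K = x^α * exp(-x/β)/α` -/
lemma hasDerivAt_h {α β x : ℝ} (hα : 0 < α) (hβ : 0 < β) (hx : 0 < x) {s : ℝ} (hs : 0 < s) :
    HasDerivAt (fun s => U α (x / s) + (x ^ α * Real.exp (-x / β) / α) * s ^ (-α))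
      (x ^ α * s ^ (-α - 1) * (Real.exp (-x / s) - Real.exp (-x / β))) s := by
  have hxs : 0 < x / s := div_pos hx hs
  have hg : HasDerivAt (fun s : ℝ => x / s) (-(x / s ^ 2)) s := by
    simpa [div_eq_mul_inv, mul_comm] using (hasDerivAt_inv hs.ne').const_mul x
  have h1 : HasDerivAt (fun s : ℝ => U α (x / s)) (-phi α (x / s) * -(x / s ^ 2)) s :=
    (hasDerivAt_U hα hxs).comp s hg
  have h2 : HasDerivAt (fun s : ℝ => (x ^ α * Real.exp (-x / β) / α) * s ^ (-α))
      ((x ^ α * Real.exp (-x / β) / α) * (-α * s ^ (-α - 1))) s :=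
    (Real.hasDerivAt_rpow_const (Or.inl hs.ne')).const_mul _
  have h3 := h1.add h2
  refine h3.congr_deriv (Eq.symm ?_)
  have hsa : (s:ℝ) ^ α ≠ 0 := (Real.rpow_pos_of_pos hs α).ne'
  have hxa : (x:ℝ) ^ α ≠ 0 := (Real.rpow_pos_of_pos hx α).ne'
  unfold phi
  rw [Real.rpow_sub hxs, Real.rpow_one, Real.div_rpow hx.le hs.le,
    Real.rpow_sub hs, Real.rpow_one, Real.rpow_neg hs.le, ← neg_div s x]
  field_simp
  ring

/-- key pointwise inequality -/
lemma key_min {α β x t : ℝ} (hα : 0 < α) (hβ : 0 < β) (hx : 0 < x) (ht : 0 < t) :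
    U α (x / β) + (x ^ α * Real.exp (-x / β) / α) * β ^ (-α)
      ≤ U α (x / t) + (x ^ α * Real.exp (-x / β) / α) * t ^ (-α) := by
  set h : ℝ → ℝ := fun s => U α (x / s) + (x ^ α * Real.exp (-x / β) / α) * s ^ (-α) with hh
  rcases le_total β t with hbt | htb
  · -- monotone on Ici β
    have hmono : MonotoneOn h (Ici β) := by
      apply monotoneOn_of_deriv_nonneg (convex_Ici β)
      · intro s hs
        exact (hasDerivAt_h hα hβ hx (hβ.trans_le hs)).continuousAt.continuousWithinAt
      · intro s hs
        rw [interior_Ici] at hs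
        exact (hasDerivAt_h hα hβ hx (hβ.trans hs)).differentiableAt.differentiableWithinAt
      · intro s hs
        rw [interior_Ici] at hs
        rw [(hasDerivAt_h hα hβ hx (hβ.trans hs)).deriv]
        have hsp : 0 < s := hβ.trans hs
        have : Real.exp (-x / β) ≤ Real.exp (-x / s) := by
          apply Real.exp_le_exp.2
          rw [neg_div, neg_div, neg_le_neg_iff]
          exact div_le_div_of_nonneg_left hx.le hβ hs.le
        have h1 : (0:ℝ) ≤ x ^ α * s ^ (-α - 1) := by positivity
        exact mul_nonneg h1 (by linarith)
    exact hmono self_mem_Ici hbt hbt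
  · -- antitone on Icc t β
    have hanti : AntitoneOn h (Icc t β) := by
      apply antitoneOn_of_deriv_nonpos (convex_Icc t β)
      · intro s hs
        exact (hasDerivAt_h hα hβ hx (ht.trans_le hs.1)).continuousAt.continuousWithinAt
      · intro s hs
        rw [interior_Icc] at hs
        exact (hasDerivAt_h hα hβ hx (ht.trans hs.1)).differentiableAt.differentiableWithinAt
      · intro s hs
        rw [interior_Icc] at hs
        rw [(hasDerivAt_h hα hβ hx (ht.trans hs.1)).deriv]
        have hsp : 0 < s := ht.trans hs.1
        have hle : Real.exp (-x / s) - Real.exp (-x / β) ≤ 0 := by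
          rw [sub_nonpos]
          apply Real.exp_le_exp.2
          rw [neg_div, neg_div, neg_le_neg_iff]
          exact div_le_div_of_nonneg_left hx.le hsp hs.2.le
        have h1 : (0:ℝ) ≤ x ^ α * s ^ (-α - 1) := by positivity
        exact mul_nonpos_of_nonneg_of_nonpos h1 hle
    exact hanti (left_mem_Icc.2 htb) (right_mem_Icc.2 htb) htb

/-- sup bound: `t^(-α) * exp (-y/t) ≤ (α/y)^α * exp (-α)` for `y, t > 0` -/
lemma sup_bound {α y t : ℝ} (hα : 0 < α) (hy : 0 < y) (ht : 0 < t) :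
    t ^ (-α) * Real.exp (-y / t) ≤ (α / y) ^ α * Real.exp (-α) := by
  have hu : (0:ℝ) < t⁻¹ := inv_pos.2 ht
  have hay : (0:ℝ) < α / y := div_pos hα hy
  have hlog : Real.log (t⁻¹ / (α / y)) ≤ t⁻¹ / (α / y) - 1 :=
    Real.log_le_sub_one_of_pos (by positivity)
  rw [Real.log_div hu.ne' hay.ne'] at hlog
  have key : α * Real.log t⁻¹ - y * t⁻¹ ≤ α * Real.log (α / y) - α := by
    have h2 : t⁻¹ / (α / y) = y * t⁻¹ / α := by field_simp
    rw [h2] at hlog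
    have := mul_le_mul_of_nonneg_left hlog hα.le
    have h3 : α * (y * t⁻¹ / α - 1) = y * t⁻¹ - α := by field_simp
    rw [mul_sub, h3] at this
    linarith
  have e1 : t ^ (-α) * Real.exp (-y / t) = Real.exp (α * Real.log t⁻¹ - y * t⁻¹) := by
    rw [Real.rpow_def_of_pos ht, ← Real.exp_add, Real.log_inv]
    congr 1
    field_simp
    ring
  have e2 : (α / y) ^ α * Real.exp (-α) = Real.exp (α * Real.log (α / y) - α) := by
    rw [Real.rpow_def_of_pos hay, ← Real.exp_add]
    congr 1
    ring
  rw [e1, e2]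
  exact Real.exp_le_exp.2 key



variable {α : ℝ}

lemma ae_pos {μ : Measure ℝ} (hμ : μ (Ioi 0)ᶜ = 0) : ∀ᵐ t ∂μ, 0 < t := by
  rw [ae_iff]
  have h : {t : ℝ | ¬ 0 < t} = (Ioi 0)ᶜ := by ext t; simp [mem_Ioi]
  rw [h]; exact hμ

lemma meas_psi (hα : 0 < α) {μ : Measure ℝ} (hμ : μ (Ioi 0)ᶜ = 0) {x : ℝ} (hx : 0 ≤ x) :
    AEStronglyMeasurable (fun t => (Real.Gamma α)⁻¹ * U α (x / t)) μ := by
  rcases eq_or_lt_of_le hx with h | h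
  · simp only [← h, zero_div]
    exact aestronglyMeasurable_const
  · have hcont : ContinuousOn (fun t => (Real.Gamma α)⁻¹ * U α (x / t)) (Ioi 0) := by
      intro t ht
      apply ContinuousAt.continuousWithinAt
      exact continuousAt_const.mul ((hasDerivAt_U hα (div_pos h ht)).continuousAt.comp
        (continuousAt_const.div continuousAt_id (ne_of_gt ht)))
    have := hcont.aestronglyMeasurable (μ := μ) measurableSet_Ioi
    rwa [Measure.restrict_eq_self_of_ae_mem (s := Ioi 0) ((ae_pos hμ).mono fun t ht => mem_Ioi.2 ht)] at this


lemma joint_meas (hα : 0 < α) : Measurable (Function.uncurry fun y t : ℝ =>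
    ENNReal.ofReal ((Real.Gamma α)⁻¹ * t ^ (-α) * y ^ (α - 1) * Real.exp (-y / t))) := by
  apply ENNReal.measurable_ofReal.comp
  apply Measurable.mul
  · apply Measurable.mul
    · exact measurable_const.mul (measurable_snd.pow_const _)
    · exact measurable_fst.pow_const _
  · exact Real.measurable_exp.comp ((measurable_fst.neg).div measurable_snd)

lemma term_nonneg (hα : 0 < α) {t y : ℝ} (ht : 0 ≤ t) (hy : 0 ≤ y) :
    0 ≤ (Real.Gamma α)⁻¹ * t ^ (-α) * y ^ (α - 1) * Real.exp (-y / t) :=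
  mul_nonneg (mul_nonneg (mul_nonneg (inv_nonneg.2 (Real.Gamma_pos_of_pos hα).le)
    (Real.rpow_nonneg ht _)) (Real.rpow_nonneg hy _)) (Real.exp_nonneg _)

lemma inner_lintegral_eq (hα : 0 < α) {t x : ℝ} (ht : 0 < t) (hx : 0 ≤ x) :
    (∫⁻ y in Ioi x, ENNReal.ofReal ((Real.Gamma α)⁻¹ * t ^ (-α) * y ^ (α - 1)
        * Real.exp (-y / t))) = ENNReal.ofReal ((Real.Gamma α)⁻¹ * U α (x / t)) := by
  have hfe : (fun y : ℝ => (Real.Gamma α)⁻¹ * t ^ (-α) * y ^ (α - 1) * Real.exp (-y / t))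
      = fun y => (Real.Gamma α)⁻¹ * (t ^ (-α) * y ^ (α - 1) * Real.exp (-y / t)) := by
    funext y; ring
  have hInt : IntegrableOn (fun y : ℝ => (Real.Gamma α)⁻¹ * t ^ (-α) * y ^ (α - 1)
      * Real.exp (-y / t)) (Ioi x) := by
    rw [hfe]; exact (integrableOn_sub hα ht hx).const_mul _
  have hnn : 0 ≤ᵐ[volume.restrict (Ioi x)] (fun y : ℝ => (Real.Gamma α)⁻¹ * t ^ (-α)
      * y ^ (α - 1) * Real.exp (-y / t)) := by
    exact (ae_restrict_iff' measurableSet_Ioi).2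
      (ae_of_all _ fun y hy => term_nonneg hα ht.le (hx.trans (le_of_lt hy)))
  rw [← ofReal_integral_eq_lintegral_ofReal hInt hnn, hfe, integral_const_mul,
    integral_sub_eq ht hx]

lemma tonelli (hα : 0 < α) (μ : Measure ℝ) [IsProbabilityMeasure μ]
    (hμ : μ (Ioi 0)ᶜ = 0) {x : ℝ} (hx : 0 ≤ x) :
    (∫ y in Ioi x, if 0 < y then
        ∫ t, (Real.Gamma α)⁻¹ * t ^ (-α) * y ^ (α - 1) * Real.exp (-y / t) ∂μ else 0)
      = ∫ t, (Real.Gamma α)⁻¹ * U α (x / t) ∂μ := by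
  set c := (Real.Gamma α)⁻¹ with hc
  have hc0 : 0 < c := inv_pos.2 (Real.Gamma_pos_of_pos hα)
  set f : ℝ → ℝ → ℝ≥0∞ := fun y t => ENNReal.ofReal (c * t ^ (-α) * y ^ (α - 1)
    * Real.exp (-y / t)) with hf
  set Li : ℝ → ℝ≥0∞ := fun y => ∫⁻ t, f y t ∂μ with hLi
  -- the inner Bochner integral equals toReal of the inner lintegral
  have d1 : ∀ y : ℝ, 0 < y → (∫ t, c * t ^ (-α) * y ^ (α - 1) * Real.exp (-y / t) ∂μ)
      = (Li y).toReal := by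
    intro y hy
    apply integral_eq_lintegral_of_nonneg_ae
    · exact (ae_pos hμ).mono fun t ht => term_nonneg hα ht.le hy.le
    · exact (((measurable_const.mul (measurable_id.pow_const _)).mul_const _).mul
        (Real.measurable_exp.comp (measurable_const.div measurable_id))).aestronglyMeasurable
  have hLif : ∀ y : ℝ, 0 < y → Li y < ⊤ := by
    intro y hy
    have hb : ∀ᵐ t ∂μ, f y t ≤ ENNReal.ofReal (c * y ^ (α-1) * ((α / y) ^ α * Real.exp (-α))) := by
      filter_upwards [ae_pos hμ] with t ht
      apply ENNReal.ofReal_le_ofReal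
      have h1 : c * t ^ (-α) * y ^ (α - 1) * Real.exp (-y / t)
          = c * y ^ (α-1) * (t ^ (-α) * Real.exp (-y / t)) := by ring
      rw [h1]
      exact mul_le_mul_of_nonneg_left (sup_bound hα hy ht)
        (mul_nonneg hc0.le (Real.rpow_nonneg hy.le _))
    calc Li y ≤ ∫⁻ _, ENNReal.ofReal (c * y ^ (α-1) * ((α / y) ^ α * Real.exp (-α))) ∂μ :=
          lintegral_mono_ae hb
      _ = ENNReal.ofReal (c * y ^ (α-1) * ((α / y) ^ α * Real.exp (-α))) := by
          simp [lintegral_const]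
      _ < ⊤ := ENNReal.ofReal_lt_top
  have lhs1 : (∫ y in Ioi x, if 0 < y then
        ∫ t, c * t ^ (-α) * y ^ (α - 1) * Real.exp (-y / t) ∂μ else 0)
      = ∫ y in Ioi x, (if 0 < y then (Li y).toReal else 0) := by
    apply integral_congr_ae
    apply ae_of_all
    intro y
    by_cases hy : 0 < y
    · simp only [if_pos hy, d1 y hy]
    · simp only [if_neg hy]
  have meas_Li : Measurable Li := Measurable.lintegral_prod_right (joint_meas hα)
  have meas_g1 : Measurable (fun y => if 0 < y then (Li y).toReal else 0) :=
    Measurable.ite measurableSet_Ioi (ENNReal.measurable_toReal.comp meas_Li) measurable_const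
  have lhs2 : (∫ y in Ioi x, (if 0 < y then (Li y).toReal else 0))
      = (∫⁻ y in Ioi x, ENNReal.ofReal (if 0 < y then (Li y).toReal else 0)).toReal := by
    apply integral_eq_lintegral_of_nonneg_ae
    · apply ae_of_all
      intro y
      dsimp
      split <;> simp [ENNReal.toReal_nonneg]
    · exact meas_g1.aestronglyMeasurable
  have lhs3 : (∫⁻ y in Ioi x, ENNReal.ofReal (if 0 < y then (Li y).toReal else 0))
      = ∫⁻ y in Ioi x, Li y := by
    apply setLIntegral_congr_fun measurableSet_Ioi
    intro y hy
    have hy0 : 0 < y := lt_of_le_of_lt hx hy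
    beta_reduce
    rw [if_pos hy0, ENNReal.ofReal_toReal (hLif y hy0).ne]
  have swap : (∫⁻ y in Ioi x, Li y) = ∫⁻ t, (∫⁻ y in Ioi x, f y t) ∂μ :=
    lintegral_lintegral_swap ((joint_meas hα).aemeasurable)
  have inner : ∀ᵐ t ∂μ, (∫⁻ y in Ioi x, f y t) = ENNReal.ofReal (c * U α (x / t)) := by
    filter_upwards [ae_pos hμ] with t ht
    exact inner_lintegral_eq hα ht hx
  have rhs1 : (∫ t, c * U α (x / t) ∂μ)
      = (∫⁻ t, ENNReal.ofReal (c * U α (x / t)) ∂μ).toReal := by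
    apply integral_eq_lintegral_of_nonneg_ae
    · filter_upwards [ae_pos hμ] with t ht
      exact mul_nonneg hc0.le (U_nonneg (div_nonneg hx ht.le))
    · exact meas_psi hα hμ hx
  rw [lhs1, lhs2, lhs3, swap, lintegral_congr_ae inner, rhs1]


lemma Fbar (hα : 0 < α) {β x : ℝ} (hβ : 0 < β) (hx : 0 ≤ x) :
    (∫ y in Ioi x, if 0 < y then
        (Real.Gamma α)⁻¹ * β ^ (-α) * y ^ (α - 1) * Real.exp (-y / β) else 0)
      = (Real.Gamma α)⁻¹ * U α (x / β) := by
  have h1 : (∫ y in Ioi x, if 0 < y then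
        (Real.Gamma α)⁻¹ * β ^ (-α) * y ^ (α - 1) * Real.exp (-y / β) else 0)
      = ∫ y in Ioi x, (Real.Gamma α)⁻¹ * (β ^ (-α) * y ^ (α - 1) * Real.exp (-y / β)) := by
    apply setIntegral_congr_fun measurableSet_Ioi
    intro y hy
    dsimp only
    rw [if_pos (lt_of_le_of_lt hx hy)]
    ring
  rw [h1, integral_const_mul, integral_sub_eq hβ hx]

lemma shift {g : ℝ → ℝ} {x : ℝ} (hx : x ≤ 0) :
    (∫ y in Ioi x, if 0 < y then g y else 0) = ∫ y in Ioi 0, if 0 < y then g y else 0 := by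
  apply setIntegral_eq_of_subset_of_ae_diff_eq_zero measurableSet_Ioi.nullMeasurableSet
    (Ioi_subset_Ioi hx)
  apply ae_of_all
  intro y hy
  exact if_neg fun h => hy.2 h

lemma psi_integrable (hα : 0 < α) {μ : Measure ℝ} [IsProbabilityMeasure μ]
    (hμ : μ (Ioi 0)ᶜ = 0) {x : ℝ} (hx : 0 ≤ x) :
    Integrable (fun t => (Real.Gamma α)⁻¹ * U α (x / t)) μ := by
  have hc0 : (0:ℝ) < (Real.Gamma α)⁻¹ := inv_pos.2 (Real.Gamma_pos_of_pos hα)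
  apply Integrable.mono' (integrable_const ((Real.Gamma α)⁻¹ * Real.Gamma α))
    (meas_psi hα hμ hx)
  filter_upwards [ae_pos hμ] with t ht
  rw [Real.norm_eq_abs, abs_of_nonneg (mul_nonneg hc0.le (U_nonneg (div_nonneg hx ht.le)))]
  exact mul_le_mul_of_nonneg_left (U_le_Gamma hα (div_nonneg hx ht.le)) hc0.le

lemma forward (hα : 0 < α) {β : ℝ} (hβ : 0 < β) (μ : Measure ℝ) [IsProbabilityMeasure μ]
    (hμ : μ (Ioi 0)ᶜ = 0)
    (hm : ∫⁻ t, ENNReal.ofReal (t ^ (-α)) ∂μ ≤ ENNReal.ofReal (β ^ (-α)))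
    {x : ℝ} (hx : 0 < x) :
    (Real.Gamma α)⁻¹ * U α (x / β) ≤ ∫ t, (Real.Gamma α)⁻¹ * U α (x / t) ∂μ := by
  set c := (Real.Gamma α)⁻¹ with hcdef
  have hc0 : (0:ℝ) < c := inv_pos.2 (Real.Gamma_pos_of_pos hα)
  set K := x ^ α * Real.exp (-x / β) / α with hKdef
  have hK : 0 ≤ K := by positivity
  have integ_tpow : Integrable (fun t : ℝ => t ^ (-α)) μ := by
    refine ⟨(measurable_id.pow_const _).aestronglyMeasurable, ?_⟩
    rw [hasFiniteIntegral_iff_ofReal ((ae_pos hμ).mono fun t ht => Real.rpow_nonneg ht.le _)]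
    exact lt_of_le_of_lt hm ENNReal.ofReal_lt_top
  have hreal : ∫ t, t ^ (-α) ∂μ ≤ β ^ (-α) := by
    rw [integral_eq_lintegral_of_nonneg_ae
      ((ae_pos hμ).mono fun t ht => Real.rpow_nonneg ht.le _)
      (measurable_id.pow_const _).aestronglyMeasurable]
    calc (∫⁻ t, ENNReal.ofReal (t ^ (-α)) ∂μ).toReal
        ≤ (ENNReal.ofReal (β ^ (-α))).toReal :=
          ENNReal.toReal_mono ENNReal.ofReal_ne_top hm
      _ = β ^ (-α) := ENNReal.toReal_ofReal (Real.rpow_nonneg hβ.le _)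
  have hbound_int : Integrable (fun t : ℝ => (c * U α (x / β) + c * K * β ^ (-α))
      - c * K * t ^ (-α)) μ :=
    (integrable_const _).sub (integ_tpow.const_mul _)
  have hmono : ∫ t, ((c * U α (x / β) + c * K * β ^ (-α)) - c * K * t ^ (-α)) ∂μ
      ≤ ∫ t, c * U α (x / t) ∂μ := by
    apply integral_mono_ae hbound_int (psi_integrable hα hμ hx.le)
    filter_upwards [ae_pos hμ] with t ht
    have h := mul_le_mul_of_nonneg_left (key_min hα hβ hx ht) hc0.le
    have e1 : c * (U α (x / β) + K * β ^ (-α)) = c * U α (x / β) + c * K * β ^ (-α) := by ring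
    have e2 : c * (U α (x / t) + K * t ^ (-α)) = c * U α (x / t) + c * K * t ^ (-α) := by ring
    rw [e1, e2] at h
    linarith
  have hval : ∫ t, ((c * U α (x / β) + c * K * β ^ (-α)) - c * K * t ^ (-α)) ∂μ
      = (c * U α (x / β) + c * K * β ^ (-α)) - c * K * ∫ t, t ^ (-α) ∂μ := by
    rw [integral_sub (integrable_const _) (integ_tpow.const_mul _), integral_const,
      probReal_univ, one_smul, integral_const_mul]
  rw [hval] at hmono
  have : 0 ≤ c * K * (β ^ (-α) - ∫ t, t ^ (-α) ∂μ) :=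
    mul_nonneg (mul_nonneg hc0.le hK) (by linarith)
  nlinarith


lemma q_meas (α x : ℝ) : Measurable (fun t : ℝ => Real.exp (-x / t) * t ^ (-α)) :=
  (Real.measurable_exp.comp (measurable_const.div measurable_id)).mul
    (measurable_id.pow_const _)

lemma backward_step (hα : 0 < α) {β : ℝ} (hβ : 0 < β) (μ : Measure ℝ)
    [IsProbabilityMeasure μ] (hμ : μ (Ioi 0)ᶜ = 0) {x : ℝ} (hx : 0 < x)
    (H : (Real.Gamma α)⁻¹ * U α (x / β) ≤ ∫ t, (Real.Gamma α)⁻¹ * U α (x / t) ∂μ) :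
    ∫⁻ t, ENNReal.ofReal (Real.exp (-x / t) * t ^ (-α)) ∂μ ≤ ENNReal.ofReal (β ^ (-α)) := by
  set c := (Real.Gamma α)⁻¹ with hcdef
  have hc0 : (0:ℝ) < c := inv_pos.2 (Real.Gamma_pos_of_pos hα)
  have hG : Real.Gamma α = c⁻¹ := by rw [hcdef, inv_inv]
  set q : ℝ → ℝ := fun t => Real.exp (-x / t) * t ^ (-α) with hq
  have hq_nonneg : ∀ᵐ t ∂μ, 0 ≤ q t := by
    filter_upwards [ae_pos hμ] with t ht
    exact mul_nonneg (Real.exp_nonneg _) (Real.rpow_nonneg ht.le _)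
  -- pointwise : (x^α/α) * q t ≤ V α (x/t)
  have hpt : ∀ᵐ t ∂μ, x ^ α / α * q t ≤ V α (x / t) := by
    filter_upwards [ae_pos hμ] with t ht
    have hr : (0:ℝ) ≤ x / t := (div_pos hx ht).le
    have h1 := V_ge hα hr
    have h2 : (x / t) ^ α = x ^ α * t ^ (-α) := by
      rw [Real.div_rpow hx.le ht.le, Real.rpow_neg ht.le, div_eq_mul_inv]
    have h3 : Real.exp (-(x / t)) = Real.exp (-x / t) := by rw [neg_div]
    rw [h2, h3] at h1
    calc x ^ α / α * q t = Real.exp (-x / t) * (x ^ α * t ^ (-α) / α) := by rw [hq]; ring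
      _ ≤ V α (x / t) := h1
  -- V-form integrable
  have hVint : Integrable (fun t => Real.Gamma α - U α (x / t)) μ := by
    have h1 : Integrable (fun t => c⁻¹ * (c * U α (x / t))) μ :=
      (psi_integrable hα hμ hx.le).const_mul _
    apply (integrable_const (Real.Gamma α)).sub
    apply h1.congr
    apply ae_of_all
    intro t
    field_simp
  have hVeq : ∀ᵐ t ∂μ, Real.Gamma α - U α (x / t) = V α (x / t) := by
    filter_upwards [ae_pos hμ] with t ht
    have := U_add_V hα (show (0:ℝ) ≤ x / t from (div_pos hx ht).le)
    linarith
  -- q integrable (dominated by constant)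
  have hq_int : Integrable q μ := by
    apply Integrable.mono' (integrable_const (α / x ^ α * Real.Gamma α)) (q_meas α x).aestronglyMeasurable
    filter_upwards [ae_pos hμ] with t ht
    have hr : (0:ℝ) ≤ x / t := (div_pos hx ht).le
    have hVle2 : V α (x / t) ≤ Real.Gamma α := by
      have h4 := U_add_V hα hr
      have h5 := U_nonneg (α := α) hr
      linarith
    have h6 := hpt  -- can't use ae inside; redo pointwise
    have h1 := V_ge hα hr
    have h2 : (x / t) ^ α = x ^ α * t ^ (-α) := by
      rw [Real.div_rpow hx.le ht.le, Real.rpow_neg ht.le, div_eq_mul_inv]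
    have h3 : Real.exp (-(x / t)) = Real.exp (-x / t) := by rw [neg_div]
    rw [h2, h3] at h1
    have h7 : x ^ α / α * q t ≤ Real.Gamma α := by
      calc x ^ α / α * q t = Real.exp (-x / t) * (x ^ α * t ^ (-α) / α) := by rw [hq]; ring
        _ ≤ V α (x / t) := h1
        _ ≤ Real.Gamma α := hVle2
    have hqn : 0 ≤ q t := mul_nonneg (Real.exp_nonneg _) (Real.rpow_nonneg ht.le _)
    rw [Real.norm_eq_abs, abs_of_nonneg hqn]
    have hA : (0:ℝ) < x ^ α / α := by positivity
    calc q t ≤ Real.Gamma α / (x ^ α / α) := by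
          rw [le_div_iff₀ hA, mul_comm]; exact h7
      _ = α / x ^ α * Real.Gamma α := by rw [div_div_eq_mul_div]; ring
  -- the U-integral
  have hUint : Integrable (fun t => U α (x / t)) μ := by
    have h1 : Integrable (fun t => c⁻¹ * (c * U α (x / t))) μ :=
      (psi_integrable hα hμ hx.le).const_mul _
    apply h1.congr
    apply ae_of_all
    intro t
    field_simp
  have hmono2 : ∫ t, x ^ α / α * q t ∂μ ≤ ∫ t, (Real.Gamma α - U α (x / t)) ∂μ := by
    apply integral_mono_ae (hq_int.const_mul _) hVint
    filter_upwards [hpt, hVeq] with t h1 h2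
    rw [h2]; exact h1
  have hval : ∫ t, (Real.Gamma α - U α (x / t)) ∂μ
      = Real.Gamma α - ∫ t, U α (x / t) ∂μ := by
    rw [integral_sub (integrable_const _) hUint, integral_const, probReal_univ,
      one_smul]
  have hI : (∫ t, c * U α (x / t) ∂μ) = c * ∫ t, U α (x / t) ∂μ := integral_const_mul _ _
  have hH2 : U α (x / β) ≤ ∫ t, U α (x / t) ∂μ := by
    rw [hI] at H
    exact le_of_mul_le_mul_left H hc0
  have hVb : Real.Gamma α - U α (x / β) = V α (x / β) := by
    have := U_add_V hα (show (0:ℝ) ≤ x / β from (div_pos hx hβ).le)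
    linarith
  have hVle3 : V α (x / β) ≤ x ^ α * β ^ (-α) / α := by
    have h1 := V_le hα (show (0:ℝ) ≤ x / β from (div_pos hx hβ).le)
    have h2 : (x / β) ^ α = x ^ α * β ^ (-α) := by
      rw [Real.div_rpow hx.le hβ.le, Real.rpow_neg hβ.le, div_eq_mul_inv]
    rw [h2] at h1
    exact h1
  have hqint_le : ∫ t, q t ∂μ ≤ β ^ (-α) := by
    have h1 : x ^ α / α * ∫ t, q t ∂μ ≤ x ^ α / α * β ^ (-α) := by
      rw [← integral_const_mul]
      calc ∫ t, x ^ α / α * q t ∂μ ≤ ∫ t, (Real.Gamma α - U α (x / t)) ∂μ := hmono2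
        _ = Real.Gamma α - ∫ t, U α (x / t) ∂μ := hval
        _ ≤ Real.Gamma α - U α (x / β) := by linarith
        _ = V α (x / β) := hVb
        _ ≤ x ^ α * β ^ (-α) / α := hVle3
        _ = x ^ α / α * β ^ (-α) := by ring
    have hA : (0:ℝ) < x ^ α / α := by positivity
    exact le_of_mul_le_mul_left h1 hA
  rw [← ofReal_integral_eq_lintegral_ofReal hq_int hq_nonneg]
  exact ENNReal.ofReal_le_ofReal hqint_le

lemma mct (hα : 0 < α) {β : ℝ} (hβ : 0 < β) (μ : Measure ℝ) [IsProbabilityMeasure μ]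
    (hμ : μ (Ioi 0)ᶜ = 0)
    (hq : ∀ x : ℝ, 0 < x →
      ∫⁻ t, ENNReal.ofReal (Real.exp (-x / t) * t ^ (-α)) ∂μ ≤ ENNReal.ofReal (β ^ (-α))) :
    ∫⁻ t, ENNReal.ofReal (t ^ (-α)) ∂μ ≤ ENNReal.ofReal (β ^ (-α)) := by
  set fn : ℕ → ℝ → ℝ≥0∞ := fun n t =>
    ENNReal.ofReal (Real.exp (-(1 / (n + 1)) / t) * t ^ (-α)) with hfn
  have hfn_meas : ∀ n, AEMeasurable (fn n) μ := fun n =>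
    (ENNReal.measurable_ofReal.comp (q_meas α (1 / (n + 1)))).aemeasurable
  have hmono : ∀ᵐ t ∂μ, Monotone fun n => fn n t := by
    filter_upwards [ae_pos hμ] with t ht
    intro n m hnm
    apply ENNReal.ofReal_le_ofReal
    apply mul_le_mul_of_nonneg_right _ (Real.rpow_nonneg ht.le _)
    apply Real.exp_le_exp.2
    apply div_le_div_of_nonneg_right _ ht.le
    rw [neg_le_neg_iff]
    apply one_div_le_one_div_of_le (by positivity)
    have := (Nat.cast_le (α := ℝ)).2 hnm; linarith
  have hsup : ∀ᵐ t ∂μ, (⨆ n, fn n t) = ENNReal.ofReal (t ^ (-α)) := by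
    filter_upwards [ae_pos hμ] with t ht
    have hfe : ∀ n : ℕ, fn n t
        = ENNReal.ofReal (Real.exp (-(1 / (n + 1)) / t)) * ENNReal.ofReal (t ^ (-α)) :=
      fun n => ENNReal.ofReal_mul (Real.exp_nonneg _)
    have hmono2 : Monotone fun n : ℕ => ENNReal.ofReal (Real.exp (-(1 / (n + 1 : ℝ)) / t)) := by
      intro n m hnm
      apply ENNReal.ofReal_le_ofReal
      apply Real.exp_le_exp.2
      apply div_le_div_of_nonneg_right _ ht.le
      rw [neg_le_neg_iff]
      apply one_div_le_one_div_of_le (by positivity)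
      have := (Nat.cast_le (α := ℝ)).2 hnm; linarith
    have htend : Filter.Tendsto (fun n : ℕ => ENNReal.ofReal (Real.exp (-(1 / (n + 1 : ℝ)) / t)))
        Filter.atTop (nhds (ENNReal.ofReal (Real.exp (-(0:ℝ) / t)))) := by
      apply (ENNReal.continuous_ofReal.tendsto _).comp
      apply (Real.continuous_exp.tendsto _).comp
      apply Filter.Tendsto.div_const
      apply Filter.Tendsto.neg
      exact tendsto_one_div_add_atTop_nhds_zero_nat
    have hsup1 : (⨆ n : ℕ, ENNReal.ofReal (Real.exp (-(1 / (n + 1 : ℝ)) / t))) = 1 := by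
      have h1 := tendsto_atTop_iSup hmono2
      have h2 := tendsto_nhds_unique h1 htend
      rw [h2]
      norm_num
    calc (⨆ n, fn n t)
        = (⨆ n : ℕ, ENNReal.ofReal (Real.exp (-(1 / (n + 1 : ℝ)) / t)))
            * ENNReal.ofReal (t ^ (-α)) := by
          rw [ENNReal.iSup_mul]
          exact iSup_congr hfe
      _ = ENNReal.ofReal (t ^ (-α)) := by rw [hsup1, one_mul]
  calc ∫⁻ t, ENNReal.ofReal (t ^ (-α)) ∂μ = ∫⁻ t, ⨆ n, fn n t ∂μ :=
        lintegral_congr_ae (hsup.mono fun t h => h.symm)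
    _ = ⨆ n, ∫⁻ t, fn n t ∂μ := lintegral_iSup' hfn_meas hmono
    _ ≤ ENNReal.ofReal (β ^ (-α)) := iSup_le fun n => hq _ (by positivity)


end Stmt14

open Stmt14 in
/-- Example 4, "st" part: let `X ~ Gamma(α, β)` (scale parameterization) and let `Y`
be a scale mixture of `Gamma(α, t)` distributions with respect to a probability
measure `μ` on `(0, ∞)`. Then `X ≤_st Y` iff `∫ t^{−α} dμ(t) ≤ β^{−α}`. -/
theorem stmt_14 (α β : ℝ) (hα : 0 < α) (hβ : 0 < β)
    (μ : Measure ℝ) [IsProbabilityMeasure μ] (hμ : μ (Ioi 0)ᶜ = 0) :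
    (∀ x : ℝ,
        (∫ y in Ioi x, if 0 < y then
            (Real.Gamma α)⁻¹ * β ^ (-α) * y ^ (α - 1) * Real.exp (-y / β) else 0) ≤
        ∫ y in Ioi x, if 0 < y then
            ∫ t, (Real.Gamma α)⁻¹ * t ^ (-α) * y ^ (α - 1) * Real.exp (-y / t) ∂μ
          else 0) ↔
      ∫⁻ t, ENNReal.ofReal (t ^ (-α)) ∂μ ≤ ENNReal.ofReal (β ^ (-α)) := by
  constructor
  · intro H
    apply mct hα hβ μ hμ
    intro x hx
    apply backward_step hα hβ μ hμ hx
    have h := H x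
    rwa [Fbar hα hβ hx.le, tonelli hα μ hμ hx.le] at h
  · intro hm x
    rcases le_or_gt x 0 with hx | hx
    · rw [shift hx, shift hx, Fbar hα hβ le_rfl, tonelli hα μ hμ le_rfl]
      simp only [zero_div]
      rw [integral_const]
      simp [measure_univ]
    · rw [Fbar hα hβ hx.le, tonelli hα μ hμ hx.le]
      exact forward hα hβ μ hμ hm hx
end
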